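/- arXiv:1907.01315 — 3 statements merged into one kernel-verified Lean document; each statement's English description precedes it below -/
import Mathlib

section
/- Let S ⊆ ℕ² be a local good semigroup and let T = T((α₁,…,α_n)) be a track in S. Then S' = S∖T is a good semigroup strictly contained in S. -/
/-- The ambient space `ℤ²`; `ℕ²` is identified with the nonnegative orthant. -/
abbrev Z2 : Type := ℤ × ℤ

/-- The nonnegative orthant, representing `ℕ² ⊆ ℤ²`. -/
def orth : Set Z2 := {a : Z2 | 0 ≤ a.1 ∧ 0 ≤ a.2}

/-- Property (G1): closure under componentwise minimum. -/
def MinClosed (E : Set Z2) : Prop := ∀ a ∈ E, ∀ b ∈ E, a ⊓ b ∈ E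

/-- Property (G3). -/
def G3P (E : Set Z2) : Prop :=
  ∀ a ∈ E, ∀ b ∈ E, a ≠ b →
    (a.1 = b.1 →
      ∃ e ∈ E, a.1 < e.1 ∧ min a.2 b.2 ≤ e.2 ∧ (a.2 ≠ b.2 → e.2 = min a.2 b.2)) ∧
    (a.2 = b.2 →
      ∃ e ∈ E, a.2 < e.2 ∧ min a.1 b.1 ≤ e.1 ∧ (a.1 ≠ b.1 → e.1 = min a.1 b.1))

/-- A good semigroup of `ℕ²` (viewed inside `ℤ²`). -/
def IsGood (S : Set Z2) : Prop :=
  S ⊆ orth ∧ (0 : Z2) ∈ S ∧ (∀ a ∈ S, ∀ b ∈ S, a + b ∈ S) ∧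
  MinClosed S ∧ (∃ δ : Z2, ∀ y : Z2, δ ≤ y → y ∈ S) ∧ G3P S

/-- A good semigroup is local if its only element with a zero coordinate is `0`. -/
def IsLocal (S : Set Z2) : Prop := ∀ a ∈ S, (a.1 = 0 ∨ a.2 = 0) → a = 0

/-- A relative good ideal of `S`. -/
def IsRelGoodIdeal (S E : Set Z2) : Prop :=
  E.Nonempty ∧ (∀ e ∈ E, ∀ s ∈ S, e + s ∈ E) ∧ (∃ a ∈ S, ∀ e ∈ E, a + e ∈ S) ∧
  MinClosed E ∧ G3P E

/-- A saturated chain of length `n` in `E`. -/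
def IsSatChain (E : Set Z2) (n : ℕ) (f : ℕ → Z2) : Prop :=
  (∀ i ≤ n, f i ∈ E) ∧ (∀ i < n, f i < f (i + 1)) ∧
  (∀ i < n, ∀ c ∈ E, ¬ (f i < c ∧ c < f (i + 1)))

/-- `d_E(a,b)`: the common length of all saturated chains in `E` from `a` to `b`. -/
noncomputable def chainDist (E : Set Z2) (a b : Z2) : ℕ :=
  sSup {n : ℕ | ∃ f : ℕ → Z2, IsSatChain E n f ∧ f 0 = a ∧ f n = b}

/-- The (componentwise) minimal element `e(E)` of `E`. -/
noncomputable def minEl (E : Set Z2) : Z2 :=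
  (sInf (Prod.fst '' E), sInf (Prod.snd '' E))

/-- The distance `d(E∖F)` between `F ⊆ E`: the common value of
`d_E(e(E),α) - d_F(e(F),α)` for all sufficiently large `α ∈ F`. -/
noncomputable def dist2 (E F : Set Z2) : ℤ :=
  sSup {z : ℤ | ∃ β : Z2, ∀ α ∈ F, β ≤ α →
    (chainDist E (minEl E) α : ℤ) - (chainDist F (minEl F) α : ℤ) = z}

/-- The conductor `c(E)`: the componentwise minimal `δ` with `δ + ℕ² ⊆ E`. -/
noncomputable def condE (E : Set Z2) : Z2 :=
  (sInf ((fun δ : Z2 => δ.1) '' {δ : Z2 | ∀ y : Z2, δ ≤ y → y ∈ E}),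
   sInf ((fun δ : Z2 => δ.2) '' {δ : Z2 | ∀ y : Z2, δ ≤ y → y ∈ E}))

/-- The conductor ideal `C(E) = {β ∈ E : β ≥ c(E)}`. -/
noncomputable def CIdeal (E : Set Z2) : Set Z2 := {b ∈ E | condE E ≤ b}

/-- The length `l(E) = d(E ∖ C(E))`. -/
noncomputable def glen (E : Set Z2) : ℤ := dist2 E (CIdeal E)

/-- The genus `g(E) = d(ℕ² ∖ E)`. -/
noncomputable def genus (E : Set Z2) : ℤ := dist2 orth E

/-- The good semigroup `ℕ²(1,1) = {0} ∪ ((1,1) + ℕ²)`. -/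
def N2oneone : Set Z2 := {a : Z2 | a = 0 ∨ ((1 : ℤ), (1 : ℤ)) ≤ a}
/-- The space `(ℕ ∪ {∞})²`, modelled inside `(ℤ ∪ {∞})²`. -/
abbrev Om : Type := WithTop ℤ × WithTop ℤ

/-- The embedding of `ℤ²` into `(ℤ ∪ {∞})²`. -/
def iotaZ (a : Z2) : Om := ((a.1 : WithTop ℤ), (a.2 : WithTop ℤ))

/-- `S^∞`: the elements `(a,∞)` with `(a,c₂) ∈ S` and `(∞,b)` with `(c₁,b) ∈ S`,
where `(c₁,c₂)` is the conductor of `S`. -/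
noncomputable def Sinf (S : Set Z2) : Set Om :=
  {w : Om | (∃ a : ℤ, w = ((a : WithTop ℤ), ⊤) ∧ (a, (condE S).2) ∈ S) ∨
            (∃ b : ℤ, w = (⊤, (b : WithTop ℤ)) ∧ ((condE S).1, b) ∈ S)}

/-- `Γ_S = S ∪ S^∞`. -/
noncomputable def Gam (S : Set Z2) : Set Om := iotaZ '' S ∪ Sinf S

/-- `I(S)`: the set of irreducible elements of `Γ_S`. -/
noncomputable def ISet (S : Set Z2) : Set Om :=
  {w ∈ Gam S | w ≠ 0 ∧ ∀ b ∈ Gam S, ∀ c ∈ Gam S, w = b + c → w = b ∨ w = c}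

/-- `Δ(a) = Δ₁(a) ∪ Δ₂(a)` for a finite element `a ∈ ℤ²`. -/
def DeltaUp (a : Z2) : Set Z2 :=
  {b : Z2 | (b.1 = a.1 ∧ a.2 < b.2) ∨ (b.2 = a.2 ∧ a.1 < b.1)}

/-- `A_f(S)`: the finite maximals of `S`, i.e. `a ∈ S` with `Δ^S(a) = ∅`. -/
def Af (S : Set Z2) : Set Z2 := {a ∈ S | S ∩ DeltaUp a = ∅}

/-- `I_A(S)`: the irreducible maximals, i.e. irreducible elements of
`A(S) = A_f(S) ∪ S^∞`. -/
noncomputable def IA (S : Set Z2) : Set Om := ISet S ∩ (iotaZ '' Af S ∪ Sinf S)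

/-- `₁Δ(w)` (as a subset of `ℤ²`), including the conventions for infinite `w`. -/
def lowD1 (w : Om) : Set Z2 :=
  {b : Z2 | (b.1 : WithTop ℤ) = w.1 ∧ (b.2 : WithTop ℤ) < w.2}

/-- `₂Δ(w)` (as a subset of `ℤ²`), including the conventions for infinite `w`. -/
def lowD2 (w : Om) : Set Z2 :=
  {b : Z2 | (b.2 : WithTop ℤ) = w.2 ∧ (b.1 : WithTop ℤ) < w.1}

/-- `Δ(w)` (as a subset of `ℤ²`) for a possibly infinite `w`. -/
def upD (w : Om) : Set Z2 :=
  {b : Z2 | ((b.1 : WithTop ℤ) = w.1 ∧ w.2 < (b.2 : WithTop ℤ)) ∨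
            ((b.2 : WithTop ℤ) = w.2 ∧ w.1 < (b.1 : WithTop ℤ))}

/-- `{w} ∩ ℤ²`: the singleton of `w` if `w` is finite, `∅` otherwise. -/
def finPart (w : Om) : Set Z2 := {b : Z2 | iotaZ b = w}

/-- `a` and `b` are connected by a piece of track. -/
def Piece (S : Set Z2) (a b : Om) : Prop :=
  ¬ a ≤ b ∧ ¬ b ≤ a ∧ ∀ s ∈ S, s ∈ upD (a ⊓ b) → iotaZ s ∈ ISet S

/-- The data `α 0, …, α (n-1)` of a track of `S` (with `n ≥ 1` points;
`n = 1` gives the one-point tracks `T((α))`). -/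
def TrackData (S : Set Z2) (n : ℕ) (α : ℕ → Om) : Prop :=
  1 ≤ n ∧ (∀ i < n, α i ∈ IA S) ∧
  (∀ i j, i < j → j < n → (α i).1 < (α j).1) ∧
  (∀ s ∈ S, s ∈ lowD2 (α 0) → iotaZ s ∈ ISet S) ∧
  (∀ s ∈ S, s ∈ lowD1 (α (n - 1)) → iotaZ s ∈ ISet S) ∧
  (∀ i, i + 1 < n → Piece S (α i) (α (i + 1)))

/-- The track `T((α 0,…,α (n-1)))` as a subset of `S`. -/
def trackSet (S : Set Z2) (n : ℕ) (α : ℕ → Om) : Set Z2 :=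
  finPart (α 0) ∪ S ∩ lowD2 (α 0) ∪
  (⋃ i ∈ Finset.range (n - 1), S ∩ upD (α i ⊓ α (i + 1))) ∪
  S ∩ lowD1 (α (n - 1)) ∪ finPart (α (n - 1))

/-- `T` is a track of `S`. -/
def IsTrack (S T : Set Z2) : Prop :=
  ∃ (n : ℕ) (α : ℕ → Om), TrackData S n α ∧ T = trackSet S n α

/-- `T` is a beyond track of `S`: a track meeting `{a ∈ S : a ≥ c(S)}`. -/
noncomputable def IsBeyondTrack (S T : Set Z2) : Prop :=
  IsTrack S T ∧ (T ∩ {a ∈ S | condE S ≤ a}).Nonempty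

/-- `S` is a special parent of `S'`: `S` is a (local) good semigroup and
`S' = S ∖ T` for some beyond track `T` of `S`. -/
noncomputable def SpecialParent (S S' : Set Z2) : Prop :=
  IsGood S ∧ IsLocal S ∧ ∃ T : Set Z2, IsBeyondTrack S T ∧ S' = S \ T

section Prelim

lemma iotaZ_inj : Function.Injective iotaZ := by
  intro a b h
  simp only [iotaZ, Prod.ext_iff, WithTop.coe_eq_coe] at h
  exact Prod.ext h.1 h.2

lemma isCond_nonneg {S : Set Z2} (hS : IsGood S) {δ : Z2}
    (hδ : ∀ y : Z2, δ ≤ y → y ∈ S) : 0 ≤ δ.1 ∧ 0 ≤ δ.2 := by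
  have h1 : (δ.1, max δ.2 0) ∈ S := hδ _ ⟨le_refl _, le_max_left _ _⟩
  have h2 : (max δ.1 0, δ.2) ∈ S := hδ _ ⟨le_max_left _ _, le_refl _⟩
  exact ⟨(hS.1 h1).1, (hS.1 h2).2⟩

lemma cond_spec {S : Set Z2} (hS : IsGood S) : ∀ y : Z2, condE S ≤ y → y ∈ S := by
  obtain ⟨δ0, hδ0⟩ := hS.2.2.2.2.1
  have hmin := hS.2.2.2.1
  have hne1 : ((fun δ : Z2 => δ.1) '' {δ : Z2 | ∀ y : Z2, δ ≤ y → y ∈ S}).Nonempty :=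
    ⟨δ0.1, δ0, hδ0, rfl⟩
  have hbd1 : BddBelow ((fun δ : Z2 => δ.1) '' {δ : Z2 | ∀ y : Z2, δ ≤ y → y ∈ S}) := by
    refine ⟨0, ?_⟩
    rintro x ⟨δ, hδ, rfl⟩
    exact (isCond_nonneg hS hδ).1
  have hne2 : ((fun δ : Z2 => δ.2) '' {δ : Z2 | ∀ y : Z2, δ ≤ y → y ∈ S}).Nonempty :=
    ⟨δ0.2, δ0, hδ0, rfl⟩
  have hbd2 : BddBelow ((fun δ : Z2 => δ.2) '' {δ : Z2 | ∀ y : Z2, δ ≤ y → y ∈ S}) := by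
    refine ⟨0, ?_⟩
    rintro x ⟨δ, hδ, rfl⟩
    exact (isCond_nonneg hS hδ).2
  obtain ⟨δ1, hδ1, he1⟩ := Int.csInf_mem hne1 hbd1
  obtain ⟨δ2, hδ2, he2⟩ := Int.csInf_mem hne2 hbd2
  intro y hy
  have hy1 : (condE S).1 ≤ y.1 := hy.1
  have hy2 : (condE S).2 ≤ y.2 := hy.2
  have hc1 : δ1.1 = (condE S).1 := he1
  have hc2 : δ2.2 = (condE S).2 := he2
  have k1 : y ⊔ δ1 ∈ S := hδ1 _ le_sup_right
  have k2 : y ⊔ δ2 ∈ S := hδ2 _ le_sup_right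
  have k3 := hmin _ k1 _ k2
  have e : (y ⊔ δ1) ⊓ (y ⊔ δ2) = y := by
    rw [← sup_inf_left]
    refine sup_eq_left.mpr ⟨?_, ?_⟩
    · calc (δ1 ⊓ δ2).1 = δ1.1 ⊓ δ2.1 := rfl
        _ ≤ δ1.1 := inf_le_left
        _ ≤ y.1 := by rw [hc1]; exact hy1
    · calc (δ1 ⊓ δ2).2 = δ1.2 ⊓ δ2.2 := rfl
        _ ≤ δ2.2 := inf_le_right
        _ ≤ y.2 := by rw [hc2]; exact hy2
  rwa [e] at k3

lemma climb1 {S : Set Z2} (hS : IsGood S) (x : ℤ) (h : (x, (condE S).2) ∈ S) :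
    ∀ N : ℤ, ∃ y : ℤ, N < y ∧ (x, y) ∈ S := by
  have key : ∀ k : ℕ, ∃ y : ℤ, (condE S).2 + k ≤ y ∧ (x, y) ∈ S := by
    intro k
    induction k with
    | zero => exact ⟨(condE S).2, by simp, h⟩
    | succ k ih =>
      obtain ⟨y, hy, hyS⟩ := ih
      set z : ℤ := max (condE S).1 x + 1 with hz
      have hzS : ((z, y) : Z2) ∈ S := by
        refine cond_spec hS _ ⟨?_, ?_⟩
        · have := le_max_left (condE S).1 x; simp only [hz]; omega
        · show (condE S).2 ≤ y; omega
      have hxz : x < z := by have := le_max_right (condE S).1 x; omega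
      have hne : ((x, y) : Z2) ≠ (z, y) := by
        intro hc
        have : x = z := congrArg Prod.fst hc
        omega
      obtain ⟨e, heS, he2, _, heq⟩ := (hS.2.2.2.2.2 _ hyS _ hzS hne).2 rfl
      have he1 : e.1 = x := by
        have := heq (show ((x,y):Z2).1 ≠ ((z,y):Z2).1 by show x ≠ z; omega)
        simp only at this
        omega
      refine ⟨e.2, by simp only at he2; omega, ?_⟩
      have : e = (x, e.2) := Prod.ext he1 rfl
      rwa [this] at heS
  intro N
  obtain ⟨y, hy, hyS⟩ := key (N + 1 - (condE S).2).toNat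
  exact ⟨y, by omega, hyS⟩

lemma climb2 {S : Set Z2} (hS : IsGood S) (y : ℤ) (h : ((condE S).1, y) ∈ S) :
    ∀ N : ℤ, ∃ x : ℤ, N < x ∧ (x, y) ∈ S := by
  have key : ∀ k : ℕ, ∃ x : ℤ, (condE S).1 + k ≤ x ∧ (x, y) ∈ S := by
    intro k
    induction k with
    | zero => exact ⟨(condE S).1, by simp, h⟩
    | succ k ih =>
      obtain ⟨x, hx, hxS⟩ := ih
      set z : ℤ := max (condE S).2 y + 1 with hz
      have hzS : ((x, z) : Z2) ∈ S := by
        refine cond_spec hS _ ⟨?_, ?_⟩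
        · show (condE S).1 ≤ x; omega
        · have := le_max_left (condE S).2 y; simp only [hz]; omega
      have hyz : y < z := by have := le_max_right (condE S).2 y; omega
      have hne : ((x, y) : Z2) ≠ (x, z) := by
        intro hc
        have : y = z := congrArg Prod.snd hc
        omega
      obtain ⟨e, heS, he1, _, heq⟩ := (hS.2.2.2.2.2 _ hxS _ hzS hne).1 rfl
      have he2 : e.2 = y := by
        have := heq (show ((x,y):Z2).2 ≠ ((x,z):Z2).2 by show y ≠ z; omega)
        simp only at this
        omega
      refine ⟨e.1, by simp only at he1; omega, ?_⟩
      have : e = (e.1, y) := Prod.ext rfl he2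
      rwa [this] at heS
  intro N
  obtain ⟨x, hx, hxS⟩ := key (N + 1 - (condE S).1).toNat
  exact ⟨x, by omega, hxS⟩

end Prelim
section TrackFacts

variable {S : Set Z2} {n : ℕ} {α : ℕ → Om}

lemma f_inc (htd : TrackData S n α) : ∀ i j, i < j → j < n → (α i).1 < (α j).1 :=
  htd.2.2.1

lemma f_dec (htd : TrackData S n α) : ∀ j i, i < j → j < n → (α j).2 < (α i).2 := by
  intro j
  induction j with
  | zero => intro i h; omega
  | succ j ih =>
    intro i hij hjn
    have step : (α (j + 1)).2 < (α j).2 := by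
      have hp := htd.2.2.2.2.2 j hjn
      have h1 : (α j).1 ≤ (α (j + 1)).1 :=
        le_of_lt (htd.2.2.1 j (j + 1) (by omega) hjn)
      by_contra hc
      push_neg at hc
      exact hp.1 ⟨h1, hc⟩
    rcases Nat.lt_succ_iff_lt_or_eq.mp hij with h | h
    · exact step.trans (ih i h (by omega))
    · rw [h]; exact step

lemma f_inj1 (htd : TrackData S n α) {i j : ℕ} (hi : i < n) (hj : j < n)
    (h : (α i).1 = (α j).1) : i = j := by
  rcases lt_trichotomy i j with hc | hc | hc
  · exact absurd h (ne_of_lt (f_inc htd i j hc hj))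
  · exact hc
  · exact absurd h.symm (ne_of_lt (f_inc htd j i hc hi))

lemma f_inj2 (htd : TrackData S n α) {i j : ℕ} (hi : i < n) (hj : j < n)
    (h : (α i).2 = (α j).2) : i = j := by
  rcases lt_trichotomy i j with hc | hc | hc
  · exact absurd h.symm (ne_of_lt (f_dec htd j i hc hj))
  · exact hc
  · exact absurd h (ne_of_lt (f_dec htd i j hc hi))

lemma f_rep (htd : TrackData S n α) {i : ℕ} (hi : i < n) {x y : ℤ}
    (hx : (α i).1 = (x : ℤ)) (hy : (α i).2 = (y : ℤ)) :
    (x, y) ∈ Af S ∧ α i = iotaZ (x, y) := by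
  have h := (htd.2.1 i hi).2
  rcases h with ⟨w, hw, hww⟩ | h
  · have h1 : (w.1 : WithTop ℤ) = (x : ℤ) := by rw [← hx, ← hww]; rfl
    have h2 : (w.2 : WithTop ℤ) = (y : ℤ) := by rw [← hy, ← hww]; rfl
    have hwx : w = (x, y) := Prod.ext (by exact_mod_cast h1) (by exact_mod_cast h2)
    refine ⟨hwx ▸ hw, ?_⟩
    rw [← hww, hwx]
  · rcases h with ⟨a, hae, _⟩ | ⟨b, hbe, _⟩
    · exfalso
      have : (α i).2 = ⊤ := by rw [hae]
      rw [hy] at this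
      exact WithTop.coe_ne_top this
    · exfalso
      have : (α i).1 = ⊤ := by rw [hbe]
      rw [hx] at this
      exact WithTop.coe_ne_top this

lemma f_sinf2 (htd : TrackData S n α) {i : ℕ} (hi : i < n) (h2 : (α i).2 = ⊤) :
    ∃ x : ℤ, (α i).1 = (x : ℤ) ∧ (x, (condE S).2) ∈ S := by
  have h := (htd.2.1 i hi).2
  rcases h with ⟨w, _, hww⟩ | h
  · exfalso
    have : ((w.2 : WithTop ℤ)) = ⊤ := by rw [show ((w.2:ℤ):WithTop ℤ) = (iotaZ w).2 from rfl, hww, h2]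
    exact WithTop.coe_ne_top this
  · rcases h with ⟨a, hae, haS⟩ | ⟨b, hbe, _⟩
    · exact ⟨a, by rw [hae], haS⟩
    · exfalso
      have : (α i).2 = (b : ℤ) := by rw [hbe]
      rw [h2] at this
      exact WithTop.coe_ne_top this.symm

lemma f_sinf1 (htd : TrackData S n α) {i : ℕ} (hi : i < n) (h1 : (α i).1 = ⊤) :
    ∃ y : ℤ, (α i).2 = (y : ℤ) ∧ ((condE S).1, y) ∈ S := by
  have h := (htd.2.1 i hi).2
  rcases h with ⟨w, _, hww⟩ | h
  · exfalso
    have : ((w.1 : WithTop ℤ)) = ⊤ := by rw [show ((w.1:ℤ):WithTop ℤ) = (iotaZ w).1 from rfl, hww, h1]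
    exact WithTop.coe_ne_top this
  · rcases h with ⟨a, hae, _⟩ | ⟨b, hbe, hbS⟩
    · exfalso
      have : (α i).1 = (a : ℤ) := by rw [hae]
      rw [h1] at this
      exact WithTop.coe_ne_top this.symm
    · exact ⟨b, by rw [hbe], hbS⟩

lemma af_max1 {S : Set Z2} {w s : Z2} (hw : w ∈ Af S) (hs : s ∈ S)
    (h : s.1 = w.1) : s.2 ≤ w.2 := by
  by_contra hc
  push_neg at hc
  exact Set.eq_empty_iff_forall_notMem.mp hw.2 s ⟨hs, Or.inl ⟨h, hc⟩⟩

lemma af_max2 {S : Set Z2} {w s : Z2} (hw : w ∈ Af S) (hs : s ∈ S)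
    (h : s.2 = w.2) : s.1 ≤ w.1 := by
  by_contra hc
  push_neg at hc
  exact Set.eq_empty_iff_forall_notMem.mp hw.2 s ⟨hs, Or.inr ⟨h, hc⟩⟩

lemma gam1 (htd : TrackData S n α) {i : ℕ} (hi : i + 1 < n) :
    (α i ⊓ α (i + 1)).1 = (α i).1 := by
  show (α i).1 ⊓ (α (i + 1)).1 = (α i).1
  exact inf_eq_left.mpr (le_of_lt (f_inc htd i (i + 1) (by omega) hi))

lemma gam2 (htd : TrackData S n α) {i : ℕ} (hi : i + 1 < n) :
    (α i ⊓ α (i + 1)).2 = (α (i + 1)).2 := by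
  show (α i).2 ⊓ (α (i + 1)).2 = (α (i + 1)).2
  exact inf_eq_right.mpr (le_of_lt (f_dec htd (i + 1) i (by omega) hi))

end TrackFacts
section TrackMem

variable {S : Set Z2} {n : ℕ} {α : ℕ → Om}

lemma memT_fin0 {t : Z2} (h : iotaZ t = α 0) : t ∈ trackSet S n α :=
  Or.inl (Or.inl (Or.inl (Or.inl h)))

lemma memT_finN {t : Z2} (h : iotaZ t = α (n - 1)) : t ∈ trackSet S n α :=
  Or.inr h

lemma memT_low2 {t : Z2} (ht : t ∈ S) (h2 : (t.2 : WithTop ℤ) = (α 0).2)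
    (h1 : (t.1 : WithTop ℤ) < (α 0).1) : t ∈ trackSet S n α :=
  Or.inl (Or.inl (Or.inl (Or.inr ⟨ht, h2, h1⟩)))

lemma memT_low1 {t : Z2} (ht : t ∈ S) (h1 : (t.1 : WithTop ℤ) = (α (n - 1)).1)
    (h2 : (t.2 : WithTop ℤ) < (α (n - 1)).2) : t ∈ trackSet S n α :=
  Or.inl (Or.inr ⟨ht, h1, h2⟩)

lemma memT_d1 (htd : TrackData S n α) {t : Z2} {i : ℕ} (hi : i + 1 < n)
    (ht : t ∈ S) (h1 : (t.1 : WithTop ℤ) = (α i).1)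
    (h2 : (α (i + 1)).2 < (t.2 : WithTop ℤ)) : t ∈ trackSet S n α := by
  refine Or.inl (Or.inl (Or.inr ?_))
  simp only [Set.mem_iUnion]
  exact ⟨i, Finset.mem_range.mpr (by omega),
    ht, Or.inl ⟨by rw [gam1 htd hi]; exact h1, by rw [gam2 htd hi]; exact h2⟩⟩

lemma memT_d2 (htd : TrackData S n α) {t : Z2} {i : ℕ} (hi : i + 1 < n)
    (ht : t ∈ S) (h2 : (t.2 : WithTop ℤ) = (α (i + 1)).2)
    (h1 : (α i).1 < (t.1 : WithTop ℤ)) : t ∈ trackSet S n α := by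
  refine Or.inl (Or.inl (Or.inr ?_))
  simp only [Set.mem_iUnion]
  exact ⟨i, Finset.mem_range.mpr (by omega),
    ht, Or.inr ⟨by rw [gam2 htd hi]; exact h2, by rw [gam1 htd hi]; exact h1⟩⟩

lemma memT_elim (htd : TrackData S n α) {t : Z2} (h : t ∈ trackSet S n α) :
    iotaZ t = α 0 ∨
    (t ∈ S ∧ (t.2 : WithTop ℤ) = (α 0).2 ∧ (t.1 : WithTop ℤ) < (α 0).1) ∨
    (∃ i, i + 1 < n ∧ t ∈ S ∧
      (((t.1 : WithTop ℤ) = (α i).1 ∧ (α (i + 1)).2 < (t.2 : WithTop ℤ)) ∨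
       ((t.2 : WithTop ℤ) = (α (i + 1)).2 ∧ (α i).1 < (t.1 : WithTop ℤ)))) ∨
    (t ∈ S ∧ (t.1 : WithTop ℤ) = (α (n - 1)).1 ∧ (t.2 : WithTop ℤ) < (α (n - 1)).2) ∨
    iotaZ t = α (n - 1) := by
  rcases h with (((h | h) | h) | h) | h
  · exact Or.inl h
  · exact Or.inr (Or.inl ⟨h.1, h.2.1, h.2.2⟩)
  · simp only [Set.mem_iUnion] at h
    obtain ⟨i, hi, htS, hup⟩ := h
    have hin : i + 1 < n := by have := Finset.mem_range.mp hi; omega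
    refine Or.inr (Or.inr (Or.inl ⟨i, hin, htS, ?_⟩))
    rcases hup with ⟨e1, e2⟩ | ⟨e1, e2⟩
    · exact Or.inl ⟨by rw [← gam1 htd hin]; exact e1, by rw [← gam2 htd hin]; exact e2⟩
    · exact Or.inr ⟨by rw [← gam2 htd hin]; exact e1, by rw [← gam1 htd hin]; exact e2⟩
  · exact Or.inr (Or.inr (Or.inr (Or.inl ⟨h.1, h.2.1, h.2.2⟩)))
  · exact Or.inr (Or.inr (Or.inr (Or.inr h)))

lemma gam_fin {S : Set Z2} {t : Z2} (h : iotaZ t ∈ Gam S) : t ∈ S := by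
  rcases h with ⟨s, hs, he⟩ | h
  · rwa [← iotaZ_inj he]
  · rcases h with ⟨a, he, _⟩ | ⟨b, he, _⟩
    · exact absurd (congrArg Prod.snd he) WithTop.coe_ne_top
    · exact absurd (congrArg Prod.fst he) WithTop.coe_ne_top

lemma track_sub (htd : TrackData S n α) {t : Z2} (h : t ∈ trackSet S n α) :
    t ∈ S ∧ iotaZ t ∈ ISet S := by
  have hn : 1 ≤ n := htd.1
  rcases h with (((h | h) | h) | h) | h
  · have hi : α 0 ∈ ISet S := (htd.2.1 0 (by omega)).1
    rw [← h] at hi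
    exact ⟨gam_fin hi.1, hi⟩
  · exact ⟨h.1, htd.2.2.2.1 t h.1 h.2⟩
  · simp only [Set.mem_iUnion] at h
    obtain ⟨i, hi, htS, hup⟩ := h
    have hin : i + 1 < n := by have := Finset.mem_range.mp hi; omega
    exact ⟨htS, (htd.2.2.2.2.2 i hin).2.2 t htS hup⟩
  · exact ⟨h.1, htd.2.2.2.2.1 t h.1 h.2⟩
  · have hi : α (n - 1) ∈ ISet S := (htd.2.1 (n - 1) (by omega)).1
    rw [← h] at hi
    exact ⟨gam_fin hi.1, hi⟩

lemma companion1 (hS : IsGood S) (htd : TrackData S n α) {j : ℕ} (hj : j < n)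
    {x : ℤ} (hx : (α j).1 = (x : ℤ)) (N : ℤ) (hN : (N : WithTop ℤ) < (α j).2) :
    ∃ y : ℤ, N < y ∧ (x, y) ∈ S := by
  cases h2 : (α j).2 with
  | top =>
    obtain ⟨x', hx', hxc⟩ := f_sinf2 htd hj h2
    have hxx : x' = x := by
      rw [hx] at hx'; exact_mod_cast hx'.symm
    rw [hxx] at hxc
    exact climb1 hS x hxc N
  | coe yv =>
    obtain ⟨haf, _⟩ := f_rep htd hj hx h2
    refine ⟨yv, ?_, haf.1⟩
    rw [h2] at hN
    exact_mod_cast hN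

lemma companion2 (hS : IsGood S) (htd : TrackData S n α) {j : ℕ} (hj : j < n)
    {y : ℤ} (hy : (α j).2 = (y : ℤ)) (N : ℤ) (hN : (N : WithTop ℤ) < (α j).1) :
    ∃ x : ℤ, N < x ∧ (x, y) ∈ S := by
  cases h1 : (α j).1 with
  | top =>
    obtain ⟨y', hy', hyc⟩ := f_sinf1 htd hj h1
    have hyy : y' = y := by
      rw [hy] at hy'; exact_mod_cast hy'.symm
    rw [hyy] at hyc
    exact climb2 hS y hyc N
  | coe xv =>
    obtain ⟨haf, _⟩ := f_rep htd hj h1 hy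
    refine ⟨xv, ?_, haf.1⟩
    rw [h1] at hN
    exact_mod_cast hN

end TrackMem
section Solve

variable {S : Set Z2} {n : ℕ} {α : ℕ → Om}

lemma horiz (hS : IsGood S) (htd : TrackData S n α)
    {a b : Z2} (ha : a ∈ S) (haT : a ∉ trackSet S n α)
    (hb : b ∈ S) (hbT : b ∉ trackSet S n α)
    (hab1 : a.1 = b.1) (hab2 : a.2 < b.2)
    {i : ℕ} (hi : i + 1 < n) (hA2 : (a.2 : WithTop ℤ) = (α (i + 1)).2)
    {s : Z2} (hs : s ∈ S) (hs2 : s.2 = a.2) (hs1 : (α i).1 < (s.1 : WithTop ℤ)) :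
    ∃ e, e ∈ S ∧ e ∉ trackSet S n α ∧ a.1 < e.1 ∧ e.2 = a.2 := by
  obtain ⟨x0, hx0⟩ : ∃ x0 : ℤ, (α i).1 = (x0 : WithTop ℤ) := by
    cases hc : (α i).1 with
    | top => rw [hc] at hs1; exact absurd hs1 not_top_lt
    | coe v => exact ⟨v, rfl⟩
  rcases lt_trichotomy a.1 x0 with hlt | heq | hgt
  · -- construct e = (x0, a.2)
    have hdec : (α (i + 1)).2 < (α i).2 := f_dec htd (i + 1) i (by omega) hi
    have hN : ((a.2 : ℤ) : WithTop ℤ) < (α i).2 := by rw [hA2]; exact hdec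
    obtain ⟨y, hy, hyS⟩ := companion1 hS htd (show i < n by omega) hx0 a.2 hN
    have hs1' : x0 < s.1 := by
      rw [hx0] at hs1; exact_mod_cast hs1
    have heS : ((x0, a.2) : Z2) ∈ S := by
      have hm := hS.2.2.2.1 _ hyS _ hs
      have he : ((x0, y) : Z2) ⊓ s = ((x0, a.2) : Z2) := by
        have e1 : (((x0, y) : Z2) ⊓ s).1 = min x0 s.1 := rfl
        have e2 : (((x0, y) : Z2) ⊓ s).2 = min y s.2 := rfl
        refine Prod.ext ?_ ?_
        · rw [e1]; omega
        · rw [e2]; omega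
      rwa [he] at hm
    refine ⟨(x0, a.2), heS, ?_, hlt, rfl⟩
    intro hT
    rcases memT_elim htd hT with h | h | ⟨j, hj, _, hh⟩ | h | h
    · have h2 : ((a.2 : ℤ) : WithTop ℤ) = (α 0).2 := congrArg Prod.snd h
      have : (0 : ℕ) = i + 1 := f_inj2 htd (by omega) (by omega) (by rw [← h2, hA2])
      omega
    · have h2 : ((a.2 : ℤ) : WithTop ℤ) = (α 0).2 := h.2.1
      have : (0 : ℕ) = i + 1 := f_inj2 htd (by omega) (by omega) (by rw [← h2, hA2])
      omega
    · rcases hh with ⟨e1, e2⟩ | ⟨e1, e2⟩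
      · have hij : i = j := f_inj1 htd (by omega) (by omega) (by rw [hx0, ← e1])
        rw [← hij] at e2
        rw [show (((x0, a.2) : Z2).2 : WithTop ℤ) = ((a.2 : ℤ) : WithTop ℤ) from rfl, hA2] at e2
        exact absurd e2 (lt_irrefl _)
      · have hij : j + 1 = i + 1 := f_inj2 htd (by omega) (by omega) (by rw [← e1, hA2])
        have hji : j = i := by omega
        rw [hji, hx0] at e2
        have : x0 < x0 := by exact_mod_cast e2
        omega
    · have : i = n - 1 := f_inj1 htd (by omega) (by omega) (by rw [hx0, ← h.2.1])
      omega
    · have h1 : ((x0 : ℤ) : WithTop ℤ) = (α (n - 1)).1 := congrArg Prod.fst h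
      have : i = n - 1 := f_inj1 htd (by omega) (by omega) (by rw [hx0, h1])
      omega
  · -- a.1 = x0 : then b ∈ T, contradiction
    exfalso
    refine hbT (memT_d1 htd hi hb ?_ ?_)
    · rw [← hab1, heq, ← hx0]
    · rw [← hA2]
      exact_mod_cast hab2
  · -- x0 < a.1 : then a ∈ T, contradiction
    exfalso
    refine haT (memT_d2 htd hi ha hA2 ?_)
    rw [hx0]
    exact_mod_cast hgt

lemma vert (hS : IsGood S) (htd : TrackData S n α)
    {a b : Z2} (ha : a ∈ S) (haT : a ∉ trackSet S n α)
    (hb : b ∈ S) (hbT : b ∉ trackSet S n α)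
    (hab2 : a.2 = b.2) (hab1 : a.1 < b.1)
    {i : ℕ} (hi : i + 1 < n) (hA1 : (a.1 : WithTop ℤ) = (α i).1)
    {s : Z2} (hs : s ∈ S) (hs1 : s.1 = a.1) (hs2 : (α (i + 1)).2 < (s.2 : WithTop ℤ)) :
    ∃ e, e ∈ S ∧ e ∉ trackSet S n α ∧ a.2 < e.2 ∧ e.1 = a.1 := by
  obtain ⟨y0, hy0⟩ : ∃ y0 : ℤ, (α (i + 1)).2 = (y0 : WithTop ℤ) := by
    cases hc : (α (i + 1)).2 with
    | top => rw [hc] at hs2; exact absurd hs2 not_top_lt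
    | coe v => exact ⟨v, rfl⟩
  rcases lt_trichotomy a.2 y0 with hlt | heq | hgt
  · -- construct e = (a.1, y0)
    have hinc : (α i).1 < (α (i + 1)).1 := f_inc htd i (i + 1) (by omega) hi
    have hN : ((a.1 : ℤ) : WithTop ℤ) < (α (i + 1)).1 := by rw [hA1]; exact hinc
    obtain ⟨x, hx, hxS⟩ := companion2 hS htd (show i + 1 < n by omega) hy0 a.1 hN
    have hs2' : y0 < s.2 := by
      rw [hy0] at hs2; exact_mod_cast hs2
    have heS : ((a.1, y0) : Z2) ∈ S := by
      have hm := hS.2.2.2.1 _ hs _ hxS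
      have he : s ⊓ ((x, y0) : Z2) = ((a.1, y0) : Z2) := by
        have e1 : (s ⊓ ((x, y0) : Z2)).1 = min s.1 x := rfl
        have e2 : (s ⊓ ((x, y0) : Z2)).2 = min s.2 y0 := rfl
        refine Prod.ext ?_ ?_
        · rw [e1]; omega
        · rw [e2]; omega
      rwa [he] at hm
    refine ⟨(a.1, y0), heS, ?_, hlt, rfl⟩
    intro hT
    rcases memT_elim htd hT with h | h | ⟨j, hj, _, hh⟩ | h | h
    · have h2 : ((y0 : ℤ) : WithTop ℤ) = (α 0).2 := congrArg Prod.snd h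
      have : i + 1 = 0 := f_inj2 htd (by omega) (by omega) (by rw [hy0, h2])
      omega
    · have h2 : ((y0 : ℤ) : WithTop ℤ) = (α 0).2 := h.2.1
      have : i + 1 = 0 := f_inj2 htd (by omega) (by omega) (by rw [hy0, h2])
      omega
    · rcases hh with ⟨e1, e2⟩ | ⟨e1, e2⟩
      · have hij : i = j := f_inj1 htd (by omega) (by omega) (by rw [← hA1, ← e1])
        rw [← hij] at e2
        rw [show (((a.1, y0) : Z2).2 : WithTop ℤ) = ((y0 : ℤ) : WithTop ℤ) from rfl, ← hy0] at e2
        exact absurd e2 (lt_irrefl _)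
      · have hij : j + 1 = i + 1 := f_inj2 htd (by omega) (by omega) (by rw [← e1, ← hy0])
        have hji : j = i := by omega
        rw [hji, ← hA1] at e2
        have : a.1 < a.1 := by exact_mod_cast e2
        omega
    · have : i = n - 1 := f_inj1 htd (by omega) (by omega) (by rw [← hA1, ← h.2.1])
      omega
    · have h1 : ((a.1 : ℤ) : WithTop ℤ) = (α (n - 1)).1 := congrArg Prod.fst h
      have : i = n - 1 := f_inj1 htd (by omega) (by omega) (by rw [← hA1, h1])
      omega
  · -- a.2 = y0 : then b ∈ T, contradiction
    exfalso
    refine hbT (memT_d2 htd hi hb ?_ ?_)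
    · rw [← hab2, heq, ← hy0]
    · rw [← hA1]
      exact_mod_cast hab1
  · -- y0 < a.2 : then a ∈ T, contradiction
    exfalso
    refine haT (memT_d1 htd hi ha hA1 ?_)
    rw [hy0]
    exact_mod_cast hgt

end Solve
section Descent

variable {S : Set Z2} {n : ℕ} {α : ℕ → Om}

lemma step1 (hS : IsGood S) (htd : TrackData S n α)
    {a b : Z2} (ha : a ∈ S) (haT : a ∉ trackSet S n α)
    (hb : b ∈ S) (hbT : b ∉ trackSet S n α)
    (hab1 : a.1 = b.1) (hab2 : a.2 < b.2)
    {e₀ : Z2} (heS : e₀ ∈ S) (he2 : e₀.2 = a.2) (he1 : a.1 < e₀.1) :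
    (∃ e, e ∈ S ∧ e ∉ trackSet S n α ∧ a.1 < e.1 ∧ e.2 = a.2) ∨
    (∃ ε j, ε ∈ S ∧ ε.2 = a.2 ∧ e₀.1 < ε.1 ∧ j < n ∧ (e₀.1 : WithTop ℤ) = (α j).1) := by
  have hn : 1 ≤ n := htd.1
  by_cases hT : e₀ ∈ trackSet S n α
  swap
  · exact Or.inl ⟨e₀, heS, hT, he1, he2⟩
  rcases memT_elim htd hT with h | h | ⟨j, hj, _, hh⟩ | ⟨_, h1, h2⟩ | h
  · -- iotaZ e₀ = α 0
    have fst : (e₀.1 : WithTop ℤ) = (α 0).1 := congrArg Prod.fst h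
    have snd : (e₀.2 : WithTop ℤ) = (α 0).2 := congrArg Prod.snd h
    refine absurd (memT_low2 ha ?_ ?_) haT
    · rw [← he2]; exact snd
    · rw [← fst]; exact_mod_cast he1
  · -- e₀ ∈ lowD2 (α 0)
    refine absurd (memT_low2 ha ?_ ?_) haT
    · rw [← he2]; exact h.2.1
    · exact lt_trans (by exact_mod_cast he1) h.2.2
  · rcases hh with ⟨h1, h2⟩ | ⟨h2, h1⟩
    · -- vertical piece at j
      rcases lt_trichotomy ((a.2 : WithTop ℤ)) ((α j).2) with hlt | heqq | hgt
      · -- descend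
        obtain ⟨y, hy, hyS⟩ := companion1 hS htd (show j < n by omega) h1.symm a.2 hlt
        have hne : e₀ ≠ ((e₀.1, y) : Z2) := by
          intro hc
          have : e₀.2 = y := congrArg Prod.snd hc
          omega
        obtain ⟨ε, hεS, hε1, _, hεeq⟩ := (hS.2.2.2.2.2 e₀ heS _ hyS hne).1 rfl
        have hε2 : ε.2 = a.2 := by
          have h := hεeq (show e₀.2 ≠ ((e₀.1, y) : Z2).2 by show e₀.2 ≠ y; omega)
          have h' : ε.2 = min e₀.2 y := h
          omega
        exact Or.inr ⟨ε, j, hεS, hε2, hε1, by omega, h1⟩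
      · -- a.2 row equals row of α j
        by_cases hj0 : j = 0
        · refine absurd (memT_low2 ha ?_ ?_) haT
          · rw [← hj0]; exact heqq
          · rw [hj0] at h1; rw [← h1]; exact_mod_cast he1
        · refine Or.inl (horiz hS htd ha haT hb hbT hab1 hab2
            (i := j - 1) (by omega) ?_ heS he2 ?_)
          · rw [show j - 1 + 1 = j from by omega]; exact heqq
          · rw [h1]; exact f_inc htd (j - 1) j (by omega) (by omega)
      · -- above the maximal α j : impossible
        exfalso
        cases hc : (α j).2 with
        | top => rw [hc] at hgt; exact absurd hgt not_top_lt
        | coe yv =>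
          obtain ⟨haf, _⟩ := f_rep htd (show j < n by omega) h1.symm hc
          have hmax := af_max1 haf heS rfl
          rw [hc] at hgt
          have : yv < a.2 := by exact_mod_cast hgt
          simp only at hmax
          omega
    · -- horizontal piece at row j+1
      exact Or.inl (horiz hS htd ha haT hb hbT hab1 hab2 hj
        (by rw [← he2]; exact h2) heS he2 h1)
  · -- lowD1 at α (n-1) : descend with j = n-1
    have hN : ((a.2 : ℤ) : WithTop ℤ) < (α (n - 1)).2 := by rw [← he2]; exact h2
    obtain ⟨y, hy, hyS⟩ := companion1 hS htd (show n - 1 < n by omega) h1.symm a.2 hN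
    have hne : e₀ ≠ ((e₀.1, y) : Z2) := by
      intro hc
      have : e₀.2 = y := congrArg Prod.snd hc
      omega
    obtain ⟨ε, hεS, hε1, _, hεeq⟩ := (hS.2.2.2.2.2 e₀ heS _ hyS hne).1 rfl
    have hε2 : ε.2 = a.2 := by
      have h := hεeq (show e₀.2 ≠ ((e₀.1, y) : Z2).2 by show e₀.2 ≠ y; omega)
      have h' : ε.2 = min e₀.2 y := h
      omega
    exact Or.inr ⟨ε, n - 1, hεS, hε2, hε1, by omega, h1⟩
  · -- iotaZ e₀ = α (n-1)
    have fst : (e₀.1 : WithTop ℤ) = (α (n - 1)).1 := congrArg Prod.fst h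
    have snd : (e₀.2 : WithTop ℤ) = (α (n - 1)).2 := congrArg Prod.snd h
    by_cases hn1 : n = 1
    · refine absurd (memT_low2 ha ?_ ?_) haT
      · rw [← he2, show (0 : ℕ) = n - 1 from by omega]; exact snd
      · rw [show (0 : ℕ) = n - 1 from by omega, ← fst]; exact_mod_cast he1
    · refine Or.inl (horiz hS htd ha haT hb hbT hab1 hab2
        (i := n - 2) (by omega) ?_ heS he2 ?_)
      · rw [show n - 2 + 1 = n - 1 from by omega, ← he2]; exact snd
      · rw [fst]; exact f_inc htd (n - 2) (n - 1) (by omega) (by omega)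

lemma desc1 (hS : IsGood S) (htd : TrackData S n α)
    {a b : Z2} (ha : a ∈ S) (haT : a ∉ trackSet S n α)
    (hb : b ∈ S) (hbT : b ∉ trackSet S n α)
    (hab1 : a.1 = b.1) (hab2 : a.2 < b.2) :
    ∀ (d : ℕ) (e₀ : Z2), e₀ ∈ S → e₀.2 = a.2 → a.1 < e₀.1 →
      (∀ j, j < n → (e₀.1 : WithTop ℤ) = (α j).1 → n ≤ j + d) →
      ∃ e, e ∈ S ∧ e ∉ trackSet S n α ∧ a.1 < e.1 ∧ e.2 = a.2 := by
  intro d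
  induction d with
  | zero =>
    intro e₀ heS he2 he1 hH
    rcases step1 hS htd ha haT hb hbT hab1 hab2 heS he2 he1 with h | ⟨ε, j, _, _, _, hjn, hje⟩
    · exact h
    · exact absurd (hH j hjn hje) (by omega)
  | succ d ih =>
    intro e₀ heS he2 he1 hH
    rcases step1 hS htd ha haT hb hbT hab1 hab2 heS he2 he1 with
      h | ⟨ε, j, hεS, hε2, hε1, hjn, hje⟩
    · exact h
    · refine ih ε hεS hε2 (by omega) ?_
      intro j' hj' hj'e
      have hlt : (α j).1 < (α j').1 := by
        rw [← hje, ← hj'e]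
        exact_mod_cast hε1
      have hjj : j < j' := by
        rcases lt_trichotomy j j' with hc | hc | hc
        · exact hc
        · rw [hc] at hlt; exact absurd hlt (lt_irrefl _)
        · exact absurd hlt (lt_asymm (f_inc htd j' j hc hjn))
      have := hH j hjn hje
      omega

lemma step2 (hS : IsGood S) (htd : TrackData S n α)
    {a b : Z2} (ha : a ∈ S) (haT : a ∉ trackSet S n α)
    (hb : b ∈ S) (hbT : b ∉ trackSet S n α)
    (hab2 : a.2 = b.2) (hab1 : a.1 < b.1)
    {e₀ : Z2} (heS : e₀ ∈ S) (he1 : e₀.1 = a.1) (he2 : a.2 < e₀.2) :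
    (∃ e, e ∈ S ∧ e ∉ trackSet S n α ∧ a.2 < e.2 ∧ e.1 = a.1) ∨
    (∃ ε j, ε ∈ S ∧ ε.1 = a.1 ∧ e₀.2 < ε.2 ∧ j < n ∧ (e₀.2 : WithTop ℤ) = (α j).2) := by
  have hn : 1 ≤ n := htd.1
  by_cases hT : e₀ ∈ trackSet S n α
  swap
  · exact Or.inl ⟨e₀, heS, hT, he2, he1⟩
  rcases memT_elim htd hT with h | ⟨_, h2, h1⟩ | ⟨j, hj, _, hh⟩ | ⟨_, h1, h2⟩ | h
  · -- iotaZ e₀ = α 0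
    have fst : (e₀.1 : WithTop ℤ) = (α 0).1 := congrArg Prod.fst h
    have snd : (e₀.2 : WithTop ℤ) = (α 0).2 := congrArg Prod.snd h
    by_cases hn1 : n = 1
    · refine absurd (memT_low1 ha ?_ ?_) haT
      · rw [show n - 1 = 0 from by omega, ← he1]; exact fst
      · rw [show n - 1 = 0 from by omega, ← snd]; exact_mod_cast he2
    · refine Or.inl (vert hS htd ha haT hb hbT hab2 hab1
        (i := 0) (by omega) ?_ heS he1 ?_)
      · rw [← he1]; exact fst
      · rw [snd]; exact f_dec htd 1 0 (by omega) (by omega)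
  · -- e₀ ∈ lowD2 (α 0) : descend with row j = 0
    have hN : ((a.1 : ℤ) : WithTop ℤ) < (α 0).1 := by rw [← he1]; exact h1
    obtain ⟨x, hx, hxS⟩ := companion2 hS htd (show 0 < n by omega) h2.symm a.1 hN
    have hne : e₀ ≠ ((x, e₀.2) : Z2) := by
      intro hc
      have : e₀.1 = x := congrArg Prod.fst hc
      omega
    obtain ⟨ε, hεS, hε2, _, hεeq⟩ := (hS.2.2.2.2.2 e₀ heS _ hxS hne).2 rfl
    have hε1 : ε.1 = a.1 := by
      have h := hεeq (show e₀.1 ≠ ((x, e₀.2) : Z2).1 by show e₀.1 ≠ x; omega)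
      have h' : ε.1 = min e₀.1 x := h
      omega
    exact Or.inr ⟨ε, 0, hεS, hε1, hε2, by omega, h2⟩
  · rcases hh with ⟨h1, h2⟩ | ⟨h2, h1⟩
    · -- vertical piece at j
      exact Or.inl (vert hS htd ha haT hb hbT hab2 hab1 hj
        (by rw [← he1]; exact h1) heS he1 h2)
    · -- horizontal piece at row j+1
      rcases lt_trichotomy ((a.1 : WithTop ℤ)) ((α (j + 1)).1) with hlt | heqq | hgt
      · -- descend
        obtain ⟨x, hx, hxS⟩ := companion2 hS htd (show j + 1 < n by omega) h2.symm a.1 hlt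
        have hne : e₀ ≠ ((x, e₀.2) : Z2) := by
          intro hc
          have : e₀.1 = x := congrArg Prod.fst hc
          omega
        obtain ⟨ε, hεS, hε2, _, hεeq⟩ := (hS.2.2.2.2.2 e₀ heS _ hxS hne).2 rfl
        have hε1 : ε.1 = a.1 := by
          have h := hεeq (show e₀.1 ≠ ((x, e₀.2) : Z2).1 by show e₀.1 ≠ x; omega)
          have h' : ε.1 = min e₀.1 x := h
          omega
        exact Or.inr ⟨ε, j + 1, hεS, hε1, hε2, by omega, h2⟩
      · -- a.1 column equals column of α (j+1)
        by_cases hjN : j + 1 = n - 1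
        · refine absurd (memT_low1 ha ?_ ?_) haT
          · rw [← hjN]; exact heqq
          · rw [← hjN, ← h2]; exact_mod_cast he2
        · refine Or.inl (vert hS htd ha haT hb hbT hab2 hab1
            (i := j + 1) (by omega) heqq heS he1 ?_)
          rw [h2]; exact f_dec htd (j + 1 + 1) (j + 1) (by omega) (by omega)
      · -- right of the maximal α (j+1) : impossible
        exfalso
        cases hc : (α (j + 1)).1 with
        | top => rw [hc] at hgt; exact absurd hgt not_top_lt
        | coe xv =>
          obtain ⟨haf, _⟩ := f_rep htd (show j + 1 < n by omega) hc h2.symm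
          have hmax := af_max2 haf heS rfl
          rw [hc] at hgt
          have : xv < a.1 := by exact_mod_cast hgt
          simp only at hmax
          omega
  · -- lowD1 at α (n-1)
    refine absurd (memT_low1 ha ?_ ?_) haT
    · rw [← he1]; exact h1
    · exact lt_trans (by exact_mod_cast he2) h2
  · -- iotaZ e₀ = α (n-1)
    have fst : (e₀.1 : WithTop ℤ) = (α (n - 1)).1 := congrArg Prod.fst h
    have snd : (e₀.2 : WithTop ℤ) = (α (n - 1)).2 := congrArg Prod.snd h
    refine absurd (memT_low1 ha ?_ ?_) haT
    · rw [← he1]; exact fst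
    · rw [← snd]; exact_mod_cast he2

lemma desc2 (hS : IsGood S) (htd : TrackData S n α)
    {a b : Z2} (ha : a ∈ S) (haT : a ∉ trackSet S n α)
    (hb : b ∈ S) (hbT : b ∉ trackSet S n α)
    (hab2 : a.2 = b.2) (hab1 : a.1 < b.1) :
    ∀ (d : ℕ) (e₀ : Z2), e₀ ∈ S → e₀.1 = a.1 → a.2 < e₀.2 →
      (∀ j, j < n → (e₀.2 : WithTop ℤ) = (α j).2 → j < d) →
      ∃ e, e ∈ S ∧ e ∉ trackSet S n α ∧ a.2 < e.2 ∧ e.1 = a.1 := by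
  intro d
  induction d with
  | zero =>
    intro e₀ heS he1 he2 hH
    rcases step2 hS htd ha haT hb hbT hab2 hab1 heS he1 he2 with h | ⟨ε, j, _, _, _, hjn, hje⟩
    · exact h
    · exact absurd (hH j hjn hje) (by omega)
  | succ d ih =>
    intro e₀ heS he1 he2 hH
    rcases step2 hS htd ha haT hb hbT hab2 hab1 heS he1 he2 with
      h | ⟨ε, j, hεS, hε1, hε2, hjn, hje⟩
    · exact h
    · refine ih ε hεS hε1 (by omega) ?_
      intro j' hj' hj'e
      have hlt : (α j).2 < (α j').2 := by
        rw [← hje, ← hj'e]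
        exact_mod_cast hε2
      have hjj : j' < j := by
        rcases lt_trichotomy j' j with hc | hc | hc
        · exact hc
        · rw [hc] at hlt; exact absurd hlt (lt_irrefl _)
        · exact absurd hlt (lt_asymm (f_dec htd j' j hc hj'))
      have := hH j hjn hje
      omega

end Descent
section Final

variable {S : Set Z2} {n : ℕ} {α : ℕ → Om}

lemma minT (hS : IsGood S) (htd : TrackData S n α) {m x y : Z2}
    (hm : m ∈ trackSet S n α)
    (hxS : x ∈ S) (hx1 : x.1 = m.1) (hx2 : m.2 < x.2)
    (hyS : y ∈ S) (hy2 : y.2 = m.2) (hy1 : m.1 < y.1) :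
    x ∈ trackSet S n α ∨ y ∈ trackSet S n α := by
  have hn : 1 ≤ n := htd.1
  rcases memT_elim htd hm with h | ⟨hmS, h2, h1⟩ | ⟨j, hj, hmS, hd⟩ | ⟨hmS, h1, h2⟩ | h
  · -- iotaZ m = α 0 : m is a finite maximal, contradiction with x
    exfalso
    have fst : ((m.1 : ℤ) : WithTop ℤ) = (α 0).1 := congrArg Prod.fst h
    have snd : ((m.2 : ℤ) : WithTop ℤ) = (α 0).2 := congrArg Prod.snd h
    obtain ⟨haf, _⟩ := f_rep htd (show 0 < n by omega) fst.symm snd.symm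
    have := af_max1 haf hxS hx1
    simp only at this
    omega
  · -- m ∈ lowD2 (α 0)
    right
    have hy2' : (y.2 : WithTop ℤ) = (α 0).2 := by rw [hy2]; exact h2
    rcases lt_trichotomy ((y.1 : WithTop ℤ)) ((α 0).1) with hlt | heq | hgt
    · exact memT_low2 hyS hy2' hlt
    · exact memT_fin0 (Prod.ext heq hy2')
    · exfalso
      cases hc : (α 0).1 with
      | top => rw [hc] at hgt; exact absurd hgt not_top_lt
      | coe xv =>
        obtain ⟨haf, _⟩ := f_rep htd (show 0 < n by omega) hc hy2'.symm
        have := af_max2 haf hyS rfl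
        rw [hc] at hgt
        have hxy : xv < y.1 := by exact_mod_cast hgt
        simp only at this
        omega
  · rcases hd with ⟨h1, h2⟩ | ⟨h2, h1⟩
    · -- m on vertical piece of γ j : x also
      left
      refine memT_d1 htd hj hxS (by rw [hx1]; exact h1) ?_
      refine lt_trans h2 ?_
      exact_mod_cast hx2
    · -- m on horizontal piece : y also
      right
      refine memT_d2 htd hj hyS (by rw [hy2]; exact h2) ?_
      refine lt_trans h1 ?_
      exact_mod_cast hy1
  · -- m ∈ lowD1 (α (n-1))
    left
    have hx1' : (x.1 : WithTop ℤ) = (α (n - 1)).1 := by rw [hx1]; exact h1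
    rcases lt_trichotomy ((x.2 : WithTop ℤ)) ((α (n - 1)).2) with hlt | heq | hgt
    · exact memT_low1 hxS hx1' hlt
    · exact memT_finN (Prod.ext hx1' heq)
    · exfalso
      cases hc : (α (n - 1)).2 with
      | top => rw [hc] at hgt; exact absurd hgt not_top_lt
      | coe yv =>
        obtain ⟨haf, _⟩ := f_rep htd (show n - 1 < n by omega) hx1'.symm hc
        have := af_max1 haf hxS rfl
        rw [hc] at hgt
        have hxy : yv < x.2 := by exact_mod_cast hgt
        simp only at this
        omega
  · -- iotaZ m = α (n-1) : finite maximal, contradiction with x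
    exfalso
    have fst : ((m.1 : ℤ) : WithTop ℤ) = (α (n - 1)).1 := congrArg Prod.fst h
    have snd : ((m.2 : ℤ) : WithTop ℤ) = (α (n - 1)).2 := congrArg Prod.snd h
    obtain ⟨haf, _⟩ := f_rep htd (show n - 1 < n by omega) fst.symm snd.symm
    have := af_max1 haf hxS hx1
    simp only at this
    omega

lemma bound_ex (htd : TrackData S n α) :
    ∃ B : ℤ, ∀ i, i < n →
      (∀ v : ℤ, (α i).1 = (v : ℤ) → v ≤ B) ∧ (∀ v : ℤ, (α i).2 = (v : ℤ) → v ≤ B) := by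
  classical
  have hne : (Finset.range n).Nonempty :=
    ⟨0, Finset.mem_range.mpr (by have := htd.1; omega)⟩
  refine ⟨(Finset.range n).sup' hne
    (fun i => max (WithTop.untopD 0 (α i).1) (WithTop.untopD 0 (α i).2)), ?_⟩
  intro i hi
  have hle := Finset.le_sup' (f := fun i => max (WithTop.untopD 0 (α i).1) (WithTop.untopD 0 (α i).2))
    (Finset.mem_range.mpr hi)
  constructor
  · intro v hv
    have hv' : WithTop.untopD 0 (α i).1 = v := by rw [hv]; rfl
    omega
  · intro v hv
    have hv' : WithTop.untopD 0 (α i).2 = v := by rw [hv]; rfl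
    omega

lemma T_nonempty (hS : IsGood S) (htd : TrackData S n α) :
    ∃ t, t ∈ trackSet S n α := by
  have hn : 1 ≤ n := htd.1
  cases hc1 : (α 0).1 with
  | top =>
    obtain ⟨b, hb, hbS⟩ := f_sinf1 htd (show 0 < n by omega) hc1
    refine ⟨((condE S).1, b), memT_low2 hbS ?_ ?_⟩
    · exact hb.symm
    · rw [hc1]; exact WithTop.coe_lt_top _
  | coe A =>
    cases hc2 : (α 0).2 with
    | coe Bv =>
      obtain ⟨_, heq⟩ := f_rep htd (show 0 < n by omega) hc1 hc2
      exact ⟨(A, Bv), memT_fin0 heq.symm⟩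
    | top =>
      obtain ⟨x, hx, hxS⟩ := f_sinf2 htd (show 0 < n by omega) hc2
      by_cases hn1 : n = 1
      · refine ⟨(x, (condE S).2), memT_low1 hxS ?_ ?_⟩
        · rw [show n - 1 = 0 from by omega]; exact hx.symm
        · rw [show n - 1 = 0 from by omega, hc2]; exact WithTop.coe_lt_top _
      · have h1n : (1 : ℕ) < n := by omega
        obtain ⟨y1, hy1⟩ : ∃ y1 : ℤ, (α 1).2 = (y1 : ℤ) := by
          cases hcc : (α 1).2 with
          | top =>
            have := f_dec htd 1 0 (by omega) h1n
            rw [hcc, hc2] at this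
            exact absurd this (lt_irrefl _)
          | coe v => exact ⟨v, rfl⟩
        obtain ⟨y, hy, hyS⟩ := climb1 hS x hxS y1
        refine ⟨(x, y), memT_d1 htd (show 0 + 1 < n by omega) hyS hx.symm ?_⟩
        rw [show (0 + 1 : ℕ) = 1 from rfl, hy1]
        exact_mod_cast hy

end Final
/-- Removing a track `T` from a local good semigroup `S ⊆ ℕ²`
yields a good semigroup `S∖T` strictly contained in `S`. -/
theorem good_of_remove_track (S T : Set Z2) (hS : IsGood S) (hl : IsLocal S)
    (hT : IsTrack S T) :
    IsGood (S \ T) ∧ S \ T ⊂ S := by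
  obtain ⟨n, α, htd, rfl⟩ := hT
  have hG3 := hS.2.2.2.2.2
  constructor
  · refine ⟨fun x hx => hS.1 hx.1, ⟨hS.2.1, ?_⟩, ?_, ?_, ?_, ?_⟩
    · -- 0 ∉ T
      intro hT0
      have h := (track_sub htd hT0).2
      refine h.2.1 ?_
      simp [iotaZ, Prod.ext_iff]
    · -- closure under addition
      intro x hx y hy
      refine ⟨hS.2.2.1 x hx.1 y hy.1, ?_⟩
      intro hT
      have hir := (track_sub htd hT).2
      have hga : iotaZ x ∈ Gam S := Or.inl ⟨x, hx.1, rfl⟩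
      have hgb : iotaZ y ∈ Gam S := Or.inl ⟨y, hy.1, rfl⟩
      have hsum : iotaZ (x + y) = iotaZ x + iotaZ y := by
        simp [iotaZ, Prod.ext_iff]
      rcases hir.2.2 _ hga _ hgb hsum with h | h
      · have hxy : x + y = x := iotaZ_inj h
        have h1 : x.1 + y.1 = x.1 := congrArg Prod.fst hxy
        have h2 : x.2 + y.2 = x.2 := congrArg Prod.snd hxy
        have hy0 : y = 0 := by
          have e1 : y.1 = 0 := by omega
          have e2 : y.2 = 0 := by omega
          exact Prod.ext (by rw [e1]; rfl) (by rw [e2]; rfl)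
        rw [hy0, add_zero] at hT
        exact hx.2 hT
      · have hxy : x + y = y := iotaZ_inj h
        have h1 : x.1 + y.1 = y.1 := congrArg Prod.fst hxy
        have h2 : x.2 + y.2 = y.2 := congrArg Prod.snd hxy
        have hx0 : x = 0 := by
          have e1 : x.1 = 0 := by omega
          have e2 : x.2 = 0 := by omega
          exact Prod.ext (by rw [e1]; rfl) (by rw [e2]; rfl)
        rw [hx0, zero_add] at hT
        exact hy.2 hT
    · -- MinClosed
      intro x hx y hy
      refine ⟨hS.2.2.2.1 x hx.1 y hy.1, ?_⟩
      intro hT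
      set m : Z2 := x ⊓ y with hmdef
      have h1 : m.1 = min x.1 y.1 := rfl
      have h2 : m.2 = min x.2 y.2 := rfl
      have hxne : ¬(m.1 = x.1 ∧ m.2 = x.2) := by
        intro hc
        exact hx.2 ((Prod.ext hc.1 hc.2 : m = x) ▸ hT)
      have hyne : ¬(m.1 = y.1 ∧ m.2 = y.2) := by
        intro hc
        exact hy.2 ((Prod.ext hc.1 hc.2 : m = y) ▸ hT)
      have hcases : (x.1 = m.1 ∧ m.2 < x.2 ∧ y.2 = m.2 ∧ m.1 < y.1) ∨
          (y.1 = m.1 ∧ m.2 < y.2 ∧ x.2 = m.2 ∧ m.1 < x.1) := by omega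
      rcases hcases with ⟨c1, c2, c3, c4⟩ | ⟨c1, c2, c3, c4⟩
      · rcases minT hS htd hT hx.1 c1 c2 hy.1 c3 c4 with h | h
        · exact hx.2 h
        · exact hy.2 h
      · rcases minT hS htd hT hy.1 c1 c2 hx.1 c3 c4 with h | h
        · exact hy.2 h
        · exact hx.2 h
    · -- conductor
      obtain ⟨B, hB⟩ := bound_ex htd
      obtain ⟨δ, hδ⟩ := hS.2.2.2.2.1
      have hn : 1 ≤ n := htd.1
      refine ⟨(max δ.1 (B + 1), max δ.2 (B + 1)), ?_⟩
      intro t ht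
      have ht1 : max δ.1 (B + 1) ≤ t.1 := ht.1
      have ht2 : max δ.2 (B + 1) ≤ t.2 := ht.2
      have htS : t ∈ S := hδ t ⟨by omega, by omega⟩
      refine ⟨htS, ?_⟩
      intro hT
      rcases memT_elim htd hT with h | h | ⟨j, hj, _, hh⟩ | h | h
      · have snd : ((t.2 : ℤ) : WithTop ℤ) = (α 0).2 := congrArg Prod.snd h
        have := (hB 0 (by omega)).2 t.2 snd.symm
        omega
      · have := (hB 0 (by omega)).2 t.2 h.2.1.symm
        omega
      · rcases hh with ⟨hc, _⟩ | ⟨hc, _⟩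
        · have := (hB j (by omega)).1 t.1 hc.symm
          omega
        · have := (hB (j + 1) (by omega)).2 t.2 hc.symm
          omega
      · have := (hB (n - 1) (by omega)).1 t.1 h.2.1.symm
        omega
      · have fst : ((t.1 : ℤ) : WithTop ℤ) = (α (n - 1)).1 := congrArg Prod.fst h
        have := (hB (n - 1) (by omega)).1 t.1 fst.symm
        omega
    · -- G3P
      intro x hx y hy hxy
      constructor
      · intro h1
        have hne2 : x.2 ≠ y.2 := fun h => hxy (Prod.ext h1 h)
        rcases lt_or_gt_of_ne hne2 with hlt | hgt
        · obtain ⟨e₀, he₀S, he₀1, he₀m, he₀e⟩ := (hG3 x hx.1 y hy.1 hxy).1 h1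
          have he₀2 : e₀.2 = x.2 := by have := he₀e hne2; omega
          obtain ⟨e, heS, heT, hee1, hee2⟩ :=
            desc1 hS htd hx.1 hx.2 hy.1 hy.2 h1 hlt n e₀ he₀S he₀2 he₀1
              (fun j hj _ => by omega)
          exact ⟨e, ⟨heS, heT⟩, hee1, by omega, fun _ => by omega⟩
        · obtain ⟨e₀, he₀S, he₀1, he₀m, he₀e⟩ :=
            (hG3 y hy.1 x hx.1 (Ne.symm hxy)).1 h1.symm
          have he₀2 : e₀.2 = y.2 := by
            have := he₀e (Ne.symm hne2); omega
          obtain ⟨e, heS, heT, hee1, hee2⟩ :=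
            desc1 hS htd hy.1 hy.2 hx.1 hx.2 h1.symm hgt n e₀ he₀S he₀2 he₀1
              (fun j hj _ => by omega)
          exact ⟨e, ⟨heS, heT⟩, by omega, by omega, fun _ => by omega⟩
      · intro h2
        have hne1 : x.1 ≠ y.1 := fun h => hxy (Prod.ext h h2)
        rcases lt_or_gt_of_ne hne1 with hlt | hgt
        · obtain ⟨e₀, he₀S, he₀2, he₀m, he₀e⟩ := (hG3 x hx.1 y hy.1 hxy).2 h2
          have he₀1 : e₀.1 = x.1 := by have := he₀e hne1; omega
          obtain ⟨e, heS, heT, hee2, hee1⟩ :=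
            desc2 hS htd hx.1 hx.2 hy.1 hy.2 h2 hlt n e₀ he₀S he₀1 he₀2
              (fun j hj _ => by omega)
          exact ⟨e, ⟨heS, heT⟩, hee2, by omega, fun _ => by omega⟩
        · obtain ⟨e₀, he₀S, he₀2, he₀m, he₀e⟩ :=
            (hG3 y hy.1 x hx.1 (Ne.symm hxy)).2 h2.symm
          have he₀1 : e₀.1 = y.1 := by
            have := he₀e (Ne.symm hne1); omega
          obtain ⟨e, heS, heT, hee2, hee1⟩ :=
            desc2 hS htd hy.1 hy.2 hx.1 hx.2 h2.symm hgt n e₀ he₀S he₀1 he₀2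
              (fun j hj _ => by omega)
          exact ⟨e, ⟨heS, heT⟩, by omega, by omega, fun _ => by omega⟩
  · -- strict inclusion
    obtain ⟨t, htT⟩ := T_nonempty hS htd
    have htS := (track_sub htd htT).1
    refine Set.ssubset_iff_subset_ne.mpr ⟨Set.diff_subset, fun h => ?_⟩
    rw [← h] at htS
    exact htS.2 htT
end

section
/- Let S ⊆ ℕ² be a local good semigroup and let T be a track of S. Then the good semigroup S' = S∖T satisfies g(S') = g(S)+1. -/
namespace TP

def sg (a : Z2) : ℤ := a.1 + a.2

lemma z2le {a b : Z2} : a ≤ b ↔ a.1 ≤ b.1 ∧ a.2 ≤ b.2 := Prod.le_def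

lemma z2lt {a b : Z2} : a < b ↔ (a.1 ≤ b.1 ∧ a.2 ≤ b.2) ∧ (a.1 < b.1 ∨ a.2 < b.2) := by
  constructor
  · intro h
    rcases Prod.lt_iff.1 h with ⟨h1, h2⟩ | ⟨h1, h2⟩
    exacts [⟨⟨le_of_lt h1, h2⟩, Or.inl h1⟩, ⟨⟨h1, le_of_lt h2⟩, Or.inr h2⟩]
  · rintro ⟨⟨h1, h2⟩, h3 | h3⟩
    exacts [Prod.lt_iff.2 (Or.inl ⟨h3, h2⟩), Prod.lt_iff.2 (Or.inr ⟨h1, h3⟩)]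

lemma z2lt_of (a b : Z2) (h1 : a.1 ≤ b.1) (h2 : a.2 ≤ b.2) (h3 : a.1 < b.1 ∨ a.2 < b.2) :
    a < b := z2lt.2 ⟨⟨h1, h2⟩, h3⟩

lemma sg_lt {a b : Z2} (h : a < b) : sg a < sg b := by
  rcases z2lt.1 h with ⟨⟨h1, h2⟩, h3 | h3⟩ <;> (unfold sg; omega)

lemma sg_zero : sg (0 : Z2) = 0 := rfl

@[simp] lemma sg_mk (x y : ℤ) : sg (x, y) = x + y := rfl

def IsChain2 (E : Set Z2) (n : ℕ) (f : ℕ → Z2) : Prop :=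
  (∀ i ≤ n, f i ∈ E) ∧ (∀ i < n, f i < f (i + 1))

lemma sat_isChain2 {E n f} (h : IsSatChain E n f) : IsChain2 E n f := ⟨h.1, h.2.1⟩

lemma sg_step_bound {n : ℕ} {f : ℕ → Z2} (hstep : ∀ i < n, f i < f (i + 1)) :
    ∀ i ≤ n, (i : ℤ) ≤ sg (f i) - sg (f 0) := by
  intro i hi
  induction i with
  | zero => simp
  | succ k ih =>
    have hk := ih (by omega)
    have h2 := sg_lt (hstep k (by omega))
    push_cast
    omega

lemma chain_le_mono {n : ℕ} {f : ℕ → Z2} (hstep : ∀ i < n, f i < f (i + 1)) :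
    ∀ i d, i + d ≤ n → f i ≤ f (i + d) := by
  intro i d
  induction d with
  | zero => intro _; rfl
  | succ k ih =>
    intro h
    exact le_trans (ih (by omega)) (le_of_lt (hstep (i + k) (by omega)))

lemma chain_le_mono' {n : ℕ} {f : ℕ → Z2} (hstep : ∀ i < n, f i < f (i + 1))
    {i j : ℕ} (hij : i ≤ j) (hj : j ≤ n) : f i ≤ f j := by
  obtain ⟨d, rfl⟩ := Nat.exists_eq_add_of_le hij
  exact chain_le_mono hstep i d (by omega)

lemma chain_insert {E : Set Z2} {n : ℕ} {f : ℕ → Z2} {i : ℕ} {c : Z2}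
    (hf : IsChain2 E n f) (hi : i < n) (hc : c ∈ E) (h1 : f i < c) (h2 : c < f (i + 1)) :
    ∃ g, IsChain2 E (n + 1) g ∧ g 0 = f 0 ∧ g (n + 1) = f n := by
  refine ⟨fun j => if j ≤ i then f j else if j = i + 1 then c else f (j - 1), ⟨?_, ?_⟩, ?_, ?_⟩
  · intro j hj
    dsimp only
    split_ifs with ha hb
    · exact hf.1 j (by omega)
    · exact hc
    · exact hf.1 (j - 1) (by omega)
  · intro j hj
    dsimp only
    rcases Nat.lt_or_ge (j+1) (i+1) with hb | hb
    · simp only [if_pos (by omega : j ≤ i), if_pos (by omega : j + 1 ≤ i)]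
      exact hf.2 j (by omega)
    rcases Nat.eq_or_lt_of_le hb with hb | hb
    · simp only [if_pos (by omega : j ≤ i), if_neg (by omega : ¬ j + 1 ≤ i),
        if_pos (by omega : j + 1 = i + 1)]
      have : j = i := by omega
      subst this; exact h1
    rcases Nat.eq_or_lt_of_le hb with hb | hb
    · simp only [if_neg (by omega : ¬ j ≤ i), if_pos (by omega : j = i + 1),
        if_neg (by omega : ¬ j + 1 ≤ i), if_neg (by omega : ¬ j + 1 = i + 1)]
      have : j + 1 - 1 = i + 1 := by omega
      rw [this]; exact h2
    · simp only [if_neg (by omega : ¬ j ≤ i), if_neg (by omega : ¬ j = i + 1),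
        if_neg (by omega : ¬ j + 1 ≤ i), if_neg (by omega : ¬ j + 1 = i + 1)]
      have e1 : j + 1 - 1 = (j - 1) + 1 := by omega
      rw [e1]; exact hf.2 (j - 1) (by omega)
  · dsimp only
    rw [if_pos (Nat.zero_le i)]
  · dsimp only
    rw [if_neg (by omega : ¬ n + 1 ≤ i), if_neg (by omega : ¬ n + 1 = i + 1)]
    congr 1

lemma satChain_of_chain {E : Set Z2} :
    ∀ k n (f : ℕ → Z2), IsChain2 E n f → (sg (f n) - sg (f 0)).toNat ≤ n + k →
    ∃ m, n ≤ m ∧ ∃ g, IsSatChain E m g ∧ g 0 = f 0 ∧ g m = f n := by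
  intro k
  induction k with
  | zero =>
    intro n f hf hbound
    by_cases hsat : ∀ i < n, ∀ c ∈ E, ¬ (f i < c ∧ c < f (i + 1))
    · exact ⟨n, le_refl n, f, ⟨hf.1, hf.2, hsat⟩, rfl, rfl⟩
    · exfalso
      push_neg at hsat
      obtain ⟨i, hi, c, hc, h1, h2⟩ := hsat
      obtain ⟨g, hg, hg0, hgn⟩ := chain_insert hf hi hc h1 h2
      have := sg_step_bound hg.2 (n+1) (le_refl _)
      rw [hg0, hgn] at this
      omega
  | succ k ih =>
    intro n f hf hbound
    by_cases hsat : ∀ i < n, ∀ c ∈ E, ¬ (f i < c ∧ c < f (i + 1))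
    · exact ⟨n, le_refl n, f, ⟨hf.1, hf.2, hsat⟩, rfl, rfl⟩
    · push_neg at hsat
      obtain ⟨i, hi, c, hc, h1, h2⟩ := hsat
      obtain ⟨g, hg, hg0, hgn⟩ := chain_insert hf hi hc h1 h2
      obtain ⟨m, hm, g', hg', h0', hn'⟩ := ih (n+1) g hg (by rw [hg0, hgn]; omega)
      exact ⟨m, by omega, g', hg', by rw [h0', hg0], by rw [hn', hgn]⟩

lemma satChain_exists {E : Set Z2} {n : ℕ} {f : ℕ → Z2} (hf : IsChain2 E n f) :
    ∃ m, n ≤ m ∧ ∃ g, IsSatChain E m g ∧ g 0 = f 0 ∧ g m = f n :=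
  satChain_of_chain ((sg (f n) - sg (f 0)).toNat) n f hf (by omega)

/-- the set defining chainDist -/
def CDS (E : Set Z2) (a b : Z2) : Set ℕ :=
  {n : ℕ | ∃ f : ℕ → Z2, IsSatChain E n f ∧ f 0 = a ∧ f n = b}

lemma cds_bddAbove {E : Set Z2} {a b : Z2} : BddAbove (CDS E a b) := by
  refine ⟨(sg b - sg a).toNat, ?_⟩
  rintro m ⟨f, hf, h0, hn⟩
  have := sg_step_bound hf.2.1 m (le_refl _)
  rw [h0, hn] at this
  omega

lemma cds_nonempty {E : Set Z2} {a b : Z2} (hab : a ≤ b) (ha : a ∈ E) (hb : b ∈ E) :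
    (CDS E a b).Nonempty := by
  rcases eq_or_lt_of_le hab with rfl | hlt
  · exact ⟨0, fun _ => a, ⟨fun i _ => ha, fun i hi => absurd hi (Nat.not_lt_zero i),
      fun i hi => absurd hi (Nat.not_lt_zero i)⟩, rfl, rfl⟩
  · have hch : IsChain2 E 1 (fun i => if i = 0 then a else b) := by
      constructor
      · intro i hi; dsimp only; split_ifs; exacts [ha, hb]
      · intro i hi
        have : i = 0 := by omega
        subst this; simpa using hlt
    obtain ⟨m, hm, g, hg, h0, hn⟩ := satChain_exists hch
    exact ⟨m, g, hg, by simpa using h0, by simpa using hn⟩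

lemma chainDist_mem {E : Set Z2} {a b : Z2} (hab : a ≤ b) (ha : a ∈ E) (hb : b ∈ E) :
    chainDist E a b ∈ CDS E a b :=
  Nat.sSup_mem (cds_nonempty hab ha hb) cds_bddAbove

lemma chainDist_ge {E : Set Z2} {a b : Z2} {m : ℕ} (hm : m ∈ CDS E a b) :
    m ≤ chainDist E a b := le_csSup cds_bddAbove hm

lemma chainDist_le_sg {E : Set Z2} {a b : Z2} (hab : a ≤ b) (ha : a ∈ E) (hb : b ∈ E) :
    (chainDist E a b : ℤ) ≤ sg b - sg a := by
  obtain ⟨f, hf, h0, hn⟩ := chainDist_mem hab ha hb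
  have := sg_step_bound hf.2.1 _ (le_refl _)
  rw [h0, hn] at this
  omega

lemma no_between_sg {p q c : Z2} (h1 : p < c) (h2 : c < q) (h3 : sg q ≤ sg p + 1) : False := by
  have := sg_lt h1
  have := sg_lt h2
  omega

lemma sat_of_unit_steps {E : Set Z2} {n : ℕ} {f : ℕ → Z2} (hf : IsChain2 E n f)
    (hu : ∀ i < n, sg (f (i + 1)) = sg (f i) + 1) : IsSatChain E n f :=
  ⟨hf.1, hf.2, fun i hi c _ hc => no_between_sg hc.1 hc.2 (le_of_eq (hu i hi))⟩

def upath (a b : Z2) (i : ℕ) : Z2 :=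
  if (i : ℤ) ≤ b.1 - a.1 then (a.1 + i, a.2) else (b.1, a.2 + ((i : ℤ) - (b.1 - a.1)))

lemma upath_spec {E : Set Z2} {a b : Z2} (hab : a ≤ b)
    (hbox : ∀ y, a ≤ y → y ≤ b → y ∈ E) :
    IsSatChain E ((b.1 - a.1).toNat + (b.2 - a.2).toNat) (upath a b) ∧
      upath a b 0 = a ∧ upath a b ((b.1 - a.1).toNat + (b.2 - a.2).toNat) = b := by
  obtain ⟨hd1, hd2⟩ := z2le.1 hab
  have hN : ((b.1 - a.1).toNat : ℤ) = b.1 - a.1 := Int.toNat_of_nonneg (by omega)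
  have hN2 : ((b.2 - a.2).toNat : ℤ) = b.2 - a.2 := Int.toNat_of_nonneg (by omega)
  set N := (b.1 - a.1).toNat + (b.2 - a.2).toNat with hNdef
  have hNN : (N : ℤ) = (b.1 - a.1) + (b.2 - a.2) := by push_cast; omega
  have hmem : ∀ i ≤ N, upath a b i ∈ E := by
    intro i hi
    have hiN : (i : ℤ) ≤ (N : ℤ) := by exact_mod_cast hi
    unfold upath
    split_ifs with h
    · exact hbox _ (z2le.2 ⟨by omega, le_refl _⟩) (z2le.2 ⟨by omega, hd2⟩)
    · push_neg at h
      exact hbox _ (z2le.2 ⟨hd1, by omega⟩) (z2le.2 ⟨le_refl _, by omega⟩)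
  have hstep : ∀ i < N, upath a b i < upath a b (i + 1) := by
    intro i hi
    unfold upath
    split_ifs with h1 h2 h2
    · exact z2lt_of _ _ (by push_cast; omega) (le_refl _) (Or.inl (by push_cast; omega))
    · push_neg at h2
      have : (i : ℤ) = b.1 - a.1 := by push_cast at h2 ⊢; omega
      exact z2lt_of _ _ (by simp [this]) (by push_cast; omega) (Or.inr (by push_cast; omega))
    · exfalso; push_neg at h1; push_cast at h1 h2; omega
    · exact z2lt_of _ _ (le_refl _) (by push_cast; omega) (Or.inr (by push_cast; omega))
  have hunit : ∀ i < N, sg (upath a b (i + 1)) = sg (upath a b i) + 1 := by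
    intro i hi
    unfold upath
    split_ifs with h1 h2 h2 <;> rw [sg_mk, sg_mk] <;> push_cast at h1 h2 ⊢ <;> omega
  have h0 : upath a b 0 = a := by
    unfold upath
    rw [if_pos (by push_cast; omega : ((0:ℕ) : ℤ) ≤ b.1 - a.1)]
    simp
  have hNend : upath a b N = b := by
    unfold upath
    split_ifs with h
    · rw [Prod.ext_iff]
      constructor <;> simp <;> omega
    · push_neg at h
      rw [Prod.ext_iff]
      constructor <;> simp <;> omega
  exact ⟨sat_of_unit_steps ⟨hmem, hstep⟩ hunit, h0, hNend⟩

lemma satChain_concat {E : Set Z2} {n m : ℕ} {f g : ℕ → Z2}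
    (hf : IsSatChain E n f) (hg : IsSatChain E m g) (hfg : f n = g 0) :
    ∃ h, IsSatChain E (n + m) h ∧ h 0 = f 0 ∧ h (n + m) = g m := by
  refine ⟨fun i => if i ≤ n then f i else g (i - n), ⟨?_, ?_, ?_⟩, ?_, ?_⟩
  · intro i hi
    dsimp only
    split_ifs with h
    · exact hf.1 i h
    · exact hg.1 (i - n) (by omega)
  · intro i hi
    dsimp only
    rcases Nat.lt_or_ge i n with h | h
    · rw [if_pos (by omega : i ≤ n), if_pos (by omega : i + 1 ≤ n)]
      exact hf.2.1 i h
    rcases Nat.eq_or_lt_of_le h with rfl | h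
    · rw [if_pos (le_refl n), if_neg (by omega : ¬ n + 1 ≤ n)]
      have e : n + 1 - n = 1 := by omega
      rw [e, hfg]
      exact hg.2.1 0 (by omega)
    · rw [if_neg (by omega : ¬ i ≤ n), if_neg (by omega : ¬ i + 1 ≤ n)]
      have e : i + 1 - n = (i - n) + 1 := by omega
      rw [e]
      exact hg.2.1 (i - n) (by omega)
  · intro i hi c hc
    dsimp only
    rcases Nat.lt_or_ge i n with h | h
    · rw [if_pos (by omega : i ≤ n), if_pos (by omega : i + 1 ≤ n)]
      exact hf.2.2 i h c hc
    rcases Nat.eq_or_lt_of_le h with rfl | h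
    · rw [if_pos (le_refl n), if_neg (by omega : ¬ n + 1 ≤ n)]
      have e : n + 1 - n = 1 := by omega
      rw [e, hfg]
      exact hg.2.2 0 (by omega) c hc
    · rw [if_neg (by omega : ¬ i ≤ n), if_neg (by omega : ¬ i + 1 ≤ n)]
      have e : i + 1 - n = (i - n) + 1 := by omega
      rw [e]
      exact hg.2.2 (i - n) (by omega) c hc
  · dsimp only
    rw [if_pos (Nat.zero_le n)]
  · dsimp only
    rcases Nat.eq_zero_or_pos m with rfl | hm
    · rw [if_pos (by omega : n + 0 ≤ n)]
      simpa using hfg.symm ▸ rfl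
    · rw [if_neg (by omega : ¬ n + m ≤ n)]
      congr 1
      omega

lemma chainDist_extend {E : Set Z2} {a b b' : Z2} (hab : a ≤ b) (hbb : b ≤ b')
    (ha : a ∈ E) (hb : b ∈ E) (hbox : ∀ y, b ≤ y → y ≤ b' → y ∈ E) :
    chainDist E a b + ((b'.1 - b.1).toNat + (b'.2 - b.2).toNat) ≤ chainDist E a b' := by
  obtain ⟨f, hf, h0, hn⟩ := chainDist_mem hab ha hb
  obtain ⟨hu, hu0, hun⟩ := upath_spec hbb hbox
  obtain ⟨h, hh, hh0, hhn⟩ := satChain_concat hf hu (by rw [hn, hu0])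
  exact chainDist_ge ⟨h, hh, by rw [hh0, h0], by rw [hhn, hun]⟩

lemma chainDist_orth (a : Z2) (ha : a ∈ orth) : (chainDist orth 0 a : ℤ) = sg a := by
  have h0 : (0 : Z2) ∈ orth := ⟨le_refl _, le_refl _⟩
  have hle : (0 : Z2) ≤ a := z2le.2 ⟨ha.1, ha.2⟩
  have h1 := chainDist_le_sg hle h0 ha
  have hbox : ∀ y : Z2, (0:Z2) ≤ y → y ≤ a → y ∈ orth := by
    intro y hy _
    exact ⟨(z2le.1 hy).1, (z2le.1 hy).2⟩
  obtain ⟨hu, hu0, hun⟩ := upath_spec hle hbox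
  have h2 : ((a.1 - (0:Z2).1).toNat + (a.2 - (0:Z2).2).toNat) ≤ chainDist orth 0 a :=
    chainDist_ge ⟨upath 0 a, hu, hu0, hun⟩
  rw [sg_zero] at h1
  have : ((a.1 - (0:Z2).1).toNat + (a.2 - (0:Z2).2).toNat : ℤ) = sg a := by
    unfold sg
    have := ha.1; have := ha.2
    push_cast
    simp only [Prod.fst_zero, Prod.snd_zero]
    omega
  omega


lemma minEl_eq_zero {E : Set Z2} (hE : E ⊆ orth) (h0 : (0 : Z2) ∈ E) : minEl E = 0 := by
  have hb1 : BddBelow (Prod.fst '' E) := by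
    refine ⟨0, ?_⟩; rintro x ⟨y, hy, rfl⟩; exact (hE hy).1
  have hb2 : BddBelow (Prod.snd '' E) := by
    refine ⟨0, ?_⟩; rintro x ⟨y, hy, rfl⟩; exact (hE hy).2
  unfold minEl
  have e1 : sInf (Prod.fst '' E) = 0 :=
    le_antisymm (csInf_le hb1 ⟨0, h0, rfl⟩)
      (le_csInf ⟨0, 0, h0, rfl⟩ (by rintro b ⟨y, hy, rfl⟩; exact (hE hy).1))
  have e2 : sInf (Prod.snd '' E) = 0 :=
    le_antisymm (csInf_le hb2 ⟨0, h0, rfl⟩)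
      (le_csInf ⟨0, 0, h0, rfl⟩ (by rintro b ⟨y, hy, rfl⟩; exact (hE hy).2))
  rw [e1, e2]; rfl

lemma genus_char {E : Set Z2} (hE : E ⊆ orth) (h0 : (0 : Z2) ∈ E) (δ : Z2)
    (hδ : ∀ y : Z2, δ ≤ y → y ∈ E) :
    ∃ β : Z2, δ ≤ β ∧ β ∈ E ∧ ∀ a ∈ E, β ≤ a → genus E = sg a - (chainDist E 0 a : ℤ) := by
  classical
  set D : Set ℤ := {z : ℤ | ∃ a, a ∈ E ∧ δ ≤ a ∧ z = sg a - (chainDist E 0 a : ℤ)} with hD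
  have hmemD : ∀ a, a ∈ E → δ ≤ a → (sg a - (chainDist E 0 a : ℤ)) ∈ D :=
    fun a h1 h2 => ⟨a, h1, h2, rfl⟩
  have hne : D.Nonempty := ⟨_, hmemD (δ ⊔ 0) (hδ _ le_sup_left) le_sup_left⟩
  have h0le : ∀ a ∈ E, (0 : Z2) ≤ a := fun a ha => z2le.2 ⟨(hE ha).1, (hE ha).2⟩
  have hbdd : BddBelow D := by
    refine ⟨0, ?_⟩
    rintro z ⟨a, ha, hda, rfl⟩
    have := chainDist_le_sg (h0le a ha) h0 ha
    rw [sg_zero] at this; omega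
  obtain ⟨β, hβE, hβδ, hβm⟩ : ∃ β, β ∈ E ∧ δ ≤ β ∧ sInf D = sg β - (chainDist E 0 β : ℤ) := by
    obtain ⟨a, ha, hda, he⟩ := Int.csInf_mem hne hbdd
    exact ⟨a, ha, hda, he⟩
  refine ⟨β, hβδ, hβE, ?_⟩
  have key : ∀ a ∈ E, β ≤ a → sg a - (chainDist E 0 a : ℤ) = sInf D := by
    intro a ha hba
    have hge : sInf D ≤ sg a - (chainDist E 0 a : ℤ) :=
      csInf_le hbdd (hmemD a ha (le_trans hβδ hba))
    have hbox : ∀ y, β ≤ y → y ≤ a → y ∈ E := fun y h1 _ => hδ y (le_trans hβδ h1)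
    have hext := chainDist_extend (h0le β hβE) hba h0 hβE hbox
    have h1 := z2le.1 hba
    have hc1 : ((a.1 - β.1).toNat : ℤ) = a.1 - β.1 := Int.toNat_of_nonneg (by omega)
    have hc2 : ((a.2 - β.2).toNat : ℤ) = a.2 - β.2 := Int.toNat_of_nonneg (by omega)
    have hle2 : sg a - (chainDist E 0 a : ℤ) ≤ sg β - (chainDist E 0 β : ℤ) := by
      unfold sg at *
      push_cast at hext ⊢
      omega
    omega
  have hminO : minEl orth = 0 := minEl_eq_zero (fun _ h => h) ⟨le_refl _, le_refl _⟩
  have hminE : minEl E = 0 := minEl_eq_zero hE h0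
  have hsetEq : {z : ℤ | ∃ β' : Z2, ∀ α ∈ E, β' ≤ α →
      (chainDist orth (minEl orth) α : ℤ) - (chainDist E (minEl E) α : ℤ) = z} = {sInf D} := by
    ext z
    simp only [Set.mem_setOf_eq, Set.mem_singleton_iff]
    constructor
    · rintro ⟨β', hβ'⟩
      have hα : (β' ⊔ β) ∈ E := hδ _ (le_trans hβδ le_sup_right)
      have hz := hβ' (β' ⊔ β) hα le_sup_left
      rw [hminO, hminE, chainDist_orth _ (hE hα)] at hz
      rw [← hz]
      exact key _ hα le_sup_right
    · rintro rfl
      refine ⟨β, fun α hα hβα => ?_⟩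
      rw [hminO, hminE, chainDist_orth _ (hE hα)]
      exact key _ hα hβα
  have hgen : genus E = sInf D := by
    show dist2 orth E = sInf D
    unfold dist2
    rw [hsetEq]
    exact csSup_singleton _
  intro a ha hba
  rw [hgen]
  exact (key a ha hba).symm

section Track

lemma iotaZ_inj {a b : Z2} (h : iotaZ a = iotaZ b) : a = b := by
  unfold iotaZ at h
  rw [Prod.ext_iff] at h ⊢
  exact ⟨WithTop.coe_inj.1 h.1, WithTop.coe_inj.1 h.2⟩

lemma iotaZ_fst (a : Z2) : (iotaZ a).1 = (a.1 : WithTop ℤ) := rfl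
lemma iotaZ_snd (a : Z2) : (iotaZ a).2 = (a.2 : WithTop ℤ) := rfl

lemma iotaZ_le_iff {a b : Z2} : iotaZ a ≤ iotaZ b ↔ a ≤ b := by
  unfold iotaZ
  rw [Prod.le_def, Prod.le_def]
  exact and_congr WithTop.coe_le_coe WithTop.coe_le_coe

variable {S : Set Z2} {n : ℕ} {α : ℕ → Om}

lemma g3_col (hS : IsGood S) {a b : Z2} (ha : a ∈ S) (hb : b ∈ S) (h1 : a.1 = b.1)
    (h2 : a.2 < b.2) : ∃ e ∈ S, a.1 < e.1 ∧ e.2 = a.2 := by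
  have hne : a ≠ b := fun h => by rw [h] at h2; omega
  obtain ⟨e, he, h3, _, h5⟩ := (hS.2.2.2.2.2 a ha b hb hne).1 h1
  exact ⟨e, he, h3, by rw [h5 (by omega)]; omega⟩

lemma g3_row (hS : IsGood S) {a b : Z2} (ha : a ∈ S) (hb : b ∈ S) (h1 : a.2 = b.2)
    (h2 : a.1 < b.1) : ∃ e ∈ S, a.2 < e.2 ∧ e.1 = a.1 := by
  have hne : a ≠ b := fun h => by rw [h] at h2; omega
  obtain ⟨e, he, h3, _, h5⟩ := (hS.2.2.2.2.2 a ha b hb hne).2 h1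
  exact ⟨e, he, h3, by rw [h5 (by omega)]; omega⟩

lemma cond_spec (hS : IsGood S) (hl : IsLocal S) :
    (∀ y : Z2, condE S ≤ y → y ∈ S) ∧ 1 ≤ (condE S).1 ∧ 1 ≤ (condE S).2 := by
  classical
  set K : Set Z2 := {δ : Z2 | ∀ y : Z2, δ ≤ y → y ∈ S} with hK
  obtain ⟨δ0, hδ0⟩ := hS.2.2.2.2.1
  have hKne : K.Nonempty := ⟨δ0, hδ0⟩
  have hKpos : ∀ δ ∈ K, 0 ≤ δ.1 ∧ 0 ≤ δ.2 := by
    intro δ hδ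
    constructor
    · have h1 : (δ.1, max δ.2 0) ∈ S := hδ _ (z2le.2 ⟨le_refl _, le_max_left _ _⟩)
      exact (hS.1 h1).1
    · have h1 : (max δ.1 0, δ.2) ∈ S := hδ _ (z2le.2 ⟨le_max_left _ _, le_refl _⟩)
      exact (hS.1 h1).2
  have hb1 : BddBelow ((fun δ : Z2 => δ.1) '' K) :=
    ⟨0, by rintro x ⟨δ, hδ, rfl⟩; exact (hKpos δ hδ).1⟩
  have hb2 : BddBelow ((fun δ : Z2 => δ.2) '' K) :=
    ⟨0, by rintro x ⟨δ, hδ, rfl⟩; exact (hKpos δ hδ).2⟩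
  obtain ⟨δa, hδa, ha⟩ : ∃ δa, δa ∈ K ∧ δa.1 = sInf ((fun δ : Z2 => δ.1) '' K) := by
    obtain ⟨δa, h1, h2⟩ := Int.csInf_mem (hKne.image _) hb1
    exact ⟨δa, h1, h2⟩
  obtain ⟨δb, hδb, hb⟩ : ∃ δb, δb ∈ K ∧ δb.2 = sInf ((fun δ : Z2 => δ.2) '' K) := by
    obtain ⟨δb, h1, h2⟩ := Int.csInf_mem (hKne.image _) hb2
    exact ⟨δb, h1, h2⟩
  have hKinf : δa ⊓ δb ∈ K := by
    intro y hy
    have h1 : y ⊔ δa ∈ S := hδa _ le_sup_right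
    have h2 : y ⊔ δb ∈ S := hδb _ le_sup_right
    have h3 := hS.2.2.2.1 _ h1 _ h2
    rwa [← sup_inf_left, sup_eq_left.2 hy] at h3
  have hc : condE S = δa ⊓ δb := by
    unfold condE
    have h4 : sInf ((fun δ : Z2 => δ.1) '' K) ≤ δb.1 := csInf_le hb1 ⟨δb, hδb, rfl⟩
    have h5 : sInf ((fun δ : Z2 => δ.2) '' K) ≤ δa.2 := csInf_le hb2 ⟨δa, hδa, rfl⟩
    rw [Prod.ext_iff]
    constructor
    · show sInf _ = min δa.1 δb.1
      rw [← ha]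
      exact (min_eq_left (by rw [ha]; exact h4)).symm
    · show sInf _ = min δa.2 δb.2
      rw [← hb]
      exact (min_eq_right (by rw [hb]; exact h5)).symm
  have hcK : ∀ y : Z2, condE S ≤ y → y ∈ S := by rw [hc]; exact hKinf
  have hcpos := hKpos _ (hc ▸ hKinf)
  refine ⟨hcK, ?_, ?_⟩
  · by_contra h
    push_neg at h
    have hc1 : (condE S).1 = 0 := by omega
    have hcS : condE S ∈ S := hcK _ (le_refl _)
    have := hl _ hcS (Or.inl hc1)
    have h10 : ((1 : ℤ), (0 : ℤ)) ∈ S := by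
      apply hcK
      rw [this]
      exact z2le.2 ⟨by norm_num, le_refl _⟩
    have := hl _ h10 (Or.inr rfl)
    rw [Prod.ext_iff] at this
    norm_num at this
  · by_contra h
    push_neg at h
    have hc2 : (condE S).2 = 0 := by omega
    have hcS : condE S ∈ S := hcK _ (le_refl _)
    have := hl _ hcS (Or.inr hc2)
    have h01 : ((0 : ℤ), (1 : ℤ)) ∈ S := by
      apply hcK
      rw [this]
      exact z2le.2 ⟨le_refl _, by norm_num⟩
    have := hl _ h01 (Or.inl rfl)
    rw [Prod.ext_iff] at this
    norm_num at this

lemma pump_col (hS : IsGood S) (hl : IsLocal S) {a : ℤ} (h : (a, (condE S).2) ∈ S) :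
    ∀ N : ℤ, ∃ Y : ℤ, N ≤ Y ∧ (a, Y) ∈ S := by
  obtain ⟨hK, hc1, hc2⟩ := cond_spec hS hl
  have step : ∀ Y : ℤ, (condE S).2 ≤ Y → (a, Y) ∈ S → ∃ Y', Y < Y' ∧ (a, Y') ∈ S := by
    intro Y hY hmem
    have hw : (max (condE S).1 (a + 1), Y) ∈ S := hK _ (z2le.2 ⟨le_max_left _ _, hY⟩)
    obtain ⟨e, he, h1, h2⟩ := g3_row hS hmem hw rfl (lt_max_iff.2 (Or.inr (by omega)))
    have he2 : (a, e.2) = e := by rw [Prod.ext_iff]; exact ⟨h2.symm, rfl⟩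
    exact ⟨e.2, h1, by rw [he2]; exact he⟩
  have iter : ∀ k : ℕ, ∃ Y : ℤ, (condE S).2 + k ≤ Y ∧ (a, Y) ∈ S := by
    intro k
    induction k with
    | zero => exact ⟨(condE S).2, by omega, h⟩
    | succ k ih =>
      obtain ⟨Y, hY, hmem⟩ := ih
      obtain ⟨Y', hY', hmem'⟩ := step Y (by omega) hmem
      exact ⟨Y', by push_cast; omega, hmem'⟩
  intro N
  obtain ⟨Y, hY, hmem⟩ := iter (N - (condE S).2).toNat
  exact ⟨Y, by omega, hmem⟩

lemma pump_row (hS : IsGood S) (hl : IsLocal S) {b : ℤ} (h : ((condE S).1, b) ∈ S) :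
    ∀ N : ℤ, ∃ X : ℤ, N ≤ X ∧ (X, b) ∈ S := by
  obtain ⟨hK, hc1, hc2⟩ := cond_spec hS hl
  have step : ∀ X : ℤ, (condE S).1 ≤ X → (X, b) ∈ S → ∃ X', X < X' ∧ (X', b) ∈ S := by
    intro X hX hmem
    have hw : (X, max (condE S).2 (b + 1)) ∈ S := hK _ (z2le.2 ⟨hX, le_max_left _ _⟩)
    obtain ⟨e, he, h1, h2⟩ := g3_col hS hmem hw rfl (lt_max_iff.2 (Or.inr (by omega)))
    have he2 : (e.1, b) = e := by rw [Prod.ext_iff]; exact ⟨rfl, h2.symm⟩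
    exact ⟨e.1, h1, by rw [he2]; exact he⟩
  have iter : ∀ k : ℕ, ∃ X : ℤ, (condE S).1 + k ≤ X ∧ (X, b) ∈ S := by
    intro k
    induction k with
    | zero => exact ⟨(condE S).1, by omega, h⟩
    | succ k ih =>
      obtain ⟨X, hX, hmem⟩ := ih
      obtain ⟨X', hX', hmem'⟩ := step X (by omega) hmem
      exact ⟨X', by push_cast; omega, hmem'⟩
  intro N
  obtain ⟨X, hX, hmem⟩ := iter (N - (condE S).1).toNat
  exact ⟨X, by omega, hmem⟩

lemma mem_trackSet {t : Z2} :
    t ∈ trackSet S n α ↔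
      iotaZ t = α 0 ∨ (t ∈ S ∧ t ∈ lowD2 (α 0)) ∨
      (∃ i, i < n - 1 ∧ t ∈ S ∧ t ∈ upD (α i ⊓ α (i + 1))) ∨
      (t ∈ S ∧ t ∈ lowD1 (α (n - 1))) ∨ iotaZ t = α (n - 1) := by
  unfold trackSet finPart
  simp only [Set.mem_union, Set.mem_iUnion, Set.mem_inter_iff, Set.mem_setOf_eq,
    Finset.mem_range, exists_prop]
  constructor
  · rintro ((((h | h) | ⟨i, hi, h1, h2⟩) | h) | h)
    · exact Or.inl h
    · exact Or.inr (Or.inl h)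
    · exact Or.inr (Or.inr (Or.inl ⟨i, hi, h1, h2⟩))
    · exact Or.inr (Or.inr (Or.inr (Or.inl h)))
    · exact Or.inr (Or.inr (Or.inr (Or.inr h)))
  · rintro (h | h | ⟨i, hi, h1, h2⟩ | h | h)
    · exact Or.inl (Or.inl (Or.inl (Or.inl h)))
    · exact Or.inl (Or.inl (Or.inl (Or.inr h)))
    · exact Or.inl (Or.inl (Or.inr ⟨i, hi, h1, h2⟩))
    · exact Or.inl (Or.inr h)
    · exact Or.inr h

lemma alpha_mem_IA (hTD : TrackData S n α) {i : ℕ} (hi : i < n) : α i ∈ IA S :=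
  hTD.2.1 i hi

lemma alpha_ne_zero (hTD : TrackData S n α) {i : ℕ} (hi : i < n) : α i ≠ 0 :=
  (hTD.2.1 i hi).1.2.1

lemma alpha_cases (hTD : TrackData S n α) {i : ℕ} (hi : i < n) :
    (∃ p : Z2, p ∈ Af S ∧ α i = iotaZ p) ∨
    (∃ a : ℤ, α i = ((a : WithTop ℤ), ⊤) ∧ (a, (condE S).2) ∈ S) ∨
    (∃ b : ℤ, α i = (⊤, (b : WithTop ℤ)) ∧ ((condE S).1, b) ∈ S) := by
  have h := (hTD.2.1 i hi).2
  rcases h with ⟨p, hp, he⟩ | h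
  · exact Or.inl ⟨p, hp, he.symm⟩
  · rcases h with ⟨a, he, hmem⟩ | ⟨b, he, hmem⟩
    · exact Or.inr (Or.inl ⟨a, he, hmem⟩)
    · exact Or.inr (Or.inr ⟨b, he, hmem⟩)

lemma x_mono (hTD : TrackData S n α) {i j : ℕ} (hij : i < j) (hj : j < n) :
    (α i).1 < (α j).1 := hTD.2.2.1 i j hij hj

lemma x_mono_le (hTD : TrackData S n α) {i j : ℕ} (hij : i ≤ j) (hj : j < n) :
    (α i).1 ≤ (α j).1 := by
  rcases Nat.eq_or_lt_of_le hij with rfl | h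
  · exact le_refl _
  · exact le_of_lt (x_mono hTD h hj)

lemma y_adj (hTD : TrackData S n α) {i : ℕ} (hi : i + 1 < n) : (α (i + 1)).2 < (α i).2 := by
  have hp := hTD.2.2.2.2.2 i hi
  have hx := x_mono hTD (by omega : i < i + 1) hi
  by_contra h
  push_neg at h
  exact hp.1 (Prod.le_def.2 ⟨le_of_lt hx, h⟩)

lemma y_mono (hTD : TrackData S n α) {i j : ℕ} (hij : i < j) (hj : j < n) :
    (α j).2 < (α i).2 := by
  obtain ⟨d, rfl⟩ := Nat.exists_eq_add_of_lt hij
  clear hij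
  induction d with
  | zero => exact y_adj hTD (by omega)
  | succ k ih =>
    have h1 : (α (i + k + 1)).2 < (α i).2 := ih (by omega)
    have h2 : (α (i + k + 1 + 1)).2 < (α (i + k + 1)).2 := y_adj hTD (by omega)
    have he : i + (k + 1) + 1 = i + k + 1 + 1 := by omega
    rw [he]
    exact lt_trans h2 h1

lemma y_mono_le (hTD : TrackData S n α) {i j : ℕ} (hij : i ≤ j) (hj : j < n) :
    (α j).2 ≤ (α i).2 := by
  rcases Nat.eq_or_lt_of_le hij with rfl | h
  · exact le_refl _
  · exact le_of_lt (y_mono hTD h hj)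

lemma x_top (hTD : TrackData S n α) {i : ℕ} (hi : i < n) (h : (α i).1 = ⊤) : i = n - 1 := by
  by_contra hne
  have h2 := x_mono hTD (by omega : i < n - 1) (by omega)
  rw [h] at h2
  exact not_top_lt h2

lemma y_top (hTD : TrackData S n α) {i : ℕ} (hi : i < n) (h : (α i).2 = ⊤) : i = 0 := by
  by_contra hne
  have h2 := y_mono hTD (by omega : 0 < i) hi
  rw [h] at h2
  exact not_top_lt h2

lemma gamma_eq (hTD : TrackData S n α) {i : ℕ} (hi : i + 1 < n) :
    ∃ g : Z2, α i ⊓ α (i + 1) = iotaZ g ∧ (α i).1 = (g.1 : WithTop ℤ) ∧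
      (α (i + 1)).2 = (g.2 : WithTop ℤ) := by
  have hx := x_mono hTD (by omega : i < i + 1) hi
  have hy := y_adj hTD hi
  obtain ⟨gx, hgx⟩ := WithTop.ne_top_iff_exists.1 hx.ne_top
  obtain ⟨gy, hgy⟩ := WithTop.ne_top_iff_exists.1 hy.ne_top
  refine ⟨(gx, gy), ?_, hgx.symm, hgy.symm⟩
  have h1 : (α i ⊓ α (i + 1)).1 = (α i).1 := inf_eq_left.2 (le_of_lt hx)
  have h2 : (α i ⊓ α (i + 1)).2 = (α (i + 1)).2 := inf_eq_right.2 (le_of_lt hy)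
  rw [Prod.ext_iff]
  exact ⟨by rw [h1, iotaZ_fst, ← hgx], by rw [h2, iotaZ_snd, ← hgy]⟩

lemma bound_x_of_row (hTD : TrackData S n α) {k : ℕ} (hk : k < n) {t : Z2} (htS : t ∈ S)
    (h : (t.2 : WithTop ℤ) = (α k).2) : (t.1 : WithTop ℤ) ≤ (α k).1 := by
  rcases alpha_cases hTD hk with ⟨p, hp, he⟩ | ⟨a, he, _⟩ | ⟨b, he, _⟩
  · rw [he] at h ⊢
    rw [iotaZ_snd] at h
    rw [iotaZ_fst, WithTop.coe_le_coe]
    have h2 : t.2 = p.2 := WithTop.coe_inj.1 h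
    by_contra hgt
    push_neg at hgt
    have hmem : t ∈ S ∩ DeltaUp p := ⟨htS, Or.inr ⟨h2, hgt⟩⟩
    rw [hp.2] at hmem
    exact Set.notMem_empty t hmem
  · rw [he] at h
    exact absurd h WithTop.coe_ne_top
  · rw [he]
    exact le_top

lemma bound_y_of_col (hTD : TrackData S n α) {k : ℕ} (hk : k < n) {t : Z2} (htS : t ∈ S)
    (h : (t.1 : WithTop ℤ) = (α k).1) : (t.2 : WithTop ℤ) ≤ (α k).2 := by
  rcases alpha_cases hTD hk with ⟨p, hp, he⟩ | ⟨a, he, _⟩ | ⟨b, he, _⟩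
  · rw [he] at h ⊢
    rw [iotaZ_fst] at h
    rw [iotaZ_snd, WithTop.coe_le_coe]
    have h2 : t.1 = p.1 := WithTop.coe_inj.1 h
    by_contra hgt
    push_neg at hgt
    have hmem : t ∈ S ∩ DeltaUp p := ⟨htS, Or.inl ⟨h2, hgt⟩⟩
    rw [hp.2] at hmem
    exact Set.notMem_empty t hmem
  · rw [he]
    exact le_top
  · rw [he] at h
    exact absurd h WithTop.coe_ne_top

lemma af_sub_S {p : Z2} (hp : p ∈ Af S) : p ∈ S := hp.1

lemma alpha_fin_Af (hTD : TrackData S n α) {i : ℕ} (hi : i < n) {p : Z2}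
    (hp : α i = iotaZ p) : p ∈ Af S := by
  rcases alpha_cases hTD hi with ⟨q, hq, he⟩ | ⟨a, he, _⟩ | ⟨b, he, _⟩
  · rwa [iotaZ_inj (hp.symm.trans he)]
  · rw [he] at hp
    have : (p.2 : WithTop ℤ) = ⊤ := by
      have := congrArg Prod.snd hp
      exact this.symm
    exact absurd this WithTop.coe_ne_top
  · rw [he] at hp
    have : (p.1 : WithTop ℤ) = ⊤ := by
      have := congrArg Prod.fst hp
      exact this.symm
    exact absurd this WithTop.coe_ne_top

lemma corner_in_T (hTD : TrackData S n α) {i : ℕ} (hi : i < n) {p : Z2}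
    (hp : α i = iotaZ p) : p ∈ trackSet S n α := by
  rcases Nat.eq_zero_or_pos i with rfl | hpos
  · exact mem_trackSet.2 (Or.inl hp.symm)
  rcases Nat.lt_or_ge i (n - 1) with hlt | hge
  · -- middle corner : in upD (γ i)
    obtain ⟨g, hgeq, hg1, hg2⟩ := gamma_eq hTD (by omega : i + 1 < n)
    refine mem_trackSet.2 (Or.inr (Or.inr (Or.inl ⟨i, hlt, af_sub_S (alpha_fin_Af hTD hi hp), ?_⟩)))
    rw [hgeq]
    left
    constructor
    · rw [iotaZ_fst]
      have := congrArg Prod.fst hp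
      rw [iotaZ_fst] at this
      rw [← hg1, ← this]
    · rw [iotaZ_snd]
      have h2 := congrArg Prod.snd hp
      rw [iotaZ_snd] at h2
      have := y_adj hTD (by omega : i + 1 < n)
      rw [← hg2, ← h2]
      exact this
  · have : i = n - 1 := by omega
    subst this
    exact mem_trackSet.2 (Or.inr (Or.inr (Or.inr (Or.inr hp.symm))))

end Track

section Track2
variable {S : Set Z2} {n : ℕ} {α : ℕ → Om}

lemma iotaZ_zero : iotaZ (0 : Z2) = (0 : Om) := rfl

lemma cf (hTD : TrackData S n α) {t : Z2} (ht : t ∈ trackSet S n α) :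
    ∃ i, i < n ∧ iotaZ t ≤ α i ∧
      ((t.1 : WithTop ℤ) = (α i).1 ∨ (t.2 : WithTop ℤ) = (α i).2) := by
  have hn := hTD.1
  rcases mem_trackSet.1 ht with h | ⟨hS', h⟩ | ⟨i, hi, hS', h⟩ | ⟨hS', h⟩ | h
  · exact ⟨0, by omega, le_of_eq h, Or.inl (by rw [← h, iotaZ_fst])⟩
  · obtain ⟨h1, h2⟩ := h
    exact ⟨0, by omega, Prod.le_def.2 ⟨le_of_lt h2, le_of_eq h1⟩, Or.inr h1⟩
  · obtain ⟨g, hgeq, hg1, hg2⟩ := gamma_eq hTD (by omega : i + 1 < n)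
    rw [hgeq] at h
    rcases h with ⟨h1, h2⟩ | ⟨h1, h2⟩
    · rw [iotaZ_fst] at h1
      have hx : (t.1 : WithTop ℤ) = (α i).1 := by rw [h1, ← hg1]
      exact ⟨i, by omega,
        Prod.le_def.2 ⟨le_of_eq hx, bound_y_of_col hTD (by omega) hS' hx⟩, Or.inl hx⟩
    · rw [iotaZ_snd] at h1
      have hy : (t.2 : WithTop ℤ) = (α (i + 1)).2 := by rw [h1, ← hg2]
      exact ⟨i + 1, by omega,
        Prod.le_def.2 ⟨bound_x_of_row hTD (by omega) hS' hy, le_of_eq hy⟩, Or.inr hy⟩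
  · obtain ⟨h1, h2⟩ := h
    exact ⟨n - 1, by omega, Prod.le_def.2 ⟨le_of_eq h1, le_of_lt h2⟩, Or.inl h1⟩
  · exact ⟨n - 1, by omega, le_of_eq h, Or.inl (by rw [← h, iotaZ_fst])⟩

lemma T_sub_S (hTD : TrackData S n α) : trackSet S n α ⊆ S := by
  intro t ht
  have hn := hTD.1
  rcases mem_trackSet.1 ht with h | ⟨hS', _⟩ | ⟨i, hi, hS', _⟩ | ⟨hS', _⟩ | h
  · exact af_sub_S (alpha_fin_Af hTD (by omega) h.symm)
  · exact hS'
  · exact hS'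
  · exact hS'
  · exact af_sub_S (alpha_fin_Af hTD (by omega) h.symm)

lemma sf (hTD : TrackData S n α) {i : ℕ} (hi : i + 1 < n) {t : Z2}
    (ht : t ∈ trackSet S n α) :
    ¬((α i).1 < (t.1 : WithTop ℤ) ∧ (α (i + 1)).2 < (t.2 : WithTop ℤ)) := by
  rintro ⟨h1, h2⟩
  obtain ⟨j, hj, hle, _⟩ := cf hTD ht
  rcases Nat.lt_or_ge j (i + 1) with hji | hji
  · have hm := x_mono_le hTD (by omega : j ≤ i) (by omega)
    have h3 : (t.1 : WithTop ℤ) ≤ (α i).1 := le_trans (Prod.le_def.1 hle).1 hm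
    exact absurd h1 (not_lt.2 h3)
  · have hm := y_mono_le hTD (hji : i + 1 ≤ j) hj
    have h3 : (t.2 : WithTop ℤ) ≤ (α (i + 1)).2 := le_trans (Prod.le_def.1 hle).2 hm
    exact absurd h2 (not_lt.2 h3)

lemma glob_x (hTD : TrackData S n α) {t : Z2} (ht : t ∈ trackSet S n α) :
    (t.1 : WithTop ℤ) ≤ (α (n - 1)).1 := by
  obtain ⟨j, hj, hle, _⟩ := cf hTD ht
  exact le_trans (Prod.le_def.1 hle).1 (x_mono_le hTD (by omega) (by omega))

lemma glob_y (hTD : TrackData S n α) {t : Z2} (ht : t ∈ trackSet S n α) :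
    (t.2 : WithTop ℤ) ≤ (α 0).2 := by
  obtain ⟨j, hj, hle, _⟩ := cf hTD ht
  exact le_trans (Prod.le_def.1 hle).2 (y_mono_le hTD (by omega) (by omega))

lemma zero_notin_T (hS : IsGood S) (hl : IsLocal S) (hTD : TrackData S n α) :
    (0 : Z2) ∉ trackSet S n α := by
  intro h0
  obtain ⟨i, hi, hle, hsh⟩ := cf hTD h0
  obtain ⟨hK, hc1, hc2⟩ := cond_spec hS hl
  rcases hsh with h | h
  · rcases alpha_cases hTD hi with ⟨p, hp, he⟩ | ⟨a, he, hmem⟩ | ⟨b, he, hmem⟩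
    · rw [he, iotaZ_fst] at h
      have hp1 : p.1 = 0 := (WithTop.coe_inj.1 h.symm)
      have hp0 : p = 0 := hl p (af_sub_S hp) (Or.inl hp1)
      rw [hp0] at he
      exact alpha_ne_zero hTD hi (by rw [he, iotaZ_zero])
    · rw [he] at h
      have ha : a = 0 := (WithTop.coe_inj.1 h.symm)
      rw [ha] at hmem
      have h22 : (condE S).2 = 0 := congrArg Prod.snd (hl _ hmem (Or.inl rfl))
      omega
    · rw [he] at h
      exact absurd h (by simp)
  · rcases alpha_cases hTD hi with ⟨p, hp, he⟩ | ⟨a, he, hmem⟩ | ⟨b, he, hmem⟩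
    · rw [he, iotaZ_snd] at h
      have hp2 : p.2 = 0 := (WithTop.coe_inj.1 h.symm)
      have hp0 : p = 0 := hl p (af_sub_S hp) (Or.inr hp2)
      rw [hp0] at he
      exact alpha_ne_zero hTD hi (by rw [he, iotaZ_zero])
    · rw [he] at h
      exact absurd h (by simp)
    · rw [he] at h
      have hb : b = 0 := (WithTop.coe_inj.1 h.symm)
      rw [hb] at hmem
      have h11 : (condE S).1 = 0 := congrArg Prod.fst (hl _ hmem (Or.inr rfl))
      omega

lemma corner_approx (hS : IsGood S) (hl : IsLocal S) (hTD : TrackData S n α) {i : ℕ}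
    (hi : i < n) (N : ℤ) :
    ∃ t ∈ trackSet S n α, iotaZ t ≤ α i ∧
      ((t.1 : WithTop ℤ) = (α i).1 ∨ N ≤ t.1) ∧
      ((t.2 : WithTop ℤ) = (α i).2 ∨ N ≤ t.2) := by
  rcases alpha_cases hTD hi with ⟨p, hp, he⟩ | ⟨a, he, hmem⟩ | ⟨b, he, hmem⟩
  · exact ⟨p, corner_in_T hTD hi he, le_of_eq he.symm,
      Or.inl (by rw [he, iotaZ_fst]), Or.inl (by rw [he, iotaZ_snd])⟩
  · have hi0 : i = 0 := y_top hTD hi (by rw [he])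
    subst hi0
    by_cases hn1 : n = 1
    · obtain ⟨Y, hY, hmem'⟩ := pump_col hS hl hmem N
      refine ⟨(a, Y), ?_, ?_, Or.inl (by rw [he]), Or.inr hY⟩
      · apply mem_trackSet.2
        refine Or.inr (Or.inr (Or.inr (Or.inl ⟨hmem', ?_⟩)))
        have hn0 : n - 1 = 0 := by omega
        rw [hn0, he]
        exact ⟨rfl, WithTop.coe_lt_top Y⟩
      · rw [he]
        exact Prod.le_def.2 ⟨le_refl _, le_top⟩
    · obtain ⟨g, hgeq, hg1, hg2⟩ := gamma_eq hTD (by omega : 0 + 1 < n)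
      obtain ⟨Y, hY, hmem'⟩ := pump_col hS hl hmem (max N (g.2 + 1))
      refine ⟨(a, Y), ?_, ?_, Or.inl (by rw [he]), Or.inr (le_trans (le_max_left _ _) hY)⟩
      · apply mem_trackSet.2
        refine Or.inr (Or.inr (Or.inl ⟨0, by omega, hmem', ?_⟩))
        rw [hgeq]
        left
        constructor
        · rw [iotaZ_fst]
          rw [he] at hg1
          exact hg1
        · rw [iotaZ_snd, WithTop.coe_lt_coe]
          have := le_max_right N (g.2 + 1)
          omega
      · rw [he]
        exact Prod.le_def.2 ⟨le_refl _, le_top⟩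
  · have hin : i = n - 1 := x_top hTD hi (by rw [he])
    subst hin
    by_cases hn1 : n = 1
    · obtain ⟨X, hX, hmem'⟩ := pump_row hS hl hmem N
      refine ⟨(X, b), ?_, ?_, Or.inr hX, Or.inl (by rw [he])⟩
      · apply mem_trackSet.2
        refine Or.inr (Or.inl ⟨hmem', ?_⟩)
        have hn0 : n - 1 = 0 := by omega
        rw [← hn0, he]
        exact ⟨rfl, WithTop.coe_lt_top X⟩
      · rw [he]
        exact Prod.le_def.2 ⟨le_top, le_refl _⟩
    · have hn2 : n - 2 + 1 < n := by omega
      obtain ⟨g, hgeq, hg1, hg2⟩ := gamma_eq hTD hn2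
      have he21 : n - 2 + 1 = n - 1 := by omega
      rw [he21] at hg2
      obtain ⟨X, hX, hmem'⟩ := pump_row hS hl hmem (max N (g.1 + 1))
      refine ⟨(X, b), ?_, ?_, Or.inr (le_trans (le_max_left _ _) hX), Or.inl (by rw [he])⟩
      · apply mem_trackSet.2
        refine Or.inr (Or.inr (Or.inl ⟨n - 2, by omega, hmem', ?_⟩))
        rw [hgeq]
        right
        constructor
        · rw [iotaZ_snd]
          rw [he] at hg2
          exact hg2
        · rw [iotaZ_fst, WithTop.coe_lt_coe]
          have := le_max_right N (g.1 + 1)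
          omega
      · rw [he]
        exact Prod.le_def.2 ⟨le_top, le_refl _⟩

end Track2

section Track3
variable {S : Set Z2} {n : ℕ} {α : ℕ → Om}

lemma no_cross (hS : IsGood S) (hl : IsLocal S) (hTD : TrackData S n α) {a b : Z2}
    (haS : a ∈ S) (haT : a ∉ trackSet S n α) (hbS : b ∈ S) (hbT : b ∉ trackSet S n α)
    (hab : a < b) (hcons : ∀ c ∈ S, ¬(a < c ∧ c < b))
    (hU : ∃ t ∈ trackSet S n α, a ≤ t) (hbU : ∀ t ∈ trackSet S n α, ¬ b ≤ t) : False := by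
  have hmin : ∀ t ∈ trackSet S n α, a ≤ t → b ⊓ t = a := by
    intro t htT hat
    have htS := T_sub_S hTD htT
    have hmS : b ⊓ t ∈ S := hS.2.2.2.1 b hbS t htS
    have h1 : a ≤ b ⊓ t := le_inf (le_of_lt hab) hat
    have h2 : b ⊓ t ≤ b := inf_le_left
    have h3 : b ⊓ t ≠ b := by
      intro h
      exact hbU t htT (by rw [← h]; exact inf_le_right)
    by_contra hne
    exact hcons _ hmS ⟨lt_of_le_of_ne h1 (Ne.symm hne), lt_of_le_of_ne h2 h3⟩
  have hcoord : ∀ t ∈ trackSet S n α, a ≤ t → min b.1 t.1 = a.1 ∧ min b.2 t.2 = a.2 := by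
    intro t ht hat
    have hh := hmin t ht hat
    rw [Prod.ext_iff] at hh
    exact hh
  obtain ⟨t0, ht0T, hat0⟩ := hU
  obtain ⟨⟨hab1, hab2⟩, habs⟩ := z2lt.1 hab
  rcases lt_or_eq_of_le hab1 with hb1 | hb1
  · rcases eq_or_lt_of_le hab2 with hb2 | hb2
    · -- CASE B : a.1 < b.1, a.2 = b.2
      have hconf : ∀ t ∈ trackSet S n α, a ≤ t → t.1 = a.1 ∧ a.2 < t.2 := by
        intro t ht hat
        obtain ⟨hm1, hm2⟩ := hcoord t ht hat
        obtain ⟨h1, h2⟩ := z2le.1 hat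
        have ht1 : t.1 = a.1 := by omega
        rcases eq_or_lt_of_le h2 with h | h
        · exfalso
          have hta : t = a := by rw [Prod.ext_iff]; constructor <;> omega
          rw [hta] at ht
          exact haT ht
        · exact ⟨ht1, h⟩
      obtain ⟨ht01, ht02⟩ := hconf t0 ht0T hat0
      obtain ⟨i, hi, hle0, hsh0⟩ := cf hTD ht0T
      by_cases hx : (t0.1 : WithTop ℤ) = (α i).1
      · by_cases hin : i + 1 < n
        · obtain ⟨g, hgeq, hg1, hg2⟩ := gamma_eq hTD hin
          have hga : g.1 = a.1 := by
            have hh : (g.1 : WithTop ℤ) = (t0.1 : WithTop ℤ) := hg1.symm.trans hx.symm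
            have := WithTop.coe_inj.1 hh
            omega
          rcases lt_trichotomy a.2 g.2 with hag | hag | hag
          · obtain ⟨t', ht'T, _, hc1, hc2⟩ :=
              corner_approx hS hl hTD (hin : i + 1 < n) (max a.1 a.2 + 1)
            have ht'1 : a.1 < t'.1 := by
              rcases hc1 with h | h
              · have hgt : (α i).1 < (α (i + 1)).1 := x_mono hTD (by omega) hin
                rw [← h, hg1] at hgt
                rw [WithTop.coe_lt_coe] at hgt
                omega
              · omega
            have ht'2 : a.2 < t'.2 := by
              rcases hc2 with h | h
              · rw [hg2] at h
                have := WithTop.coe_inj.1 h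
                omega
              · omega
            have := (hconf t' ht'T (z2le.2 ⟨le_of_lt ht'1, le_of_lt ht'2⟩)).1
            omega
          · have hbmem : b ∈ trackSet S n α := by
              apply mem_trackSet.2
              refine Or.inr (Or.inr (Or.inl ⟨i, by omega, hbS, ?_⟩))
              rw [hgeq]
              right
              constructor
              · show (b.2 : WithTop ℤ) = (g.2 : WithTop ℤ)
                exact WithTop.coe_inj.2 (by omega)
              · show (g.1 : WithTop ℤ) < (b.1 : WithTop ℤ)
                exact WithTop.coe_lt_coe.2 (by omega)
            exact hbT hbmem
          · have hamem : a ∈ trackSet S n α := by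
              apply mem_trackSet.2
              refine Or.inr (Or.inr (Or.inl ⟨i, by omega, haS, ?_⟩))
              rw [hgeq]
              left
              constructor
              · show (a.1 : WithTop ℤ) = (g.1 : WithTop ℤ)
                exact WithTop.coe_inj.2 (by omega)
              · show (g.2 : WithTop ℤ) < (a.2 : WithTop ℤ)
                exact WithTop.coe_lt_coe.2 (by omega)
            exact haT hamem
        · have hieq : i = n - 1 := by omega
          subst hieq
          rcases alpha_cases hTD hi with ⟨p, hp, he⟩ | ⟨av, he, hmem⟩ | ⟨bv, he, hmem⟩
          · have hpa : p.1 = a.1 := by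
              rw [he, iotaZ_fst] at hx
              have := WithTop.coe_inj.1 hx
              omega
            rcases lt_trichotomy a.2 p.2 with hap | hap | hap
            · have hamem : a ∈ trackSet S n α := by
                apply mem_trackSet.2
                refine Or.inr (Or.inr (Or.inr (Or.inl ⟨haS, ?_⟩)))
                rw [he]
                refine ⟨?_, ?_⟩
                · show (a.1 : WithTop ℤ) = (iotaZ p).1
                  rw [iotaZ_fst]
                  exact WithTop.coe_inj.2 (by omega)
                · show (a.2 : WithTop ℤ) < (iotaZ p).2
                  rw [iotaZ_snd]
                  exact WithTop.coe_lt_coe.2 (by omega)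
              exact haT hamem
            · have hap2 : a = p := by rw [Prod.ext_iff]; constructor <;> omega
              rw [hap2] at haT
              exact haT (corner_in_T hTD hi he)
            · have h2 := (Prod.le_def.1 hle0).2
              rw [he, iotaZ_snd] at h2
              have := WithTop.coe_le_coe.1 h2
              omega
          · have hamem : a ∈ trackSet S n α := by
              apply mem_trackSet.2
              refine Or.inr (Or.inr (Or.inr (Or.inl ⟨haS, ?_⟩)))
              rw [he]
              refine ⟨?_, ?_⟩
              · show (a.1 : WithTop ℤ) = ((av : WithTop ℤ), (⊤ : WithTop ℤ)).1
                rw [he] at hx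
                have := WithTop.coe_inj.1 hx
                exact WithTop.coe_inj.2 (by omega)
              · exact WithTop.coe_lt_top a.2
            exact haT hamem
          · rw [he] at hx
            exact absurd hx (by simp)
      · have hy : (t0.2 : WithTop ℤ) = (α i).2 := by
          rcases hsh0 with h | h
          · exact absurd h hx
          · exact h
        have hxlt : (t0.1 : WithTop ℤ) < (α i).1 := lt_of_le_of_ne (Prod.le_def.1 hle0).1 hx
        obtain ⟨t', ht'T, _, hc1, hc2⟩ := corner_approx hS hl hTD hi (max a.1 a.2 + 1)
        have ht'1 : a.1 < t'.1 := by
          rcases hc1 with h | h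
          · rw [← h] at hxlt
            rw [WithTop.coe_lt_coe] at hxlt
            omega
          · omega
        have ht'2 : a.2 < t'.2 := by
          rcases hc2 with h | h
          · have := WithTop.coe_inj.1 (h.trans hy.symm)
            omega
          · omega
        have := (hconf t' ht'T (z2le.2 ⟨le_of_lt ht'1, le_of_lt ht'2⟩)).1
        omega
    · -- CASE A : both strict
      obtain ⟨hm1, hm2⟩ := hcoord t0 ht0T hat0
      obtain ⟨h1, h2⟩ := z2le.1 hat0
      have ht0a : t0 = a := by rw [Prod.ext_iff]; constructor <;> omega
      rw [ht0a] at ht0T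
      exact haT ht0T
  · -- CASE C : a.1 = b.1, a.2 < b.2
    have hb2 : a.2 < b.2 := by
      rcases habs with h | h
      · omega
      · exact h
    have hconf : ∀ t ∈ trackSet S n α, a ≤ t → t.2 = a.2 ∧ a.1 < t.1 := by
      intro t ht hat
      obtain ⟨hm1, hm2⟩ := hcoord t ht hat
      obtain ⟨h1, h2⟩ := z2le.1 hat
      have ht2 : t.2 = a.2 := by omega
      rcases eq_or_lt_of_le h1 with h | h
      · exfalso
        have hta : t = a := by rw [Prod.ext_iff]; constructor <;> omega
        rw [hta] at ht
        exact haT ht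
      · exact ⟨ht2, h⟩
    obtain ⟨ht02, ht01⟩ := hconf t0 ht0T hat0
    obtain ⟨i, hi, hle0, hsh0⟩ := cf hTD ht0T
    by_cases hy : (t0.2 : WithTop ℤ) = (α i).2
    · by_cases hi0 : 1 ≤ i
      · have hin : (i - 1) + 1 < n := by omega
        obtain ⟨g, hgeq, hg1, hg2⟩ := gamma_eq hTD hin
        have hei : i - 1 + 1 = i := by omega
        rw [hei] at hg2
        have hga : g.2 = a.2 := by
          have hh : (g.2 : WithTop ℤ) = (t0.2 : WithTop ℤ) := hg2.symm.trans hy.symm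
          have := WithTop.coe_inj.1 hh
          omega
        rcases lt_trichotomy a.1 g.1 with hag | hag | hag
        · obtain ⟨t', ht'T, _, hc1, hc2⟩ :=
            corner_approx hS hl hTD (by omega : i - 1 < n) (max a.1 a.2 + 1)
          have ht'1 : a.1 < t'.1 := by
            rcases hc1 with h | h
            · rw [hg1] at h
              have := WithTop.coe_inj.1 h
              omega
            · omega
          have ht'2 : a.2 < t'.2 := by
            rcases hc2 with h | h
            · have hgt : (α i).2 < (α (i - 1)).2 := y_mono hTD (by omega) hi
              rw [← h, ← hy] at hgt
              rw [WithTop.coe_lt_coe] at hgt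
              omega
            · omega
          have := (hconf t' ht'T (z2le.2 ⟨le_of_lt ht'1, le_of_lt ht'2⟩)).1
          omega
        · have hbmem : b ∈ trackSet S n α := by
            apply mem_trackSet.2
            refine Or.inr (Or.inr (Or.inl ⟨i - 1, by omega, hbS, ?_⟩))
            rw [hgeq]
            left
            constructor
            · show (b.1 : WithTop ℤ) = (g.1 : WithTop ℤ)
              exact WithTop.coe_inj.2 (by omega)
            · show (g.2 : WithTop ℤ) < (b.2 : WithTop ℤ)
              exact WithTop.coe_lt_coe.2 (by omega)
          exact hbT hbmem
        · have hamem : a ∈ trackSet S n α := by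
            apply mem_trackSet.2
            refine Or.inr (Or.inr (Or.inl ⟨i - 1, by omega, haS, ?_⟩))
            rw [hgeq]
            right
            constructor
            · show (a.2 : WithTop ℤ) = (g.2 : WithTop ℤ)
              exact WithTop.coe_inj.2 (by omega)
            · show (g.1 : WithTop ℤ) < (a.1 : WithTop ℤ)
              exact WithTop.coe_lt_coe.2 (by omega)
          exact haT hamem
      · have hieq : i = 0 := by omega
        subst hieq
        rcases alpha_cases hTD hi with ⟨p, hp, he⟩ | ⟨av, he, hmem⟩ | ⟨bv, he, hmem⟩
        · have hpa : p.2 = a.2 := by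
            rw [he, iotaZ_snd] at hy
            have := WithTop.coe_inj.1 hy
            omega
          rcases lt_trichotomy a.1 p.1 with hap | hap | hap
          · have hamem : a ∈ trackSet S n α := by
              apply mem_trackSet.2
              refine Or.inr (Or.inl ⟨haS, ?_⟩)
              rw [he]
              refine ⟨?_, ?_⟩
              · show (a.2 : WithTop ℤ) = (iotaZ p).2
                rw [iotaZ_snd]
                exact WithTop.coe_inj.2 (by omega)
              · show (a.1 : WithTop ℤ) < (iotaZ p).1
                rw [iotaZ_fst]
                exact WithTop.coe_lt_coe.2 (by omega)
            exact haT hamem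
          · have hap2 : a = p := by rw [Prod.ext_iff]; constructor <;> omega
            rw [hap2] at haT
            exact haT (corner_in_T hTD hi he)
          · have h2 := (Prod.le_def.1 hle0).1
            rw [he, iotaZ_fst] at h2
            have := WithTop.coe_le_coe.1 h2
            omega
        · rw [he] at hy
          exact absurd hy (by simp)
        · have hamem : a ∈ trackSet S n α := by
            apply mem_trackSet.2
            refine Or.inr (Or.inl ⟨haS, ?_⟩)
            rw [he]
            refine ⟨?_, ?_⟩
            · show (a.2 : WithTop ℤ) = ((⊤ : WithTop ℤ), (bv : WithTop ℤ)).2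
              rw [he] at hy
              have := WithTop.coe_inj.1 hy
              exact WithTop.coe_inj.2 (by omega)
            · exact WithTop.coe_lt_top a.1
          exact haT hamem
    · have hx : (t0.1 : WithTop ℤ) = (α i).1 := by
        rcases hsh0 with h | h
        · exact h
        · exact absurd h hy
      have hylt : (t0.2 : WithTop ℤ) < (α i).2 := lt_of_le_of_ne (Prod.le_def.1 hle0).2 hy
      obtain ⟨t', ht'T, _, hc1, hc2⟩ := corner_approx hS hl hTD hi (max a.1 a.2 + 1)
      have ht'2 : a.2 < t'.2 := by
        rcases hc2 with h | h
        · rw [← h] at hylt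
          rw [WithTop.coe_lt_coe] at hylt
          omega
        · omega
      have ht'1 : a.1 < t'.1 := by
        rcases hc1 with h | h
        · have := WithTop.coe_inj.1 (h.trans hx.symm)
          omega
        · omega
      have := (hconf t' ht'T (z2le.2 ⟨le_of_lt ht'1, le_of_lt ht'2⟩)).1
      omega

lemma exists_transition {P : ℕ → Prop} {m : ℕ} (h0 : P 0) (hm : ¬ P m) :
    ∃ i, i < m ∧ P i ∧ ¬ P (i + 1) := by
  by_contra h
  push_neg at h
  have hall : ∀ i ≤ m, P i := by
    intro i hi
    induction i with
    | zero => exact h0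
    | succ k ih => exact h k (by omega) (ih (by omega))
  exact hm (hall m (le_refl m))

lemma no_sat_avoid (hS : IsGood S) (hl : IsLocal S) (hTD : TrackData S n α) {m : ℕ}
    {f : ℕ → Z2} (hf : IsSatChain S m f) (h0 : f 0 = 0)
    (hA : ∀ t ∈ trackSet S n α, ¬ f m ≤ t)
    (havoid : ∀ i ≤ m, f i ∉ trackSet S n α) : False := by
  have hn : 0 < n := hTD.1
  obtain ⟨t1, ht1, _⟩ := corner_approx hS hl hTD hn 0
  have hP0 : ∃ t ∈ trackSet S n α, f 0 ≤ t := by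
    refine ⟨t1, ht1, ?_⟩
    rw [h0]
    exact z2le.2 ⟨(hS.1 (T_sub_S hTD ht1)).1, (hS.1 (T_sub_S hTD ht1)).2⟩
  have hPm : ¬ ∃ t ∈ trackSet S n α, f m ≤ t := by push_neg; exact hA
  obtain ⟨i, him, hPi, hPi1⟩ :=
    exists_transition (P := fun i => ∃ t ∈ trackSet S n α, f i ≤ t) hP0 hPm
  push_neg at hPi1
  exact no_cross hS hl hTD (hf.1 i (by omega)) (havoid i (by omega)) (hf.1 (i + 1) (by omega))
    (havoid (i + 1) (by omega)) (hf.2.1 i him) (fun c hc => hf.2.2 i him c hc) hPi hPi1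

lemma cd_step_lower (hS : IsGood S) (hl : IsLocal S) (hTD : TrackData S n α) {A : Z2}
    (hA : A ∈ S) (hAT : A ∉ trackSet S n α)
    (hAbig : ∀ t ∈ trackSet S n α, ¬ A ≤ t) :
    chainDist (S \ trackSet S n α) 0 A + 1 ≤ chainDist S 0 A := by
  have h0S' : (0 : Z2) ∈ S \ trackSet S n α := ⟨hS.2.1, zero_notin_T hS hl hTD⟩
  have hA' : A ∈ S \ trackSet S n α := ⟨hA, hAT⟩
  have h0A : (0 : Z2) ≤ A := z2le.2 ⟨(hS.1 hA).1, (hS.1 hA).2⟩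
  obtain ⟨f, hf, hf0, hfm⟩ := chainDist_mem h0A h0S' hA'
  set m := chainDist (S \ trackSet S n α) 0 A with hm
  by_cases hc : ∃ i, i < m ∧ ∃ c ∈ S, f i < c ∧ c < f (i + 1)
  · obtain ⟨i, hi, c, hcS, h1, h2⟩ := hc
    have hchain : IsChain2 S m f := ⟨fun j hj => (hf.1 j hj).1, hf.2.1⟩
    obtain ⟨g, hg, hg0, hgn⟩ := chain_insert hchain hi hcS h1 h2
    obtain ⟨m', hm', g', hg', h0', hn'⟩ := satChain_exists hg
    have hle : m' ≤ chainDist S 0 A :=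
      chainDist_ge ⟨g', hg', by rw [h0', hg0, hf0], by rw [hn', hgn, hfm]⟩
    omega
  · exfalso
    push_neg at hc
    have hsat : IsSatChain S m f :=
      ⟨fun j hj => (hf.1 j hj).1, hf.2.1,
        fun i hi c hcS hcc => hc i hi c hcS hcc.1 hcc.2⟩
    exact no_sat_avoid hS hl hTD hsat hf0 (by rw [hfm]; exact hAbig)
      (fun i hi => (hf.1 i hi).2)

end Track3

section Track4
variable {S : Set Z2} {n : ℕ} {α : ℕ → Om}

lemma x_inj (hTD : TrackData S n α) {k j : ℕ} (hk : k < n) (hj : j < n)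
    (h : (α k).1 = (α j).1) : k = j := by
  rcases lt_trichotomy k j with hh | hh | hh
  · exact absurd h (ne_of_lt (x_mono hTD hh hj))
  · exact hh
  · exact absurd h.symm (ne_of_lt (x_mono hTD hh hk))

lemma y_inj (hTD : TrackData S n α) {k j : ℕ} (hk : k < n) (hj : j < n)
    (h : (α k).2 = (α j).2) : k = j := by
  rcases lt_trichotomy k j with hh | hh | hh
  · exact absurd h.symm (ne_of_lt (y_mono hTD hh hj))
  · exact hh
  · exact absurd h (ne_of_lt (y_mono hTD hh hk))

lemma col_char (hTD : TrackData S n α) {j : ℕ} (hj : j + 1 < n) {g : Z2}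
    (hg : α j ⊓ α (j + 1) = iotaZ g) {t : Z2} (ht : t ∈ trackSet S n α)
    (hx : (t.1 : WithTop ℤ) = (α j).1) : g.2 < t.2 := by
  have hn := hTD.1
  obtain ⟨g', hgeq', hg1, hg2⟩ := gamma_eq hTD hj
  have hgg : g' = g := iotaZ_inj (hgeq'.symm.trans hg)
  rw [hgg] at hg1 hg2
  rcases mem_trackSet.1 ht with h | ⟨hS', h⟩ | ⟨k, hk, hS', h⟩ | ⟨hS', h⟩ | h
  · -- t = corner 0
    have hx0 : (α 0).1 = (α j).1 := by rw [← h, iotaZ_fst]; exact hx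
    have hj0 : (0 : ℕ) = j := x_inj hTD (by omega) (by omega) hx0
    have h2 : (t.2 : WithTop ℤ) = (α 0).2 := by rw [← h, iotaZ_snd]
    have h3 : (α (j + 1)).2 < (α 0).2 := by rw [hj0]; exact y_adj hTD hj
    rw [← h2, hg2] at h3
    exact_mod_cast h3
  · obtain ⟨h1, h2⟩ := h
    exfalso
    have h3 : (α 0).1 ≤ (α j).1 := x_mono_le hTD (by omega) (by omega)
    rw [← hx] at h3
    exact absurd (lt_of_lt_of_le h2 h3) (lt_irrefl _)
  · obtain ⟨g', hgeq', hg1', hg2'⟩ := gamma_eq hTD (by omega : k + 1 < n)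
    rw [hgeq'] at h
    rcases h with ⟨h1, h2⟩ | ⟨h1, h2⟩
    · rw [iotaZ_fst] at h1
      have hkj : k = j := x_inj hTD (by omega) (by omega) (by rw [hg1', ← h1, hx])
      rw [iotaZ_snd] at h2
      subst hkj
      have : (g'.2 : WithTop ℤ) = (g.2 : WithTop ℤ) := by rw [← hg2', hg2]
      have hgg : g'.2 = g.2 := by exact_mod_cast this
      rw [← hgg]
      exact_mod_cast h2
    · rw [iotaZ_snd] at h1
      rw [iotaZ_fst] at h2
      have hyk : (t.2 : WithTop ℤ) = (α (k + 1)).2 := by rw [h1, ← hg2']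
      have hbx := bound_x_of_row hTD (by omega : k + 1 < n) hS' hyk
      have hlt : (α k).1 < (α j).1 := by
        rw [← hx]
        rw [← hg1'] at h2
        exact h2
      have hle : (α j).1 ≤ (α (k + 1)).1 := by rw [← hx]; exact hbx
      have hkj : k < j := by
        by_contra hcon
        push_neg at hcon
        exact absurd hlt (not_lt.2 (x_mono_le hTD hcon (by omega)))
      have hjk : j ≤ k + 1 := by
        by_contra hcon
        push_neg at hcon
        exact absurd hle (not_le.2 (x_mono hTD hcon (by omega)))
      have : j = k + 1 := by omega
      subst this
      have h3 : (α (k + 1 + 1)).2 < (α (k + 1)).2 := y_adj hTD hj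
      rw [hg2, ← hyk] at h3
      exact_mod_cast h3
  · obtain ⟨h1, h2⟩ := h
    exfalso
    have : n - 1 = j := x_inj hTD (by omega) (by omega) (by rw [← h1, hx])
    omega
  · exfalso
    have hx0 : (α (n - 1)).1 = (α j).1 := by rw [← h, iotaZ_fst]; exact hx
    have : n - 1 = j := x_inj hTD (by omega) (by omega) hx0
    omega

lemma row_char (hTD : TrackData S n α) {j : ℕ} (hj : j + 1 < n) {g : Z2}
    (hg : α j ⊓ α (j + 1) = iotaZ g) {t : Z2} (ht : t ∈ trackSet S n α)
    (hy : (t.2 : WithTop ℤ) = (α (j + 1)).2) : g.1 < t.1 := by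
  have hn := hTD.1
  obtain ⟨g', hgeq', hg1, hg2⟩ := gamma_eq hTD hj
  have hgg : g' = g := iotaZ_inj (hgeq'.symm.trans hg)
  rw [hgg] at hg1 hg2
  rcases mem_trackSet.1 ht with h | ⟨hS', h⟩ | ⟨k, hk, hS', h⟩ | ⟨hS', h⟩ | h
  · exfalso
    have hy0 : (α 0).2 = (α (j + 1)).2 := by rw [← h, iotaZ_snd]; exact hy
    have : (0 : ℕ) = j + 1 := y_inj hTD (by omega) (by omega) hy0
    omega
  · obtain ⟨h1, h2⟩ := h
    exfalso
    have hy0 : (α 0).2 = (α (j + 1)).2 := by rw [← h1, hy]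
    have : (0 : ℕ) = j + 1 := y_inj hTD (by omega) (by omega) hy0
    omega
  · obtain ⟨g', hgeq', hg1', hg2'⟩ := gamma_eq hTD (by omega : k + 1 < n)
    rw [hgeq'] at h
    rcases h with ⟨h1, h2⟩ | ⟨h1, h2⟩
    · rw [iotaZ_fst] at h1
      rw [iotaZ_snd] at h2
      have hxk : (t.1 : WithTop ℤ) = (α k).1 := by rw [h1, ← hg1']
      have hby := bound_y_of_col hTD (by omega : k < n) hS' hxk
      have hlt : (α (k + 1)).2 < (α (j + 1)).2 := by
        rw [← hy]
        rw [← hg2'] at h2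
        exact h2
      have hle : (α (j + 1)).2 ≤ (α k).2 := by rw [← hy]; exact hby
      have hkj : j + 1 < k + 1 := by
        by_contra hcon
        push_neg at hcon
        exact absurd hlt (not_lt.2 (y_mono_le hTD (by omega) (by omega)))
      have hjk : k ≤ j + 1 := by
        by_contra hcon
        push_neg at hcon
        exact absurd hle (not_le.2 (y_mono hTD (by omega) (by omega)))
      have : k = j + 1 := by omega
      subst this
      have h3 : (α j).1 < (α (j + 1)).1 := x_mono hTD (by omega) (by omega)
      rw [hg1, ← hxk] at h3
      exact_mod_cast h3
    · rw [iotaZ_snd] at h1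
      rw [iotaZ_fst] at h2
      have : k + 1 = j + 1 := by
        apply y_inj hTD (by omega) (by omega)
        rw [← hg2'] at h1
        rw [← h1, hy]
      have hkj : k = j := by omega
      subst hkj
      have : (g.1 : WithTop ℤ) < (t.1 : WithTop ℤ) := by rw [← hg1]; rw [← hg1'] at h2; exact h2
      exact_mod_cast this
  · obtain ⟨h1, h2⟩ := h
    exfalso
    have h3 : (α (n - 1)).2 ≤ (α (j + 1)).2 := y_mono_le hTD (by omega) (by omega)
    rw [← hy] at h3
    exact absurd (lt_of_lt_of_le h2 h3) (lt_irrefl _)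
  · have hy0 : (α (n - 1)).2 = (α (j + 1)).2 := by rw [← h, iotaZ_snd]; exact hy
    have he : n - 1 = j + 1 := y_inj hTD (by omega) (by omega) hy0
    have h3 : (α j).1 < (α (n - 1)).1 := by rw [he]; exact x_mono hTD (by omega) (by omega)
    have h4 : (α (n - 1)).1 = (t.1 : WithTop ℤ) := by rw [← h, iotaZ_fst]
    rw [h4, hg1] at h3
    exact_mod_cast h3

lemma col_char_last (hTD : TrackData S n α) {p : Z2} (hp : α (n - 1) = iotaZ p) {t : Z2}
    (ht : t ∈ trackSet S n α) (hx : t.1 = p.1) : t.2 ≤ p.2 := by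
  have hn := hTD.1
  have hxw : (t.1 : WithTop ℤ) = (α (n - 1)).1 := by
    rw [hp, iotaZ_fst]
    exact WithTop.coe_inj.2 hx
  rcases mem_trackSet.1 ht with h | ⟨hS', h⟩ | ⟨k, hk, hS', h⟩ | ⟨hS', h⟩ | h
  · have h0 : (0 : ℕ) = n - 1 := x_inj hTD (by omega) (by omega) (by rw [← h, iotaZ_fst]; exact hxw)
    have : iotaZ t = iotaZ p := by rw [h, h0, hp]
    rw [iotaZ_inj this]
  · obtain ⟨h1, h2⟩ := h
    exfalso
    have h3 : (α 0).1 ≤ (α (n - 1)).1 := x_mono_le hTD (by omega) (by omega)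
    rw [← hxw] at h3
    exact absurd (lt_of_lt_of_le h2 h3) (lt_irrefl _)
  · obtain ⟨g', hgeq', hg1', hg2'⟩ := gamma_eq hTD (by omega : k + 1 < n)
    rw [hgeq'] at h
    rcases h with ⟨h1, h2⟩ | ⟨h1, h2⟩
    · exfalso
      rw [iotaZ_fst] at h1
      have : k = n - 1 := x_inj hTD (by omega) (by omega) (by rw [hg1', ← h1, hxw])
      omega
    · rw [iotaZ_snd] at h1
      have hyk : (t.2 : WithTop ℤ) = (α (k + 1)).2 := by rw [h1, ← hg2']
      have hbx := bound_x_of_row hTD (by omega : k + 1 < n) hS' hyk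
      have hk1 : n - 1 ≤ k + 1 := by
        by_contra hcon
        push_neg at hcon
        rw [hxw] at hbx
        exact absurd (lt_of_le_of_lt hbx (x_mono hTD hcon (by omega))) (lt_irrefl _)
      have hkeq : k + 1 = n - 1 := by omega
      rw [hkeq] at hyk
      rw [hp, iotaZ_snd] at hyk
      exact le_of_eq (by exact_mod_cast hyk)
  · obtain ⟨h1, h2⟩ := h
    rw [hp, iotaZ_snd] at h2
    exact le_of_lt (by exact_mod_cast h2)
  · have : iotaZ t = iotaZ p := by rw [h, hp]
    rw [iotaZ_inj this]

lemma row_char_first (hTD : TrackData S n α) {p : Z2} (hp : α 0 = iotaZ p) {t : Z2}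
    (ht : t ∈ trackSet S n α) (hy : t.2 = p.2) : t.1 ≤ p.1 := by
  have hn := hTD.1
  have hyw : (t.2 : WithTop ℤ) = (α 0).2 := by
    rw [hp, iotaZ_snd]
    exact WithTop.coe_inj.2 hy
  rcases mem_trackSet.1 ht with h | ⟨hS', h⟩ | ⟨k, hk, hS', h⟩ | ⟨hS', h⟩ | h
  · have : iotaZ t = iotaZ p := by rw [h, hp]
    rw [iotaZ_inj this]
  · obtain ⟨h1, h2⟩ := h
    rw [hp, iotaZ_fst] at h2
    exact le_of_lt (by exact_mod_cast h2)
  · obtain ⟨g', hgeq', hg1', hg2'⟩ := gamma_eq hTD (by omega : k + 1 < n)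
    rw [hgeq'] at h
    rcases h with ⟨h1, h2⟩ | ⟨h1, h2⟩
    · rw [iotaZ_fst] at h1
      have hxk : (t.1 : WithTop ℤ) = (α k).1 := by rw [h1, ← hg1']
      have hby := bound_y_of_col hTD (by omega : k < n) hS' hxk
      have hk0 : k = 0 := by
        by_contra hcon
        rw [hyw] at hby
        exact absurd (lt_of_le_of_lt hby (y_mono hTD (by omega) (by omega))) (lt_irrefl _)
      rw [hk0] at hxk
      rw [hp, iotaZ_fst] at hxk
      exact le_of_eq (by exact_mod_cast hxk)
    · exfalso
      rw [iotaZ_snd] at h1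
      have : k + 1 = 0 := by
        apply y_inj hTD (by omega) (by omega)
        rw [← hg2'] at h1
        rw [← h1, hyw]
      omega
  · obtain ⟨h1, h2⟩ := h
    exfalso
    have h3 : (α (n - 1)).2 ≤ (α 0).2 := y_mono_le hTD (by omega) (by omega)
    rw [← hyw] at h3
    exact absurd (lt_of_lt_of_le h2 h3) (lt_irrefl _)
  · have h0 : n - 1 = 0 := y_inj hTD (by omega) (by omega) (by rw [← h, iotaZ_snd]; exact hyw)
    have : iotaZ t = iotaZ p := by rw [h, h0, hp]
    rw [iotaZ_inj this]

lemma msl (hTD : TrackData S n α) {t t' : Z2} (ht : t ∈ trackSet S n α)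
    (ht' : t' ∈ trackSet S n α) (h : t.1 < t'.1) : t'.2 ≤ t.2 := by
  obtain ⟨i, hi, hle, hsh⟩ := cf hTD ht
  by_cases hx : (t.1 : WithTop ℤ) = (α i).1
  · by_cases hin : i + 1 < n
    · obtain ⟨g, hgeq, hg1, hg2⟩ := gamma_eq hTD hin
      have hgt := col_char hTD hin hgeq ht hx
      by_contra hcon
      push_neg at hcon
      apply sf hTD hin ht'
      constructor
      · rw [← hx]
        exact WithTop.coe_lt_coe.2 h
      · rw [hg2]
        exact WithTop.coe_lt_coe.2 (by omega)
    · have hieq : i = n - 1 := by omega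
      have hgx := glob_x hTD ht'
      rw [← hieq, ← hx] at hgx
      exact absurd (WithTop.coe_le_coe.1 hgx) (by omega)
  · have hy : (t.2 : WithTop ℤ) = (α i).2 := by
      rcases hsh with hh | hh
      · exact absurd hh hx
      · exact hh
    by_cases hi0 : 1 ≤ i
    · obtain ⟨g, hgeq, hg1, hg2⟩ := gamma_eq hTD (show (i - 1) + 1 < n by omega)
      have hei : i - 1 + 1 = i := by omega
      have hrc := row_char hTD (show (i - 1) + 1 < n by omega) hgeq ht (by rw [hei]; exact hy)
      by_contra hcon
      push_neg at hcon
      apply sf hTD (show (i - 1) + 1 < n by omega) ht'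
      constructor
      · rw [hg1]
        exact WithTop.coe_lt_coe.2 (by omega)
      · rw [hei, ← hy]
        exact WithTop.coe_lt_coe.2 (by omega)
    · have hieq : i = 0 := by omega
      have hgy := glob_y hTD ht'
      rw [← hieq, ← hy] at hgy
      exact WithTop.coe_le_coe.1 hgy

end Track4

section Track5
variable {S : Set Z2} {n : ℕ} {α : ℕ → Om}

lemma colblock (hS : IsGood S) (hl : IsLocal S) (hTD : TrackData S n α) {t u : Z2}
    (htT : t ∈ trackSet S n α) (huT : u ∈ trackSet S n α) (hx : t.1 = u.1) (hy : t.2 < u.2) :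
    (∀ s ∈ S, s.1 = t.1 → t.2 ≤ s.2 → s ∈ trackSet S n α) ∧
      (∀ w ∈ trackSet S n α, t.1 < w.1 → w.2 < t.2) := by
  have hn := hTD.1
  have hanc : ∃ i, i < n ∧ (t.1 : WithTop ℤ) = (α i).1 := by
    obtain ⟨i, hi, hle, hsh⟩ := cf hTD htT
    by_cases h1 : (t.1 : WithTop ℤ) = (α i).1
    · exact ⟨i, hi, h1⟩
    obtain ⟨i', hi', hle', hsh'⟩ := cf hTD huT
    by_cases h2 : (u.1 : WithTop ℤ) = (α i').1
    · exact ⟨i', hi', by rw [hx]; exact h2⟩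
    exfalso
    have hty : (t.2 : WithTop ℤ) = (α i).2 := by
      rcases hsh with hh | hh
      · exact absurd hh h1
      · exact hh
    have huy : (u.2 : WithTop ℤ) = (α i').2 := by
      rcases hsh' with hh | hh
      · exact absurd hh h2
      · exact hh
    have hyy : (α i).2 < (α i').2 := by
      rw [← hty, ← huy]
      exact WithTop.coe_lt_coe.2 hy
    have hiu : i' < i := by
      rcases lt_trichotomy i' i with hh | hh | hh
      · exact hh
      · exfalso; rw [hh] at hyy; exact lt_irrefl _ hyy
      · exact absurd hyy (not_lt.2 (le_of_lt (y_mono hTD hh hi')))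
    obtain ⟨g, hgeq, hg1, hg2⟩ := gamma_eq hTD (show (i - 1) + 1 < n by omega)
    have hei : i - 1 + 1 = i := by omega
    have hrc := row_char hTD (show (i - 1) + 1 < n by omega) hgeq htT (by rw [hei]; exact hty)
    have hxle := (Prod.le_def.1 hle').1
    have hlt2 : (α (i - 1)).1 < (α i').1 := by
      calc (α (i - 1)).1 = (g.1 : WithTop ℤ) := hg1
      _ < (t.1 : WithTop ℤ) := WithTop.coe_lt_coe.2 hrc
      _ = (u.1 : WithTop ℤ) := by rw [hx]
      _ ≤ (α i').1 := hxle
    have hfin : i - 1 < i' := by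
      by_contra hcon
      push_neg at hcon
      exact absurd hlt2 (not_lt.2 (x_mono_le hTD hcon (by omega)))
    omega
  obtain ⟨i, hi, htx⟩ := hanc
  by_cases hin : i + 1 < n
  · obtain ⟨g, hgeq, hg1, hg2⟩ := gamma_eq hTD hin
    have hgt : g.2 < t.2 := col_char hTD hin hgeq htT htx
    have hg1t : g.1 = t.1 := WithTop.coe_inj.1 (hg1.symm.trans htx.symm)
    constructor
    · intro s hsS hs1 hs2
      apply mem_trackSet.2
      refine Or.inr (Or.inr (Or.inl ⟨i, by omega, hsS, ?_⟩))
      rw [hgeq]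
      left
      exact ⟨by rw [iotaZ_fst]; exact WithTop.coe_inj.2 (by omega),
        by rw [iotaZ_snd]; exact WithTop.coe_lt_coe.2 (by omega)⟩
    · intro w hwT hw1
      by_contra hcon
      push_neg at hcon
      apply sf hTD hin hwT
      constructor
      · rw [← htx]
        exact WithTop.coe_lt_coe.2 hw1
      · rw [hg2]
        exact WithTop.coe_lt_coe.2 (by omega)
  · have hieq : i = n - 1 := by omega
    subst hieq
    rcases alpha_cases hTD hi with ⟨p, hp, he⟩ | ⟨av, he, hmem⟩ | ⟨bv, he, hmem⟩
    · have hpt : p.1 = t.1 := by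
        rw [he, iotaZ_fst] at htx
        exact WithTop.coe_inj.1 htx.symm
      constructor
      · intro s hsS hs1 hs2
        rcases lt_trichotomy s.2 p.2 with h | h | h
        · apply mem_trackSet.2
          refine Or.inr (Or.inr (Or.inr (Or.inl ⟨hsS, ?_⟩)))
          rw [he]
          exact ⟨by rw [iotaZ_fst]; exact WithTop.coe_inj.2 (by omega),
            by rw [iotaZ_snd]; exact WithTop.coe_lt_coe.2 h⟩
        · have hsp : s = p := Prod.ext_iff.2 ⟨by omega, h⟩
          rw [hsp]
          exact corner_in_T hTD hi he
        · exfalso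
          have hmem2 : s ∈ S ∩ DeltaUp p := ⟨hsS, Or.inl ⟨by omega, h⟩⟩
          rw [hp.2] at hmem2
          exact Set.notMem_empty s hmem2
      · intro w hwT hw1
        exfalso
        have hgx := glob_x hTD hwT
        rw [he, iotaZ_fst] at hgx
        have := WithTop.coe_le_coe.1 hgx
        omega
    · have htav : t.1 = av := by
        rw [he] at htx
        exact WithTop.coe_inj.1 htx
      constructor
      · intro s hsS hs1 hs2
        apply mem_trackSet.2
        refine Or.inr (Or.inr (Or.inr (Or.inl ⟨hsS, ?_⟩)))
        rw [he]
        exact ⟨WithTop.coe_inj.2 (by omega), WithTop.coe_lt_top s.2⟩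
      · intro w hwT hw1
        exfalso
        have hgx := glob_x hTD hwT
        rw [he] at hgx
        have h1 : w.1 ≤ av := WithTop.coe_le_coe.1 hgx
        omega
    · rw [he] at htx
      exact absurd htx (by simp)

lemma rowblock (hS : IsGood S) (hl : IsLocal S) (hTD : TrackData S n α) {t u : Z2}
    (htT : t ∈ trackSet S n α) (huT : u ∈ trackSet S n α) (hy : t.2 = u.2) (hx : t.1 < u.1) :
    (∀ s ∈ S, s.2 = t.2 → t.1 ≤ s.1 → s ∈ trackSet S n α) ∧
      (∀ w ∈ trackSet S n α, t.2 < w.2 → w.1 < t.1) := by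
  have hn := hTD.1
  have hanc : ∃ i, i < n ∧ (t.2 : WithTop ℤ) = (α i).2 := by
    obtain ⟨i, hi, hle, hsh⟩ := cf hTD htT
    by_cases h1 : (t.2 : WithTop ℤ) = (α i).2
    · exact ⟨i, hi, h1⟩
    obtain ⟨i', hi', hle', hsh'⟩ := cf hTD huT
    by_cases h2 : (u.2 : WithTop ℤ) = (α i').2
    · exact ⟨i', hi', by rw [hy]; exact h2⟩
    exfalso
    have htx : (t.1 : WithTop ℤ) = (α i).1 := by
      rcases hsh with hh | hh
      · exact hh
      · exact absurd hh h1
    have hux : (u.1 : WithTop ℤ) = (α i').1 := by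
      rcases hsh' with hh | hh
      · exact hh
      · exact absurd hh h2
    have hxx : (α i).1 < (α i').1 := by
      rw [← htx, ← hux]
      exact WithTop.coe_lt_coe.2 hx
    have hiu : i < i' := by
      rcases lt_trichotomy i i' with hh | hh | hh
      · exact hh
      · exfalso; rw [hh] at hxx; exact lt_irrefl _ hxx
      · exact absurd hxx (not_lt.2 (le_of_lt (x_mono hTD hh hi)))
    obtain ⟨g, hgeq, hg1, hg2⟩ := gamma_eq hTD (show i + 1 < n by omega)
    have hcc := col_char hTD (show i + 1 < n by omega) hgeq htT htx
    have hyle := (Prod.le_def.1 hle').2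
    have hlt2 : (α (i + 1)).2 < (α i').2 := by
      calc (α (i + 1)).2 = (g.2 : WithTop ℤ) := hg2
      _ < (t.2 : WithTop ℤ) := WithTop.coe_lt_coe.2 hcc
      _ = (u.2 : WithTop ℤ) := by rw [hy]
      _ ≤ (α i').2 := hyle
    have hfin : i' < i + 1 := by
      by_contra hcon
      push_neg at hcon
      exact absurd hlt2 (not_lt.2 (y_mono_le hTD hcon (by omega)))
    omega
  obtain ⟨i, hi, hty⟩ := hanc
  by_cases hi0 : 1 ≤ i
  · obtain ⟨g, hgeq, hg1, hg2⟩ := gamma_eq hTD (show (i - 1) + 1 < n by omega)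
    have hei : i - 1 + 1 = i := by omega
    rw [hei] at hg2
    have hgt : g.1 < t.1 := row_char hTD (show (i - 1) + 1 < n by omega) hgeq htT (by rw [hei]; exact hty)
    have hg2t : g.2 = t.2 := WithTop.coe_inj.1 (hg2.symm.trans hty.symm)
    constructor
    · intro s hsS hs2 hs1
      apply mem_trackSet.2
      refine Or.inr (Or.inr (Or.inl ⟨i - 1, by omega, hsS, ?_⟩))
      rw [hgeq]
      right
      exact ⟨by rw [iotaZ_snd]; exact WithTop.coe_inj.2 (by omega),
        by rw [iotaZ_fst]; exact WithTop.coe_lt_coe.2 (by omega)⟩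
    · intro w hwT hw2
      by_contra hcon
      push_neg at hcon
      apply sf hTD (show (i - 1) + 1 < n by omega) hwT
      constructor
      · rw [hg1]
        exact WithTop.coe_lt_coe.2 (by omega)
      · rw [hei, ← hty]
        exact WithTop.coe_lt_coe.2 (by omega)
  · have hieq : i = 0 := by omega
    subst hieq
    rcases alpha_cases hTD hi with ⟨p, hp, he⟩ | ⟨av, he, hmem⟩ | ⟨bv, he, hmem⟩
    · have hpt : p.2 = t.2 := by
        rw [he, iotaZ_snd] at hty
        exact WithTop.coe_inj.1 hty.symm
      constructor
      · intro s hsS hs2 hs1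
        rcases lt_trichotomy s.1 p.1 with h | h | h
        · apply mem_trackSet.2
          refine Or.inr (Or.inl ⟨hsS, ?_⟩)
          rw [he]
          exact ⟨by rw [iotaZ_snd]; exact WithTop.coe_inj.2 (by omega),
            by rw [iotaZ_fst]; exact WithTop.coe_lt_coe.2 h⟩
        · have hsp : s = p := Prod.ext_iff.2 ⟨h, by omega⟩
          rw [hsp]
          exact corner_in_T hTD hi he
        · exfalso
          have hmem2 : s ∈ S ∩ DeltaUp p := ⟨hsS, Or.inr ⟨by omega, h⟩⟩
          rw [hp.2] at hmem2
          exact Set.notMem_empty s hmem2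
      · intro w hwT hw2
        exfalso
        have hgy := glob_y hTD hwT
        rw [he, iotaZ_snd] at hgy
        have := WithTop.coe_le_coe.1 hgy
        omega
    · rw [he] at hty
      exact absurd hty (by simp)
    · have htbv : t.2 = bv := by
        rw [he] at hty
        exact WithTop.coe_inj.1 hty
      constructor
      · intro s hsS hs2 hs1
        apply mem_trackSet.2
        refine Or.inr (Or.inl ⟨hsS, ?_⟩)
        rw [he]
        exact ⟨WithTop.coe_inj.2 (by omega), WithTop.coe_lt_top s.1⟩
      · intro w hwT hw2
        exfalso
        have hgy := glob_y hTD hwT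
        rw [he] at hgy
        have h1 : w.2 ≤ bv := WithTop.coe_le_coe.1 hgy
        omega

end Track5

section Track6
variable {S : Set Z2} {n : ℕ} {α : ℕ → Om}

lemma cd_step_upper (hS : IsGood S) (hl : IsLocal S) (hTD : TrackData S n α) {A : Z2}
    (hA : A ∈ S) (hAT : A ∉ trackSet S n α) :
    chainDist S 0 A ≤ chainDist (S \ trackSet S n α) 0 A + 1 := by
  classical
  have h0S : (0 : Z2) ∈ S := hS.2.1
  have h0A : (0 : Z2) ≤ A := z2le.2 ⟨(hS.1 hA).1, (hS.1 hA).2⟩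
  obtain ⟨f, hf, hf0, hfm⟩ := chainDist_mem h0A h0S hA
  set m := chainDist S 0 A with hmdef
  set T := trackSet S n α with hTdef
  set P : Set ℕ := {i | i ≤ m ∧ f i ∈ T} with hPdef
  by_cases hPne : P.Nonempty
  · -- there is a block
    have hPbdd : BddAbove P := ⟨m, fun x hx => hx.1⟩
    set i₀ := sInf P with hi0def
    set j₀ := sSup P with hj0def
    have hi₀ : i₀ ∈ P := Nat.sInf_mem hPne
    have hj₀ : j₀ ∈ P := Nat.sSup_mem hPne hPbdd
    have hi₀pos : 1 ≤ i₀ := by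
      rcases Nat.eq_zero_or_pos i₀ with h | h
      · exfalso
        have := hi₀.2
        rw [h, hf0] at this
        exact zero_notin_T hS hl hTD this
      · exact h
    have hj₀m : j₀ < m := by
      have h1 : j₀ ≤ m := hj₀.1
      rcases Nat.eq_or_lt_of_le h1 with h | h
      · exfalso
        have := hj₀.2
        rw [h, hfm] at this
        exact hAT this
      · exact h
    have hij : i₀ ≤ j₀ := Nat.sInf_le hj₀
    have hnotlt : ∀ k, k < i₀ → k ≤ m → f k ∉ T := by
      intro k hk hkm hin
      have hmem : k ∈ P := ⟨hkm, hin⟩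
      exact absurd (Nat.sInf_le hmem) (by omega)
    have hnotgt : ∀ k, j₀ < k → k ≤ m → f k ∉ T := by
      intro k hk hkm hin
      have hmem : k ∈ P := ⟨hkm, hin⟩
      exact absurd (le_csSup hPbdd hmem) (by omega)
    have hkey : ∃ G : ℕ → Z2, IsChain2 (S \ T) (m - 1) G ∧ G 0 = 0 ∧ G (m - 1) = A := by
      rcases Nat.eq_or_lt_of_le hij with heq | hlt
      · -- single removed point
        refine ⟨fun j => if j < i₀ then f j else f (j + 1), ⟨?_, ?_⟩, ?_, ?_⟩
        · intro j hj
          dsimp only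
          split_ifs with h
          · exact ⟨hf.1 j (by omega), hnotlt j h (by omega)⟩
          · push_neg at h
            exact ⟨hf.1 (j + 1) (by omega), hnotgt (j + 1) (by omega) (by omega)⟩
        · intro j hj
          dsimp only
          by_cases h1 : j < i₀
          · by_cases h2 : j + 1 < i₀
            · rw [if_pos h1, if_pos h2]
              exact hf.2.1 j (by omega)
            · rw [if_pos h1, if_neg h2]
              exact lt_trans (hf.2.1 j (by omega)) (hf.2.1 (j + 1) (by omega))
          · rw [if_neg h1, if_neg (by omega : ¬ j + 1 < i₀)]
            exact hf.2.1 (j + 1) (by omega)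
        · dsimp only
          rw [if_pos (by omega : 0 < i₀)]
          exact hf0
        · dsimp only
          rw [if_neg (by omega : ¬ m - 1 < i₀)]
          have he : m - 1 + 1 = m := by omega
          rw [he]
          exact hfm
      · -- real block i₀ < j₀
        set d := j₀ - i₀ with hddef
        have hd1 : 1 ≤ d := by omega
        have hfi₀ : f i₀ ∈ T := hi₀.2
        have hfj₀ : f j₀ ∈ T := hj₀.2
        have hlt0 : f i₀ < f j₀ :=
          lt_of_lt_of_le (hf.2.1 i₀ (by omega))
            (chain_le_mono' hf.2.1 (by omega : i₀ + 1 ≤ j₀) (by omega))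
        have hline : (f i₀).1 = (f j₀).1 ∨ (f i₀).2 = (f j₀).2 := by
          rcases eq_or_lt_of_le (z2lt.1 hlt0).1.1 with h | h
          · exact Or.inl h
          · exact Or.inr (le_antisymm (z2lt.1 hlt0).1.2 (msl hTD hfi₀ hfj₀ h))
        have hsql : ∀ l, i₀ ≤ l → l ≤ j₀ → f i₀ ≤ f l ∧ f l ≤ f j₀ := by
          intro l h1 h2
          exact ⟨chain_le_mono' hf.2.1 h1 (by omega), chain_le_mono' hf.2.1 h2 (by omega)⟩
        rcases hline with hcol | hrow
        · -- COLUMN CASE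
          set X := (f i₀).1 with hXdef
          have hsq : ∀ l, i₀ ≤ l → l ≤ j₀ → (f l).1 = X := by
            intro l h1 h2
            obtain ⟨ha, hb⟩ := hsql l h1 h2
            have := (z2le.1 ha).1
            have := (z2le.1 hb).1
            omega
          have hy0 : (f i₀).2 < (f j₀).2 := by
            rcases (z2lt.1 hlt0).2 with h | h
            · omega
            · exact h
          obtain ⟨hfill, hright⟩ := colblock hS hl hTD hfi₀ hfj₀ hcol hy0
          have hstep2 : ∀ l1 l2, i₀ ≤ l1 → l1 < l2 → l2 ≤ j₀ → (f l1).2 < (f l2).2 := by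
            intro l1 l2 h1 h2 h3
            have hstep : f l1 < f l2 :=
              lt_of_lt_of_le (hf.2.1 l1 (by omega))
                (chain_le_mono' hf.2.1 (by omega : l1 + 1 ≤ l2) (by omega))
            have e1 : (f l1).1 = X := hsq l1 h1 (by omega)
            have e2 : (f l2).1 = X := hsq l2 (by omega) h3
            rcases (z2lt.1 hstep).2 with h | h
            · omega
            · exact h
          set v := f (j₀ + 1) with hvdef
          have hvS : v ∈ S := hf.1 (j₀ + 1) (by omega)
          have hvT : v ∉ T := hnotgt (j₀ + 1) (by omega) (by omega)
          have hvge : f j₀ < v := hf.2.1 j₀ (by omega)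
          have hv1 : X < v.1 := by
            rcases eq_or_lt_of_le (le_trans (le_of_eq hcol) (z2lt.1 hvge).1.1) with h | h
            · exfalso
              apply hvT
              exact hfill v hvS h.symm (le_trans (le_of_lt hy0) (z2lt.1 hvge).1.2)
            · exact h
          have hv2 : (f j₀).2 ≤ v.2 := (z2lt.1 hvge).1.2
          -- partners
          have heX : ∀ l : ℕ, ∃ e : Z2,
              l < d → (e ∈ S ∧ (f (i₀ + l)).1 < e.1 ∧ e.2 = (f (i₀ + l)).2) := by
            intro l
            by_cases hld : l < d
            · obtain ⟨e, he1, he2, he3⟩ := g3_col hS (hf.1 (i₀ + l) (by omega))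
                (hf.1 (i₀ + l + 1) (by omega))
                (by rw [hsq (i₀ + l) (by omega) (by omega), hsq (i₀ + l + 1) (by omega) (by omega)])
                (hstep2 (i₀ + l) (i₀ + l + 1) (by omega) (by omega) (by omega))
              exact ⟨e, fun _ => ⟨he1, he2, he3⟩⟩
            · exact ⟨0, fun h => absurd h hld⟩
          choose eF heF using heX
          set W : ℕ → Z2 := fun j =>
            Nat.rec (v ⊓ eF (d - 1)) (fun jj prev => prev ⊓ eF (d - 2 - jj)) j with hWdef
          have hWsucc : ∀ j, W (j + 1) = W j ⊓ eF (d - 2 - j) := fun j => rfl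
          have hW0 : W 0 = v ⊓ eF (d - 1) := rfl
          have hjeq : i₀ + d = j₀ := by omega
          have hW : ∀ j, j ≤ d - 1 →
              W j ∈ S ∧ (W j).2 = (f (i₀ + (d - 1 - j))).2 ∧ X < (W j).1 := by
            intro j
            induction j with
            | zero =>
              intro _
              obtain ⟨heS, he1, he2⟩ := heF (d - 1) (by omega)
              have hv2' : (f (i₀ + (d - 1))).2 < v.2 :=
                lt_of_lt_of_le (hstep2 (i₀ + (d - 1)) j₀ (by omega) (by omega) (by omega)) hv2
              refine ⟨hS.2.2.2.1 v hvS _ heS, ?_, ?_⟩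
              · rw [hW0]
                show min v.2 (eF (d - 1)).2 = _
                rw [he2]
                simp only [Nat.sub_zero]
                omega
              · rw [hW0]
                show X < min v.1 (eF (d - 1)).1
                have := hsq (i₀ + (d - 1)) (by omega) (by omega)
                omega
            | succ k ih =>
              intro hk
              obtain ⟨ihS, ih2, ih1⟩ := ih (by omega)
              obtain ⟨heS, he1, he2⟩ := heF (d - 2 - k) (by omega)
              have hidx : d - 1 - (k + 1) = d - 2 - k := by omega
              have hlt2 : (f (i₀ + (d - 2 - k))).2 < (f (i₀ + (d - 1 - k))).2 :=
                hstep2 _ _ (by omega) (by omega) (by omega)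
              refine ⟨hS.2.2.2.1 _ ihS _ heS, ?_, ?_⟩
              · rw [hWsucc]
                show min (W k).2 (eF (d - 2 - k)).2 = _
                rw [he2, ih2, hidx]
                omega
              · rw [hWsucc]
                show X < min (W k).1 (eF (d - 2 - k)).1
                have := hsq (i₀ + (d - 2 - k)) (by omega) (by omega)
                omega
          set M : ℕ → Z2 := fun l => W (d - 1 - l) with hMdef
          have hM : ∀ l, l ≤ d - 1 → M l ∈ S ∧ (M l).2 = (f (i₀ + l)).2 ∧ X < (M l).1 := by
            intro l hld
            obtain ⟨h1, h2, h3⟩ := hW (d - 1 - l) (by omega)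
            have : d - 1 - (d - 1 - l) = l := by omega
            rw [this] at h2
            exact ⟨h1, h2, h3⟩
          have hMT : ∀ l, l ≤ d - 1 → M l ∉ T := by
            intro l hld hMin
            obtain ⟨h1, h2, h3⟩ := hM l hld
            have := hright (M l) hMin h3
            have h4 : (f i₀).2 ≤ (f (i₀ + l)).2 := by
              rcases Nat.eq_zero_or_pos l with rfl | hp
              · simp
              · exact le_of_lt (hstep2 i₀ (i₀ + l) (by omega) (by omega) (by omega))
            omega
          have hMmono : ∀ l, l + 1 ≤ d - 1 → M l < M (l + 1) := by
            intro l hld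
            obtain ⟨_, h2, _⟩ := hM l (by omega)
            obtain ⟨_, h2', _⟩ := hM (l + 1) hld
            have hx1 : (M l).1 ≤ (M (l + 1)).1 := by
              have hidx : d - 1 - l = (d - 1 - (l + 1)) + 1 := by omega
              show (W (d - 1 - l)).1 ≤ (W (d - 1 - (l + 1))).1
              rw [hidx, hWsucc]
              show min (W (d - 1 - (l + 1))).1 (eF (d - 2 - (d - 1 - (l + 1)))).1 ≤ _
              omega
            apply z2lt_of _ _ hx1 ?_ (Or.inr ?_)
            · rw [h2, h2']
              exact le_of_lt (hstep2 (i₀ + l) (i₀ + (l + 1)) (by omega) (by omega) (by omega))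
            · rw [h2, h2']
              exact hstep2 (i₀ + l) (i₀ + (l + 1)) (by omega) (by omega) (by omega)
          refine ⟨fun j => if j < i₀ then f j else if j ≤ j₀ - 1 then M (j - i₀) else f (j + 1),
            ⟨?_, ?_⟩, ?_, ?_⟩
          · intro j hj
            dsimp only
            split_ifs with h1 h2
            · exact ⟨hf.1 j (by omega), hnotlt j h1 (by omega)⟩
            · obtain ⟨hm1, _, _⟩ := hM (j - i₀) (by omega)
              exact ⟨hm1, hMT (j - i₀) (by omega)⟩
            · push_neg at h1 h2
              exact ⟨hf.1 (j + 1) (by omega), hnotgt (j + 1) (by omega) (by omega)⟩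
          · intro j hj
            dsimp only
            by_cases h1 : j < i₀
            · by_cases h2 : j + 1 < i₀
              · rw [if_pos h1, if_pos h2]
                exact hf.2.1 j (by omega)
              · -- j + 1 = i₀ : f (i₀ - 1) < M 0
                rw [if_pos h1, if_neg h2, if_pos (by omega : j + 1 ≤ j₀ - 1)]
                have hj1 : j + 1 = i₀ := by omega
                have hidx : j + 1 - i₀ = 0 := by omega
                rw [hidx]
                obtain ⟨_, hm2, hm3⟩ := hM 0 (by omega)
                have hstep0 : f j < f i₀ := by
                  rw [← hj1]
                  exact hf.2.1 j (by omega)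
                apply z2lt_of _ _ ?_ ?_ (Or.inl ?_)
                · have := (z2le.1 (le_of_lt hstep0)).1
                  omega
                · have := (z2le.1 (le_of_lt hstep0)).2
                  rw [hm2]
                  simp only [Nat.add_zero]
                  omega
                · have := (z2le.1 (le_of_lt hstep0)).1
                  omega
            · push_neg at h1
              by_cases h2 : j ≤ j₀ - 1
              · by_cases h3 : j + 1 ≤ j₀ - 1
                · rw [if_neg (by omega : ¬ j < i₀), if_pos h2,
                    if_neg (by omega : ¬ j + 1 < i₀), if_pos h3]
                  have hidx : j + 1 - i₀ = (j - i₀) + 1 := by omega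
                  rw [hidx]
                  exact hMmono (j - i₀) (by omega)
                · -- j = j₀ - 1 : M (d-1) < v
                  rw [if_neg (by omega : ¬ j < i₀), if_pos h2,
                    if_neg (by omega : ¬ j + 1 < i₀), if_neg h3]
                  have hj1 : j + 1 = j₀ := by omega
                  have hidx : j - i₀ = d - 1 := by omega
                  rw [hidx, hj1]
                  obtain ⟨_, hm2, hm3⟩ := hM (d - 1) (by omega)
                  have hx1 : (M (d - 1)).1 ≤ v.1 := by
                    show (W (d - 1 - (d - 1))).1 ≤ v.1
                    have : d - 1 - (d - 1) = 0 := by omega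
                    rw [this, hW0]
                    show min v.1 (eF (d - 1)).1 ≤ v.1
                    omega
                  apply z2lt_of _ _ hx1 ?_ (Or.inr ?_)
                  · rw [hm2]
                    have : i₀ + (d - 1) < j₀ := by omega
                    exact le_of_lt (lt_of_lt_of_le
                      (hstep2 (i₀ + (d - 1)) j₀ (by omega) (by omega) (by omega)) hv2)
                  · rw [hm2]
                    exact lt_of_lt_of_le
                      (hstep2 (i₀ + (d - 1)) j₀ (by omega) (by omega) (by omega)) hv2
              · rw [if_neg (by omega : ¬ j < i₀), if_neg h2,
                  if_neg (by omega : ¬ j + 1 < i₀), if_neg (by omega : ¬ j + 1 ≤ j₀ - 1)]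
                exact hf.2.1 (j + 1) (by omega)
          · dsimp only
            rw [if_pos (by omega : 0 < i₀)]
            exact hf0
          · dsimp only
            rw [if_neg (by omega : ¬ m - 1 < i₀), if_neg (by omega : ¬ m - 1 ≤ j₀ - 1)]
            have he : m - 1 + 1 = m := by omega
            rw [he]
            exact hfm
        · -- ROW CASE
          set Y := (f i₀).2 with hYdef
          have hsq : ∀ l, i₀ ≤ l → l ≤ j₀ → (f l).2 = Y := by
            intro l h1 h2
            obtain ⟨ha, hb⟩ := hsql l h1 h2
            have := (z2le.1 ha).2
            have := (z2le.1 hb).2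
            omega
          have hx0 : (f i₀).1 < (f j₀).1 := by
            rcases (z2lt.1 hlt0).2 with h | h
            · exact h
            · omega
          obtain ⟨hfill, hup⟩ := rowblock hS hl hTD hfi₀ hfj₀ hrow hx0
          have hstep2 : ∀ l1 l2, i₀ ≤ l1 → l1 < l2 → l2 ≤ j₀ → (f l1).1 < (f l2).1 := by
            intro l1 l2 h1 h2 h3
            have hstep : f l1 < f l2 :=
              lt_of_lt_of_le (hf.2.1 l1 (by omega))
                (chain_le_mono' hf.2.1 (by omega : l1 + 1 ≤ l2) (by omega))
            have e1 : (f l1).2 = Y := hsq l1 h1 (by omega)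
            have e2 : (f l2).2 = Y := hsq l2 (by omega) h3
            rcases (z2lt.1 hstep).2 with h | h
            · exact h
            · omega
          set v := f (j₀ + 1) with hvdef
          have hvS : v ∈ S := hf.1 (j₀ + 1) (by omega)
          have hvT : v ∉ T := hnotgt (j₀ + 1) (by omega) (by omega)
          have hvge : f j₀ < v := hf.2.1 j₀ (by omega)
          have hv2 : Y < v.2 := by
            rcases eq_or_lt_of_le (le_trans (le_of_eq hrow) (z2lt.1 hvge).1.2) with h | h
            · exfalso
              apply hvT
              exact hfill v hvS h.symm (le_trans (le_of_lt hx0) (z2lt.1 hvge).1.1)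
            · exact h
          have hv1 : (f j₀).1 ≤ v.1 := (z2lt.1 hvge).1.1
          have heX : ∀ l : ℕ, ∃ e : Z2,
              l < d → (e ∈ S ∧ (f (i₀ + l)).2 < e.2 ∧ e.1 = (f (i₀ + l)).1) := by
            intro l
            by_cases hld : l < d
            · obtain ⟨e, he1, he2, he3⟩ := g3_row hS (hf.1 (i₀ + l) (by omega))
                (hf.1 (i₀ + l + 1) (by omega))
                (by rw [hsq (i₀ + l) (by omega) (by omega), hsq (i₀ + l + 1) (by omega) (by omega)])
                (hstep2 (i₀ + l) (i₀ + l + 1) (by omega) (by omega) (by omega))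
              exact ⟨e, fun _ => ⟨he1, he2, he3⟩⟩
            · exact ⟨0, fun h => absurd h hld⟩
          choose eF heF using heX
          set W : ℕ → Z2 := fun j =>
            Nat.rec (v ⊓ eF (d - 1)) (fun jj prev => prev ⊓ eF (d - 2 - jj)) j with hWdef
          have hWsucc : ∀ j, W (j + 1) = W j ⊓ eF (d - 2 - j) := fun j => rfl
          have hW0 : W 0 = v ⊓ eF (d - 1) := rfl
          have hjeq : i₀ + d = j₀ := by omega
          have hW : ∀ j, j ≤ d - 1 →
              W j ∈ S ∧ (W j).1 = (f (i₀ + (d - 1 - j))).1 ∧ Y < (W j).2 := by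
            intro j
            induction j with
            | zero =>
              intro _
              obtain ⟨heS, he1, he2⟩ := heF (d - 1) (by omega)
              have hv1' : (f (i₀ + (d - 1))).1 < v.1 :=
                lt_of_lt_of_le (hstep2 (i₀ + (d - 1)) j₀ (by omega) (by omega) (by omega)) hv1
              refine ⟨hS.2.2.2.1 v hvS _ heS, ?_, ?_⟩
              · rw [hW0]
                show min v.1 (eF (d - 1)).1 = _
                rw [he2]
                simp only [Nat.sub_zero]
                omega
              · rw [hW0]
                show Y < min v.2 (eF (d - 1)).2
                have := hsq (i₀ + (d - 1)) (by omega) (by omega)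
                omega
            | succ k ih =>
              intro hk
              obtain ⟨ihS, ih2, ih1⟩ := ih (by omega)
              obtain ⟨heS, he1, he2⟩ := heF (d - 2 - k) (by omega)
              have hidx : d - 1 - (k + 1) = d - 2 - k := by omega
              have hlt2 : (f (i₀ + (d - 2 - k))).1 < (f (i₀ + (d - 1 - k))).1 :=
                hstep2 _ _ (by omega) (by omega) (by omega)
              refine ⟨hS.2.2.2.1 _ ihS _ heS, ?_, ?_⟩
              · rw [hWsucc]
                show min (W k).1 (eF (d - 2 - k)).1 = _
                rw [he2, ih2, hidx]
                omega
              · rw [hWsucc]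
                show Y < min (W k).2 (eF (d - 2 - k)).2
                have := hsq (i₀ + (d - 2 - k)) (by omega) (by omega)
                omega
          set M : ℕ → Z2 := fun l => W (d - 1 - l) with hMdef
          have hM : ∀ l, l ≤ d - 1 → M l ∈ S ∧ (M l).1 = (f (i₀ + l)).1 ∧ Y < (M l).2 := by
            intro l hld
            obtain ⟨h1, h2, h3⟩ := hW (d - 1 - l) (by omega)
            have : d - 1 - (d - 1 - l) = l := by omega
            rw [this] at h2
            exact ⟨h1, h2, h3⟩
          have hMT : ∀ l, l ≤ d - 1 → M l ∉ T := by
            intro l hld hMin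
            obtain ⟨h1, h2, h3⟩ := hM l hld
            have := hup (M l) hMin h3
            have h4 : (f i₀).1 ≤ (f (i₀ + l)).1 := by
              rcases Nat.eq_zero_or_pos l with rfl | hp
              · simp
              · exact le_of_lt (hstep2 i₀ (i₀ + l) (by omega) (by omega) (by omega))
            omega
          have hMmono : ∀ l, l + 1 ≤ d - 1 → M l < M (l + 1) := by
            intro l hld
            obtain ⟨_, h2, _⟩ := hM l (by omega)
            obtain ⟨_, h2', _⟩ := hM (l + 1) hld
            have hx1 : (M l).2 ≤ (M (l + 1)).2 := by
              have hidx : d - 1 - l = (d - 1 - (l + 1)) + 1 := by omega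
              show (W (d - 1 - l)).2 ≤ (W (d - 1 - (l + 1))).2
              rw [hidx, hWsucc]
              show min (W (d - 1 - (l + 1))).2 (eF (d - 2 - (d - 1 - (l + 1)))).2 ≤ _
              omega
            apply z2lt_of _ _ ?_ hx1 (Or.inl ?_)
            · rw [h2, h2']
              exact le_of_lt (hstep2 (i₀ + l) (i₀ + (l + 1)) (by omega) (by omega) (by omega))
            · rw [h2, h2']
              exact hstep2 (i₀ + l) (i₀ + (l + 1)) (by omega) (by omega) (by omega)
          refine ⟨fun j => if j < i₀ then f j else if j ≤ j₀ - 1 then M (j - i₀) else f (j + 1),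
            ⟨?_, ?_⟩, ?_, ?_⟩
          · intro j hj
            dsimp only
            split_ifs with h1 h2
            · exact ⟨hf.1 j (by omega), hnotlt j h1 (by omega)⟩
            · obtain ⟨hm1, _, _⟩ := hM (j - i₀) (by omega)
              exact ⟨hm1, hMT (j - i₀) (by omega)⟩
            · push_neg at h1 h2
              exact ⟨hf.1 (j + 1) (by omega), hnotgt (j + 1) (by omega) (by omega)⟩
          · intro j hj
            dsimp only
            by_cases h1 : j < i₀
            · by_cases h2 : j + 1 < i₀
              · rw [if_pos h1, if_pos h2]
                exact hf.2.1 j (by omega)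
              · rw [if_pos h1, if_neg h2, if_pos (by omega : j + 1 ≤ j₀ - 1)]
                have hj1 : j + 1 = i₀ := by omega
                have hidx : j + 1 - i₀ = 0 := by omega
                rw [hidx]
                obtain ⟨_, hm2, hm3⟩ := hM 0 (by omega)
                have hstep0 : f j < f i₀ := by
                  rw [← hj1]
                  exact hf.2.1 j (by omega)
                apply z2lt_of _ _ ?_ ?_ (Or.inr ?_)
                · have := (z2le.1 (le_of_lt hstep0)).1
                  rw [hm2]
                  simp only [Nat.add_zero]
                  omega
                · have := (z2le.1 (le_of_lt hstep0)).2
                  omega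
                · have := (z2le.1 (le_of_lt hstep0)).2
                  omega
            · push_neg at h1
              by_cases h2 : j ≤ j₀ - 1
              · by_cases h3 : j + 1 ≤ j₀ - 1
                · rw [if_neg (by omega : ¬ j < i₀), if_pos h2,
                    if_neg (by omega : ¬ j + 1 < i₀), if_pos h3]
                  have hidx : j + 1 - i₀ = (j - i₀) + 1 := by omega
                  rw [hidx]
                  exact hMmono (j - i₀) (by omega)
                · rw [if_neg (by omega : ¬ j < i₀), if_pos h2,
                    if_neg (by omega : ¬ j + 1 < i₀), if_neg h3]
                  have hj1 : j + 1 = j₀ := by omega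
                  have hidx : j - i₀ = d - 1 := by omega
                  rw [hidx, hj1]
                  obtain ⟨_, hm2, hm3⟩ := hM (d - 1) (by omega)
                  have hx1 : (M (d - 1)).2 ≤ v.2 := by
                    show (W (d - 1 - (d - 1))).2 ≤ v.2
                    have : d - 1 - (d - 1) = 0 := by omega
                    rw [this, hW0]
                    show min v.2 (eF (d - 1)).2 ≤ v.2
                    omega
                  apply z2lt_of _ _ ?_ hx1 (Or.inl ?_)
                  · rw [hm2]
                    exact le_of_lt (lt_of_lt_of_le
                      (hstep2 (i₀ + (d - 1)) j₀ (by omega) (by omega) (by omega)) hv1)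
                  · rw [hm2]
                    exact lt_of_lt_of_le
                      (hstep2 (i₀ + (d - 1)) j₀ (by omega) (by omega) (by omega)) hv1
              · rw [if_neg (by omega : ¬ j < i₀), if_neg h2,
                  if_neg (by omega : ¬ j + 1 < i₀), if_neg (by omega : ¬ j + 1 ≤ j₀ - 1)]
                exact hf.2.1 (j + 1) (by omega)
          · dsimp only
            rw [if_pos (by omega : 0 < i₀)]
            exact hf0
          · dsimp only
            rw [if_neg (by omega : ¬ m - 1 < i₀), if_neg (by omega : ¬ m - 1 ≤ j₀ - 1)]
            have he : m - 1 + 1 = m := by omega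
            rw [he]
            exact hfm
    obtain ⟨G, hGc, hG0, hGm⟩ := hkey
    obtain ⟨m', hm', G', hG', h0', hn'⟩ := satChain_exists hGc
    have hge : m' ≤ chainDist (S \ T) 0 A :=
      chainDist_ge ⟨G', hG', by rw [h0', hG0], by rw [hn', hGm]⟩
    omega
  · -- no block : f avoids T entirely
    rw [Set.not_nonempty_iff_eq_empty] at hPne
    have havoid : ∀ i ≤ m, f i ∉ T := by
      intro i hi hiT
      have : i ∈ P := ⟨hi, hiT⟩
      rw [hPne] at this
      exact Set.notMem_empty i this
    have hchain : IsChain2 (S \ T) m f :=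
      ⟨fun j hj => ⟨hf.1 j hj, havoid j hj⟩, hf.2.1⟩
    obtain ⟨m', hm', g', hg', h0', hn'⟩ := satChain_exists hchain
    have hge : m' ≤ chainDist (S \ T) 0 A :=
      chainDist_ge ⟨g', hg', by rw [h0', hf0], by rw [hn', hfm]⟩
    omega

end Track6

section Final
variable {S : Set Z2} {n : ℕ} {α : ℕ → Om}

lemma big_avoid (hS : IsGood S) (hl : IsLocal S) (hTD : TrackData S n α) :
    ∃ B : ℤ, 0 ≤ B ∧ ∀ y : Z2, B < y.1 → B < y.2 →
      (y ∉ trackSet S n α ∧ ∀ t ∈ trackSet S n α, ¬ y ≤ t) := by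
  have hn := hTD.1
  set Bn : ℕ := (Finset.range n).sup
    (fun i => ((α i).1.untopD 0 ⊔ (α i).2.untopD 0).toNat) with hBn
  refine ⟨(Bn : ℤ), by positivity, ?_⟩
  have hBi : ∀ i, i < n → ∀ w : ℤ,
      ((α i).1 = (w : WithTop ℤ) → w ≤ (Bn : ℤ)) ∧
      ((α i).2 = (w : WithTop ℤ) → w ≤ (Bn : ℤ)) := by
    intro i hi w
    have hle := Finset.le_sup (f := fun i => ((α i).1.untopD 0 ⊔ (α i).2.untopD 0).toNat)
      (Finset.mem_range.2 hi)
    have hle' : ((((α i).1.untopD 0 ⊔ (α i).2.untopD 0).toNat : ℕ) : ℤ) ≤ (Bn : ℤ) := by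
      exact_mod_cast hle
    have h3 : ((α i).1.untopD 0 ⊔ (α i).2.untopD 0) ≤
        ((((α i).1.untopD 0 ⊔ (α i).2.untopD 0).toNat : ℕ) : ℤ) := Int.self_le_toNat _
    constructor
    · intro h
      have h1 : (α i).1.untopD 0 = w := by rw [h]; rfl
      have h2 : w ≤ ((α i).1.untopD 0 ⊔ (α i).2.untopD 0) := by rw [h1]; exact le_sup_left
      omega
    · intro h
      have h1 : (α i).2.untopD 0 = w := by rw [h]; rfl
      have h2 : w ≤ ((α i).1.untopD 0 ⊔ (α i).2.untopD 0) := by rw [h1]; exact le_sup_right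
      omega
  intro y hy1 hy2
  constructor
  · intro hyT
    obtain ⟨i, hi, hle, hsh⟩ := cf hTD hyT
    rcases hsh with h | h
    · have := (hBi i hi y.1).1 h.symm
      omega
    · have := (hBi i hi y.2).2 h.symm
      omega
  · intro t htT hylet
    obtain ⟨i, hi, hle, hsh⟩ := cf hTD htT
    rcases hsh with h | h
    · have hb := (hBi i hi t.1).1 h.symm
      have := (z2le.1 hylet).1
      omega
    · have hb := (hBi i hi t.2).2 h.symm
      have := (z2le.1 hylet).2
      omega

end Final

end TP

/-- If `T` is a track of a local good semigroup `S ⊆ ℕ²`,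
then the good semigroup `S' = S∖T` satisfies `g(S') = g(S) + 1`. -/

theorem genus_remove_track (S T : Set Z2) (hS : IsGood S) (hl : IsLocal S)
    (hT : IsTrack S T) :
    genus (S \ T) = genus S + 1 := by
  obtain ⟨n, α, hTD, rfl⟩ := hT
  obtain ⟨δ, hδ⟩ := hS.2.2.2.2.1
  obtain ⟨B, hB0, hBig⟩ := TP.big_avoid hS hl hTD
  have hδ'S : ∀ y : Z2, ((max δ.1 (B + 1), max δ.2 (B + 1)) : Z2) ≤ y →
      y ∈ S \ trackSet S n α := by
    intro y hy
    obtain ⟨h1, h2⟩ := TP.z2le.1 hy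
    have h1' : max δ.1 (B + 1) ≤ y.1 := h1
    have h2' : max δ.2 (B + 1) ≤ y.2 := h2
    exact ⟨hδ y (TP.z2le.2 ⟨by omega, by omega⟩),
      (hBig y (by omega) (by omega)).1⟩
  have hS'orth : S \ trackSet S n α ⊆ orth := fun x hx => hS.1 hx.1
  have h0S' : (0 : Z2) ∈ S \ trackSet S n α := ⟨hS.2.1, TP.zero_notin_T hS hl hTD⟩
  obtain ⟨β1, hβ1δ, hβ1mem, hgen1⟩ := TP.genus_char hS.1 hS.2.1 δ hδ
  obtain ⟨β2, hβ2δ, hβ2mem, hgen2⟩ := TP.genus_char hS'orth h0S' _ hδ'S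
  set A : Z2 := (max (max β1.1 β2.1) (max (max δ.1 (B + 1)) (B + 1)),
    max (max β1.2 β2.2) (max (max δ.2 (B + 1)) (B + 1))) with hA
  have hAδ' : ((max δ.1 (B + 1), max δ.2 (B + 1)) : Z2) ≤ A := by
    apply TP.z2le.2
    constructor
    · show max δ.1 (B + 1) ≤ max (max β1.1 β2.1) (max (max δ.1 (B + 1)) (B + 1))
      omega
    · show max δ.2 (B + 1) ≤ max (max β1.2 β2.2) (max (max δ.2 (B + 1)) (B + 1))
      omega
  have hAS' : A ∈ S \ trackSet S n α := hδ'S A hAδ'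
  have hAS : A ∈ S := hAS'.1
  have hAT : A ∉ trackSet S n α := hAS'.2
  have hA1 : B < A.1 := by
    show B < max (max β1.1 β2.1) (max (max δ.1 (B + 1)) (B + 1))
    omega
  have hA2 : B < A.2 := by
    show B < max (max β1.2 β2.2) (max (max δ.2 (B + 1)) (B + 1))
    omega
  have hAbig : ∀ t ∈ trackSet S n α, ¬ A ≤ t := (hBig A hA1 hA2).2
  have hβ1A : β1 ≤ A := by
    apply TP.z2le.2
    constructor
    · show β1.1 ≤ max (max β1.1 β2.1) (max (max δ.1 (B + 1)) (B + 1))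
      omega
    · show β1.2 ≤ max (max β1.2 β2.2) (max (max δ.2 (B + 1)) (B + 1))
      omega
  have hβ2A : β2 ≤ A := by
    apply TP.z2le.2
    constructor
    · show β2.1 ≤ max (max β1.1 β2.1) (max (max δ.1 (B + 1)) (B + 1))
      omega
    · show β2.2 ≤ max (max β1.2 β2.2) (max (max δ.2 (B + 1)) (B + 1))
      omega
  have hg1 : genus S = TP.sg A - (chainDist S 0 A : ℤ) := hgen1 A hAS hβ1A
  have hg2 : genus (S \ trackSet S n α) =
      TP.sg A - (chainDist (S \ trackSet S n α) 0 A : ℤ) := hgen2 A hAS' hβ2A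
  have hup := TP.cd_step_upper hS hl hTD hAS hAT
  have hlo := TP.cd_step_lower hS hl hTD hAS hAT hAbig
  rw [hg1, hg2]
  omega
end

section
/- Let S and S' be local good semigroups of ℕ² such that S is a special parent of S'. Then c(S) < c(S'), i.e. c(S) ≤ c(S') componentwise and c(S) ≠ c(S'). -/
lemma orth_bdd_fst {S : Set Z2} (horth : S ⊆ orth) :
    BddBelow ((fun δ : Z2 => δ.1) '' {δ : Z2 | ∀ y : Z2, δ ≤ y → y ∈ S}) := by
  refine ⟨0, ?_⟩
  rintro x ⟨δ, hδ, rfl⟩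
  exact (horth (hδ δ le_rfl)).1

lemma orth_bdd_snd {S : Set Z2} (horth : S ⊆ orth) :
    BddBelow ((fun δ : Z2 => δ.2) '' {δ : Z2 | ∀ y : Z2, δ ≤ y → y ∈ S}) := by
  refine ⟨0, ?_⟩
  rintro x ⟨δ, hδ, rfl⟩
  exact (horth (hδ δ le_rfl)).2

lemma condE_conducts {S : Set Z2} (hmin : MinClosed S) (horth : S ⊆ orth)
    (hne : ∃ δ : Z2, ∀ y : Z2, δ ≤ y → y ∈ S) :
    ∀ y : Z2, condE S ≤ y → y ∈ S := by
  obtain ⟨δ0, hδ0⟩ := hne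
  have hAne : ({δ : Z2 | ∀ y : Z2, δ ≤ y → y ∈ S}).Nonempty := ⟨δ0, hδ0⟩
  obtain ⟨δ1, hδ1A, hδ1⟩ :=
    Int.csInf_mem (hAne.image (fun δ : Z2 => δ.1)) (orth_bdd_fst horth)
  obtain ⟨δ2, hδ2A, hδ2⟩ :=
    Int.csInf_mem (hAne.image (fun δ : Z2 => δ.2)) (orth_bdd_snd horth)
  intro y hy
  have hy1 : δ1.1 ≤ y.1 := by simp only at hδ1; rw [hδ1]; exact hy.1
  have hy2 : δ2.2 ≤ y.2 := by simp only at hδ2; rw [hδ2]; exact hy.2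
  have hp : ((y.1, max y.2 δ1.2) : Z2) ∈ S := hδ1A _ ⟨hy1, le_max_right _ _⟩
  have hq : ((max y.1 δ2.1, y.2) : Z2) ∈ S := hδ2A _ ⟨le_max_right _ _, hy2⟩
  have key := hmin _ hp _ hq
  have h1 : y.1 ⊓ max y.1 δ2.1 = y.1 := inf_eq_left.mpr (le_max_left _ _)
  have h2 : (max y.2 δ1.2) ⊓ y.2 = y.2 := inf_eq_right.mpr (le_max_left _ _)
  have : (((y.1, max y.2 δ1.2) : Z2) ⊓ (max y.1 δ2.1, y.2)) = y := by
    rw [Prod.inf_def]; simp [h1, h2]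
  rwa [this] at key

/-- If `S` is a special parent of `S'`, then
`c(S) < c(S')`, i.e. `c(S) ≤ c(S')` componentwise and `c(S) ≠ c(S')`. -/
theorem cond_lt_of_specialParent (S S' : Set Z2) (hS' : IsGood S')
    (hl' : IsLocal S') (hpar : SpecialParent S S') :
    condE S ≤ condE S' ∧ condE S ≠ condE S' := by
  obtain ⟨hGS, hlS, T, hBT, rfl⟩ := hpar
  have hsub : {δ : Z2 | ∀ y : Z2, δ ≤ y → y ∈ S \ T} ⊆
      {δ : Z2 | ∀ y : Z2, δ ≤ y → y ∈ S} := fun δ hδ y hy => (hδ y hy).1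
  have hBne : ({δ : Z2 | ∀ y : Z2, δ ≤ y → y ∈ S \ T}).Nonempty := hS'.2.2.2.2.1
  have hle : condE S ≤ condE (S \ T) := by
    constructor
    · exact csInf_le_csInf (orth_bdd_fst hGS.1)
        (hBne.image (fun δ : Z2 => δ.1)) (Set.image_mono hsub)
    · exact csInf_le_csInf (orth_bdd_snd hGS.1)
        (hBne.image (fun δ : Z2 => δ.2)) (Set.image_mono hsub)
  refine ⟨hle, fun heq => ?_⟩
  obtain ⟨a, haT, haS, hca⟩ := hBT.2
  have : a ∈ S \ T :=
    condE_conducts hS'.2.2.2.1 hS'.1 hS'.2.2.2.2.1 a (heq ▸ hca)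
  exact this.2 haT
end
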